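/- arXiv:1903.04242 — 5 statements merged into one kernel-verified Lean document; each statement's English description precedes it below -/
import Mathlib

section
/- For every k₀ > 0 there exists C > 0 such that for all ζ ∈ ℂ with Im ζ ≥ 0 and |ζ| ≥ k₀, and all x ≥ 0, one has |p(x,ζ)| ≤ C e^{−Im(ζ)x} |ζ|^{−1} ∫ₓ^∞ |v(y)| dy. -/
open MeasureTheory Set

lemma abs_sin_le_exp_abs_im (z : ℂ) : ‖Complex.sin z‖ ≤ Real.exp |z.im| := by
  have hdef : Complex.sin z = (Complex.exp (-z * Complex.I) - Complex.exp (z * Complex.I))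
      * Complex.I / 2 := rfl
  have h1 : ‖Complex.exp (-z * Complex.I)‖ = Real.exp z.im := by
    rw [Complex.norm_exp]; congr 1
    simp [Complex.mul_re]
  have h2 : ‖Complex.exp (z * Complex.I)‖ = Real.exp (-z.im) := by
    rw [Complex.norm_exp]; congr 1
    simp [Complex.mul_re]
  have habs : ‖Complex.sin z‖
      = ‖Complex.exp (-z * Complex.I) - Complex.exp (z * Complex.I)‖ / 2 := by
    rw [hdef, norm_div, norm_mul, Complex.norm_I, mul_one, Complex.norm_two]
  have hsum : ‖Complex.exp (-z * Complex.I) - Complex.exp (z * Complex.I)‖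
      ≤ Real.exp z.im + Real.exp (-z.im) := by
    calc ‖Complex.exp (-z * Complex.I) - Complex.exp (z * Complex.I)‖
        ≤ ‖Complex.exp (-z * Complex.I)‖
          + ‖Complex.exp (z * Complex.I)‖ := norm_sub_le _ _
      _ = Real.exp z.im + Real.exp (-z.im) := by rw [h1, h2]
  have e1 := Real.exp_le_exp.2 (le_abs_self z.im)
  have e2 := Real.exp_le_exp.2 (neg_le_abs z.im)
  rw [habs]
  linarith

lemma gronwall_tail (k₀ : ℝ) (hk₀ : 0 < k₀) (w f : ℝ → ℝ)
    (hw : Integrable w) (hw0 : ∀ y, 0 ≤ w y)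
    (hwf : Integrable (fun y => w y * f y))
    (M : ℝ) (hf0 : ∀ y, 0 ≤ f y) (hfM : ∀ y, 0 ≤ y → f y ≤ M)
    (hmain : ∀ x : ℝ, 0 ≤ x → f x ≤ 1 + k₀⁻¹ * ∫ y in Ioi x, w y * f y) :
    ∀ n : ℕ, ∀ x : ℝ, 0 ≤ x → (∫ y in Ioi x, w y) ≤ n * (k₀ / 2) →
      (∫ y in Ioi x, w y * f y) ≤ ((2 : ℝ) ^ n - 1) * k₀ := by
  have hwf0 : ∀ y, 0 ≤ w y * f y := fun y => mul_nonneg (hw0 y) (hf0 y)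
  have hsplit : ∀ g : ℝ → ℝ, Integrable g → ∀ a b : ℝ, a ≤ b →
      (∫ y in Ioi a, g y) = (∫ y in Ioc a b, g y) + ∫ y in Ioi b, g y := by
    intro g hg a b hab
    rw [← setIntegral_union Ioc_disjoint_Ioi_same measurableSet_Ioi hg.integrableOn
      hg.integrableOn, Ioc_union_Ioi_eq_Ioi hab]
  have hJ0 : ∀ a : ℝ, 0 ≤ ∫ y in Ioi a, w y * f y :=
    fun a => setIntegral_nonneg measurableSet_Ioi fun y _ => hwf0 y
  have hh0 : ∀ a : ℝ, 0 ≤ ∫ y in Ioi a, w y :=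
    fun a => setIntegral_nonneg measurableSet_Ioi fun y _ => hw0 y
  have hJanti : ∀ a b : ℝ, a ≤ b →
      (∫ y in Ioi b, w y * f y) ≤ ∫ y in Ioi a, w y * f y := by
    intro a b hab
    rw [hsplit _ hwf a b hab]
    have : 0 ≤ ∫ y in Ioc a b, w y * f y :=
      setIntegral_nonneg measurableSet_Ioc fun y _ => hwf0 y
    linarith
  have hhanti : ∀ a b : ℝ, a ≤ b → (∫ y in Ioi b, w y) ≤ ∫ y in Ioi a, w y := by
    intro a b hab
    rw [hsplit _ hw a b hab]
    have : 0 ≤ ∫ y in Ioc a b, w y :=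
      setIntegral_nonneg measurableSet_Ioc fun y _ => hw0 y
    linarith
  have hcont : Continuous fun b : ℝ => ∫ y in Ioi b, w y := by
    have h1 : Continuous fun b : ℝ => ∫ t in (0:ℝ)..b, w t :=
      intervalIntegral.continuous_primitive (fun a b => hw.intervalIntegrable) 0
    have h2 : (fun b : ℝ => ∫ y in Ioi b, w y)
        = fun b : ℝ => (∫ y in Ioi (0:ℝ), w y) - ∫ t in (0:ℝ)..b, w t := by
      funext b
      rcases le_total (0:ℝ) b with hb | hb
      · rw [intervalIntegral.integral_of_le hb, hsplit w hw 0 b hb]; ring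
      · rw [intervalIntegral.integral_of_ge hb, hsplit w hw b 0 hb]; ring
    rw [h2]
    exact continuous_const.sub h1
  have htail : ∀ ε : ℝ, 0 < ε → ∀ x0 : ℝ, ∃ y : ℝ, x0 ≤ y ∧ (∫ t in Ioi y, w t) < ε := by
    intro ε hε x0
    have hU : ⋃ n : ℕ, Iic (n : ℝ) = univ := by
      ext t
      simp only [mem_iUnion, mem_Iic, mem_univ, iff_true]
      exact exists_nat_ge t
    have hmono : Monotone fun n : ℕ => Iic (n : ℝ) := by
      intro i j hij
      exact Iic_subset_Iic.2 (by exact_mod_cast hij)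
    have htnd := tendsto_setIntegral_of_monotone (fun n : ℕ => measurableSet_Iic) hmono
      (by rw [hU]; exact hw.integrableOn)
    rw [hU] at htnd
    have hdecomp : ∀ n : ℕ, (∫ t in Ioi (n:ℝ), w t)
        = (∫ t, w t) - ∫ t in Iic (n:ℝ), w t := by
      intro n
      have : (∫ t, w t) = (∫ t in Iic (n:ℝ), w t) + ∫ t in Ioi (n:ℝ), w t := by
        rw [← setIntegral_union (Iic_disjoint_Ioi le_rfl) measurableSet_Ioi hw.integrableOn
          hw.integrableOn, Iic_union_Ioi, setIntegral_univ]
      linarith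
    rw [setIntegral_univ] at htnd
    have hzero : Filter.Tendsto (fun n : ℕ => ∫ t in Ioi (n:ℝ), w t) Filter.atTop (nhds 0) := by
      have h0' : Filter.Tendsto (fun n : ℕ => (∫ t, w t) - ∫ t in Iic (n:ℝ), w t)
          Filter.atTop (nhds ((∫ t, w t) - ∫ t, w t)) := tendsto_const_nhds.sub htnd
      rw [sub_self] at h0'
      exact h0'.congr fun n => (hdecomp n).symm
    have := (hzero.eventually_lt_const hε).exists
    obtain ⟨N, hN⟩ := this
    refine ⟨max x0 N, le_max_left _ _, ?_⟩
    exact lt_of_le_of_lt (hhanti _ _ (le_max_right x0 N)) hN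
  intro n
  induction n with
  | zero =>
    intro x hx hhx
    have hM0 : 0 ≤ M := le_trans (hf0 0) (hfM 0 le_rfl)
    have hx0 : (∫ y in Ioi x, w y) = 0 := le_antisymm (by simpa using hhx) (hh0 x)
    have h1 : (∫ y in Ioi x, w y * f y) ≤ ∫ y in Ioi x, w y * M := by
      apply setIntegral_mono_on hwf.integrableOn ((hw.mul_const M).integrableOn)
        measurableSet_Ioi
      intro y hy
      exact mul_le_mul_of_nonneg_left (hfM y (hx.trans (le_of_lt hy))) (hw0 y)
    rw [integral_mul_const, hx0] at h1
    simpa using h1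
  | succ n ih =>
    intro x hx hhx
    by_cases hcase : (∫ y in Ioi x, w y) ≤ k₀ / 2
    · -- direct bootstrap
      have hfy : ∀ y : ℝ, x ≤ y → f y ≤ 1 + k₀⁻¹ * ∫ t in Ioi x, w t * f t := by
        intro y hy
        refine (hmain y (hx.trans hy)).trans ?_
        have h := mul_le_mul_of_nonneg_left (hJanti x y hy) (inv_nonneg.2 hk₀.le)
        linarith
      have h1 : (∫ y in Ioi x, w y * f y)
          ≤ ∫ y in Ioi x, w y * (1 + k₀⁻¹ * ∫ t in Ioi x, w t * f t) := by
        apply setIntegral_mono_on hwf.integrableOn ((hw.mul_const _).integrableOn)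
          measurableSet_Ioi
        intro y hy
        exact mul_le_mul_of_nonneg_left (hfy y (le_of_lt hy)) (hw0 y)
      rw [integral_mul_const] at h1
      have h2 : (∫ y in Ioi x, w y) * (1 + k₀⁻¹ * ∫ t in Ioi x, w t * f t)
          ≤ (k₀/2) * (1 + k₀⁻¹ * ∫ t in Ioi x, w t * f t) := by
        apply mul_le_mul_of_nonneg_right hcase
        have := hJ0 x
        positivity
      have hkinv : k₀⁻¹ * k₀ = 1 := inv_mul_cancel₀ (ne_of_gt hk₀)
      have h3 : (k₀/2) * (1 + k₀⁻¹ * ∫ t in Ioi x, w t * f t)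
          = k₀/2 + (∫ t in Ioi x, w t * f t)/2 := by
        field_simp
      have hpow : (2:ℝ) ≤ 2 ^ (n+1) := by
        calc (2:ℝ) = 2^1 := (pow_one 2).symm
          _ ≤ 2^(n+1) := pow_le_pow_right₀ one_le_two (by omega)
      nlinarith [hJ0 x]
    · push_neg at hcase
      obtain ⟨y0, hy0x, hy0⟩ := htail ((∫ t in Ioi x, w t) - k₀/2) (by linarith) x
      have hIVT := intermediate_value_Icc' hy0x hcont.continuousOn
      have hmem : (∫ t in Ioi x, w t) - k₀/2
          ∈ Icc (∫ t in Ioi y0, w t) (∫ t in Ioi x, w t) := ⟨hy0.le, by linarith⟩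
      obtain ⟨x', hx'mem, hx'0eq⟩ := hIVT hmem
      have hx' : (∫ t in Ioi x', w t) = (∫ t in Ioi x, w t) - k₀/2 := hx'0eq
      have hxx' : x ≤ x' := hx'mem.1
      have hx'0 : (0:ℝ) ≤ x' := hx.trans hxx'
      have hhx' : (∫ t in Ioi x', w t) ≤ n * (k₀/2) := by
        rw [hx']
        push_cast at hhx ⊢
        linarith
      have hJx' := ih x' hx'0 hhx'
      have hJsplit : (∫ t in Ioi x, w t * f t)
          = (∫ t in Ioc x x', w t * f t) + ∫ t in Ioi x', w t * f t := hsplit _ hwf x x' hxx'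
      have hhsplit : (∫ t in Ioi x, w t)
          = (∫ t in Ioc x x', w t) + ∫ t in Ioi x', w t := hsplit _ hw x x' hxx'
      have hwIoc : (∫ t in Ioc x x', w t) = k₀/2 := by
        rw [hx'] at hhsplit
        linarith
      have hA0 : 0 ≤ ∫ t in Ioc x x', w t * f t :=
        setIntegral_nonneg measurableSet_Ioc fun y _ => hwf0 y
      have hfbd : ∀ y ∈ Ioc x x',
          f y ≤ 2^n + k₀⁻¹ * ∫ t in Ioc x x', w t * f t := by
        intro y hy
        have hy0' : (0:ℝ) ≤ y := le_of_lt (lt_of_le_of_lt hx hy.1)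
        refine (hmain y hy0').trans ?_
        have hJy : (∫ t in Ioi y, w t * f t)
            = (∫ t in Ioc y x', w t * f t) + ∫ t in Ioi x', w t * f t :=
          hsplit _ hwf y x' hy.2
        have hmono : (∫ t in Ioc y x', w t * f t) ≤ ∫ t in Ioc x x', w t * f t := by
          apply setIntegral_mono_set hwf.integrableOn
            (Filter.Eventually.of_forall fun t => hwf0 t)
            ((Ioc_subset_Ioc_left hy.1.le).eventuallyLE)
        have hub : (∫ t in Ioi y, w t * f t)
            ≤ (∫ t in Ioc x x', w t * f t) + ((2:ℝ)^n - 1) * k₀ := by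
          rw [hJy]; linarith
        have hk := mul_le_mul_of_nonneg_left hub (inv_nonneg.2 hk₀.le)
        have hid : k₀⁻¹ * (((2:ℝ)^n - 1) * k₀) = (2:ℝ)^n - 1 := by
          field_simp
        nlinarith
      have hAle : (∫ t in Ioc x x', w t * f t)
          ≤ ∫ t in Ioc x x', w t * (2^n + k₀⁻¹ * ∫ s in Ioc x x', w s * f s) := by
        apply setIntegral_mono_on hwf.integrableOn ((hw.mul_const _).integrableOn)
          measurableSet_Ioc
        intro y hy
        exact mul_le_mul_of_nonneg_left (hfbd y hy) (hw0 y)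
      rw [integral_mul_const, hwIoc] at hAle
      have hkinv : k₀⁻¹ * k₀ = 1 := inv_mul_cancel₀ (ne_of_gt hk₀)
      have hexp : (k₀/2) * ((2:ℝ)^n + k₀⁻¹ * ∫ s in Ioc x x', w s * f s)
          = k₀/2 * 2^n + (∫ s in Ioc x x', w s * f s)/2 := by
        field_simp
      have hAfin : (∫ t in Ioc x x', w t * f t) ≤ k₀ * 2^n := by linarith
      have hpow2 : ((2:ℝ)^(n+1) - 1) * k₀ = k₀ * 2^n + ((2:ℝ)^n - 1) * k₀ := by ring
      rw [hJsplit, hpow2]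
      linarith

/-- High-energy estimate for `p(x,ζ) = θ(x,ζ) − e^{iζx}`:
for every `k₀ > 0` there is `C > 0` with
`|p(x,ζ)| ≤ C e^{−Im(ζ)x} |ζ|⁻¹ ∫ₓ^∞ |v(y)| dy` for `|ζ| ≥ k₀`, `Im ζ ≥ 0`. -/
theorem jost_solution_high_energy_estimate
    (v : ℝ → ℝ) (hv_meas : Measurable v) (C₀ ρ : ℝ)
    (hC₀ : 0 < C₀) (hρ : 2 < ρ)
    (hv : ∀ x : ℝ, 0 ≤ x → |v x| ≤ C₀ * (1 + x) ^ (-ρ))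
    (θ : ℂ → ℝ → ℂ)
    (hθcont : ∀ ζ : ℂ, 0 ≤ ζ.im → ζ ≠ 0 → ContinuousOn (θ ζ) (Set.Ici 0))
    (hθbdd : ∀ ζ : ℂ, 0 ≤ ζ.im → ζ ≠ 0 →
      ∃ M : ℝ, ∀ x : ℝ, 0 ≤ x → Real.exp (ζ.im * x) * ‖θ ζ x‖ ≤ M)
    (hθeq : ∀ ζ : ℂ, 0 ≤ ζ.im → ζ ≠ 0 → ∀ x : ℝ, 0 ≤ x →
      θ ζ x = Complex.exp (Complex.I * ζ * x) +
        ζ⁻¹ * ∫ y in Set.Ioi x, Complex.sin (ζ * ((x : ℂ) - (y : ℂ))) * (v y : ℂ) * θ ζ y) :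
    ∀ k₀ : ℝ, 0 < k₀ → ∃ C : ℝ, 0 < C ∧
      ∀ ζ : ℂ, 0 ≤ ζ.im → k₀ ≤ ‖ζ‖ → ∀ x : ℝ, 0 ≤ x →
        ‖θ ζ x - Complex.exp (Complex.I * ζ * x)‖ ≤
          C * Real.exp (-(ζ.im * x)) * ‖ζ‖⁻¹ * ∫ y in Set.Ioi x, |v y| := by
  -- integrability of |v| on [0, ∞)
  have hrint : IntegrableOn (fun y : ℝ => y ^ (-ρ)) (Ioi (1:ℝ)) :=
    integrableOn_Ioi_rpow_of_lt (by linarith) one_pos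
  have htrans : IntegrableOn (fun y : ℝ => (1+y) ^ (-ρ)) (Ioi (0:ℝ)) := by
    have h1 : Integrable (indicator (Ioi (1:ℝ)) fun y : ℝ => y ^ (-ρ)) :=
      (integrable_indicator_iff measurableSet_Ioi).2 hrint
    have hmp : MeasurePreserving (fun y : ℝ => y + 1) volume volume :=
      measurePreserving_add_right volume 1
    have h2 : Integrable ((indicator (Ioi (1:ℝ)) fun y : ℝ => y ^ (-ρ)) ∘ (fun y : ℝ => y + 1)) :=
      (hmp.integrable_comp h1.aestronglyMeasurable).2 h1
    have h3 : ((indicator (Ioi (1:ℝ)) fun y : ℝ => y ^ (-ρ)) ∘ (fun y : ℝ => y + 1))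
        = indicator (Ioi (0:ℝ)) (fun y : ℝ => (1+y) ^ (-ρ)) := by
      funext y
      by_cases hy : y ∈ Ioi (0:ℝ)
      · have : y + 1 ∈ Ioi (1:ℝ) := by simpa using hy.out
        simp only [Function.comp_apply, indicator_of_mem this, indicator_of_mem hy]
        ring_nf
      · have : y + 1 ∉ Ioi (1:ℝ) := by simpa using hy
        simp only [Function.comp_apply, indicator_of_notMem this, indicator_of_notMem hy]
    rw [h3] at h2
    exact (integrable_indicator_iff measurableSet_Ioi).1 h2
  have hvint : IntegrableOn (fun y : ℝ => |v y|) (Ici (0:ℝ)) := by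
    rw [integrableOn_Ici_iff_integrableOn_Ioi]
    apply Integrable.mono' (htrans.const_mul C₀) hv_meas.abs.aestronglyMeasurable.restrict
    filter_upwards [ae_restrict_mem measurableSet_Ioi] with y hy
    rw [Real.norm_eq_abs, abs_abs]
    exact hv y hy.out.le
  set w : ℝ → ℝ := indicator (Ici (0:ℝ)) (fun y : ℝ => |v y|) with hwdef
  have hw_int : Integrable w := (integrable_indicator_iff measurableSet_Ici).2 hvint
  have hw0 : ∀ y, 0 ≤ w y := fun y => indicator_nonneg (fun t _ => abs_nonneg _) y
  have hweq : ∀ y : ℝ, 0 ≤ y → w y = |v y| := fun y hy => indicator_of_mem hy _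
  -- choose n
  intro k₀ hk₀
  obtain ⟨n, hn⟩ := exists_nat_ge ((∫ y in Ioi (0:ℝ), w y) / (k₀/2))
  have hW : (∫ y in Ioi (0:ℝ), w y) ≤ n * (k₀/2) := by
    rw [div_le_iff₀ (by positivity)] at hn
    linarith
  refine ⟨(2:ℝ)^n, by positivity, ?_⟩
  intro ζ him hk x₀ hx₀
  have hζabs : (0:ℝ) < ‖ζ‖ := lt_of_lt_of_le hk₀ hk
  have hζ : ζ ≠ 0 := by
    intro h
    rw [h] at hζabs
    simp at hζabs
  obtain ⟨M, hM⟩ := hθbdd ζ him hζ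
  set f : ℝ → ℝ := fun y => Real.exp (ζ.im * y) * ‖θ ζ y‖ with hfdef
  have hf0 : ∀ y, 0 ≤ f y := fun y => mul_nonneg (Real.exp_nonneg _) (norm_nonneg _)
  have hfM : ∀ y : ℝ, 0 ≤ y → f y ≤ M := hM
  have hfcont : ContinuousOn f (Ici (0:ℝ)) := by
    apply ContinuousOn.mul
    · exact (Real.continuous_exp.comp (continuous_const.mul continuous_id)).continuousOn
    · exact continuous_norm.comp_continuousOn (hθcont ζ him hζ)
  have hwf : Integrable (fun y => w y * f y) := by
    have heq : (fun y => w y * f y) = indicator (Ici (0:ℝ)) (fun y => |v y| * f y) := by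
      funext y
      by_cases hy : y ∈ Ici (0:ℝ)
      · rw [indicator_of_mem hy, hwdef, indicator_of_mem hy]
      · rw [indicator_of_notMem hy, hwdef, indicator_of_notMem hy, zero_mul]
    rw [heq, integrable_indicator_iff measurableSet_Ici]
    apply Integrable.mono' (hvint.mul_const M)
      (hv_meas.abs.aestronglyMeasurable.restrict.mul
        (hfcont.aestronglyMeasurable measurableSet_Ici))
    filter_upwards [ae_restrict_mem measurableSet_Ici] with y hy
    simp only [Pi.mul_apply, Real.norm_eq_abs]
    rw [abs_of_nonneg (mul_nonneg (abs_nonneg _) (hf0 y))]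
    exact mul_le_mul_of_nonneg_left (hfM y hy.out) (abs_nonneg _)
  -- pointwise bound on the integrand
  have hpt : ∀ x : ℝ, 0 ≤ x → ∀ y ∈ Ioi x,
      ‖Complex.sin (ζ * ((x : ℂ) - (y : ℂ))) * ((v y : ℝ) : ℂ) * θ ζ y‖
        ≤ Real.exp (-(ζ.im * x)) * (w y * f y) := by
    intro x hx y hy
    have hy0 : (0:ℝ) ≤ y := hx.trans (le_of_lt hy)
    have him' : (ζ * ((x : ℂ) - (y : ℂ))).im = ζ.im * (x - y) := by
      simp [Complex.mul_im]
    have hsin : ‖Complex.sin (ζ * ((x : ℂ) - (y : ℂ)))‖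
        ≤ Real.exp (ζ.im * (y - x)) := by
      refine (abs_sin_le_exp_abs_im _).trans_eq ?_
      rw [him', abs_of_nonpos (by nlinarith [le_of_lt hy.out])]
      ring_nf
    have hθy : ‖θ ζ y‖ = Real.exp (-(ζ.im * y)) * f y := by
      rw [hfdef]
      simp only []
      rw [← mul_assoc, ← Real.exp_add]
      simp
    rw [norm_mul, norm_mul, Complex.norm_real, Real.norm_eq_abs]
    calc ‖Complex.sin (ζ * ((x:ℂ) - (y:ℂ)))‖ * |v y| * ‖θ ζ y‖
        ≤ Real.exp (ζ.im * (y - x)) * |v y| * (Real.exp (-(ζ.im * y)) * f y) := by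
          rw [hθy]
          exact mul_le_mul_of_nonneg_right
            (mul_le_mul_of_nonneg_right hsin (abs_nonneg _))
            (mul_nonneg (Real.exp_nonneg _) (hf0 y))
      _ = Real.exp (-(ζ.im * x)) * (w y * f y) := by
          have hexp : Real.exp (ζ.im * (y - x)) * Real.exp (-(ζ.im * y))
              = Real.exp (-(ζ.im * x)) := by
            rw [← Real.exp_add]; congr 1; ring
          rw [hweq y hy0, ← hexp]; ring
  -- the basic estimate
  have hbound : ∀ x : ℝ, 0 ≤ x →
      ‖θ ζ x - Complex.exp (Complex.I * ζ * x)‖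
        ≤ (‖ζ‖)⁻¹ * (Real.exp (-(ζ.im * x)) * ∫ y in Ioi x, w y * f y) := by
    intro x hx
    have heq : θ ζ x - Complex.exp (Complex.I * ζ * x)
        = ζ⁻¹ * ∫ y in Ioi x, Complex.sin (ζ * ((x:ℂ) - (y:ℂ))) * ((v y : ℝ) : ℂ) * θ ζ y := by
      rw [hθeq ζ him hζ x hx]; ring
    rw [heq, norm_mul, norm_inv]
    apply mul_le_mul_of_nonneg_left ?_ (inv_nonneg.2 (norm_nonneg _))
    calc ‖∫ y in Ioi x, Complex.sin (ζ * ((x:ℂ) - (y:ℂ))) * ((v y : ℝ) : ℂ) * θ ζ y‖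
        ≤ ∫ y in Ioi x, ‖Complex.sin (ζ * ((x:ℂ) - (y:ℂ))) * ((v y : ℝ) : ℂ) * θ ζ y‖ := by
          exact (norm_integral_le_integral_norm _).trans_eq (by simp)
      _ ≤ ∫ y in Ioi x, Real.exp (-(ζ.im * x)) * (w y * f y) := by
          apply integral_mono_of_nonneg
            (Filter.Eventually.of_forall fun y => norm_nonneg _)
            ((hwf.const_mul _).integrableOn)
          filter_upwards [ae_restrict_mem measurableSet_Ioi] with y hy
          exact hpt x hx y hy
      _ = Real.exp (-(ζ.im * x)) * ∫ y in Ioi x, w y * f y := integral_const_mul _ _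
  -- Gronwall hypothesis
  have hmain : ∀ x : ℝ, 0 ≤ x → f x ≤ 1 + k₀⁻¹ * ∫ y in Ioi x, w y * f y := by
    intro x hx
    have hJ0 : 0 ≤ ∫ y in Ioi x, w y * f y :=
      setIntegral_nonneg measurableSet_Ioi fun y _ =>
        mul_nonneg (hw0 y) (hf0 y)
    have hexpre : (Complex.I * ζ * (x:ℂ)).re = -(ζ.im * x) := by
      simp [Complex.mul_re]
    have habs_exp : ‖Complex.exp (Complex.I * ζ * (x:ℂ))‖
        = Real.exp (-(ζ.im * x)) := by rw [Complex.norm_exp, hexpre]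
    have htri : ‖θ ζ x‖
        ≤ Real.exp (-(ζ.im * x))
          + (‖ζ‖)⁻¹ * (Real.exp (-(ζ.im * x)) * ∫ y in Ioi x, w y * f y) := by
      calc ‖θ ζ x‖
          ≤ ‖Complex.exp (Complex.I * ζ * (x:ℂ))‖
            + ‖θ ζ x - Complex.exp (Complex.I * ζ * (x:ℂ))‖ := by
            have := norm_add_le (Complex.exp (Complex.I * ζ * (x:ℂ)))
              (θ ζ x - Complex.exp (Complex.I * ζ * (x:ℂ)))
            simpa using this
        _ ≤ Real.exp (-(ζ.im * x))
            + (‖ζ‖)⁻¹ * (Real.exp (-(ζ.im * x)) * ∫ y in Ioi x, w y * f y) := by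
            rw [habs_exp]
            exact add_le_add_right (hbound x hx) _
    have hfx : f x ≤ Real.exp (ζ.im * x) * (Real.exp (-(ζ.im * x))
        + (‖ζ‖)⁻¹ * (Real.exp (-(ζ.im * x)) * ∫ y in Ioi x, w y * f y)) := by
      rw [hfdef]
      exact mul_le_mul_of_nonneg_left htri (Real.exp_nonneg _)
    have hexpcancel : Real.exp (ζ.im * x) * Real.exp (-(ζ.im * x)) = 1 := by
      rw [← Real.exp_add]; simp
    have hfx2 : f x ≤ 1 + (‖ζ‖)⁻¹ * ∫ y in Ioi x, w y * f y := by
      calc f x ≤ Real.exp (ζ.im * x) * (Real.exp (-(ζ.im * x))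
          + (‖ζ‖)⁻¹ * (Real.exp (-(ζ.im * x)) * ∫ y in Ioi x, w y * f y)) := hfx
        _ = 1 + (‖ζ‖)⁻¹ * ∫ y in Ioi x, w y * f y := by
            rw [mul_add]
            rw [hexpcancel]
            congr 1
            rw [show Real.exp (ζ.im * x) * ((‖ζ‖)⁻¹
              * (Real.exp (-(ζ.im * x)) * ∫ y in Ioi x, w y * f y))
              = (Real.exp (ζ.im * x) * Real.exp (-(ζ.im * x))) * ((‖ζ‖)⁻¹
                * ∫ y in Ioi x, w y * f y) by ring, hexpcancel, one_mul]
    have hkinv : (‖ζ‖)⁻¹ ≤ k₀⁻¹ := by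
      apply inv_anti₀ hk₀ hk
    have : (‖ζ‖)⁻¹ * (∫ y in Ioi x, w y * f y)
        ≤ k₀⁻¹ * ∫ y in Ioi x, w y * f y := mul_le_mul_of_nonneg_right hkinv hJ0
    linarith
  -- apply Gronwall
  have hgron := gronwall_tail k₀ hk₀ w f hw_int hw0 hwf M hf0 hfM hmain n
  have hhanti : ∀ x : ℝ, 0 ≤ x → (∫ y in Ioi x, w y) ≤ ∫ y in Ioi (0:ℝ), w y := by
    intro x hx
    apply setIntegral_mono_set hw_int.integrableOn
      (Filter.Eventually.of_forall fun y => hw0 y)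
      (HasSubset.Subset.eventuallyLE (Ioi_subset_Ioi hx))
  have hfbd : ∀ y : ℝ, 0 ≤ y → f y ≤ (2:ℝ)^n := by
    intro y hy
    have hJ := hgron y hy ((hhanti y hy).trans hW)
    have := hmain y hy
    have hkin : k₀⁻¹ * (((2:ℝ)^n - 1) * k₀) = (2:ℝ)^n - 1 := by field_simp
    have hJ0 : 0 ≤ ∫ t in Ioi y, w t * f t :=
      setIntegral_nonneg measurableSet_Ioi fun t _ => mul_nonneg (hw0 t) (hf0 t)
    nlinarith [mul_le_mul_of_nonneg_left hJ (inv_nonneg.2 hk₀.le)]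
  -- final estimate
  have hJfin : (∫ y in Ioi x₀, w y * f y) ≤ (2:ℝ)^n * ∫ y in Ioi x₀, |v y| := by
    have h1 : (∫ y in Ioi x₀, w y * f y) ≤ ∫ y in Ioi x₀, (2:ℝ)^n * w y := by
      apply setIntegral_mono_on hwf.integrableOn ((hw_int.const_mul _).integrableOn)
        measurableSet_Ioi
      intro y hy
      have hy0 : (0:ℝ) ≤ y := hx₀.trans (le_of_lt hy)
      calc w y * f y ≤ w y * (2:ℝ)^n := mul_le_mul_of_nonneg_left (hfbd y hy0) (hw0 y)
        _ = (2:ℝ)^n * w y := mul_comm _ _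
    rw [integral_const_mul] at h1
    have h2 : (∫ y in Ioi x₀, w y) = ∫ y in Ioi x₀, |v y| :=
      setIntegral_congr_fun measurableSet_Ioi fun y hy => hweq y (hx₀.trans (le_of_lt hy))
    rw [h2] at h1
    exact h1
  have hvnneg : 0 ≤ ∫ y in Ioi x₀, |v y| :=
    setIntegral_nonneg measurableSet_Ioi fun y _ => abs_nonneg _
  calc ‖θ ζ x₀ - Complex.exp (Complex.I * ζ * x₀)‖
      ≤ (‖ζ‖)⁻¹ * (Real.exp (-(ζ.im * x₀)) * ∫ y in Ioi x₀, w y * f y) :=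
        hbound x₀ hx₀
    _ ≤ (‖ζ‖)⁻¹ * (Real.exp (-(ζ.im * x₀)) * ((2:ℝ)^n * ∫ y in Ioi x₀, |v y|)) := by
        apply mul_le_mul_of_nonneg_left ?_ (inv_nonneg.2 (norm_nonneg _))
        exact mul_le_mul_of_nonneg_left hJfin (Real.exp_nonneg _)
    _ = (2:ℝ)^n * Real.exp (-(ζ.im * x₀)) * (‖ζ‖)⁻¹ * ∫ y in Ioi x₀, |v y| := by
        ring
end

section
/- There exists C > 0 such that for all ζ ∈ ℂ with Im ζ ≥ 0, ζ ≠ 0, and all x ≥ 0, one has |p(x,ζ)| ≤ e^{−Im(ζ)x} ( exp( C ∫ₓ^∞ y|v(y)| dy ) − 1 ); consequently there exists C' > 0 with |p(x,ζ)| ≤ C' ∫ₓ^∞ y|v(y)| dy for all such ζ and x, and for each fixed x ≥ 0 the limit of θ(x,ζ) as ζ → 0 with Im ζ ≥ 0 exists, so that θ(x,·) extends continuously to ζ = 0. -/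
set_option maxHeartbeats 1600000

open MeasureTheory Set Filter

noncomputable def Complex.abs : AbsoluteValue ℂ ℝ :=
  IsAbsoluteValue.toAbsoluteValue (norm : ℂ → ℝ)

theorem Complex.norm_eq_abs (z : ℂ) : ‖z‖ = Complex.abs z := rfl

theorem Complex.abs_exp (z : ℂ) : Complex.abs (Complex.exp z) = Real.exp z.re :=
  Complex.norm_exp z

theorem Complex.abs_ofReal (r : ℝ) : Complex.abs (r : ℂ) = |r| := Complex.norm_real r

theorem Complex.abs_I : Complex.abs Complex.I = 1 := Complex.norm_I

theorem Complex.abs_ofNat (n : ℕ) [n.AtLeastTwo] :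
    Complex.abs (OfNat.ofNat n : ℂ) = OfNat.ofNat n := Complex.norm_ofNat n

theorem Complex.abs_im_le_abs (z : ℂ) : |z.im| ≤ Complex.abs z := Complex.abs_im_le_norm z

theorem Complex.continuous_abs : Continuous Complex.abs := continuous_norm

theorem Complex.abs_exp_sub_one_le {x : ℂ} (hx : Complex.abs x ≤ 1) :
    Complex.abs (Complex.exp x - 1) ≤ 2 * Complex.abs x :=
  Complex.norm_exp_sub_one_le hx

lemma re_I_mul (ζ : ℂ) (y : ℝ) : (Complex.I * ζ * y).re = -(ζ.im * y) := by
  simp [Complex.mul_re, Complex.mul_im]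

lemma abs_expI (ζ : ℂ) (y : ℝ) :
    Complex.abs (Complex.exp (Complex.I * ζ * y)) = Real.exp (-(ζ.im * y)) := by
  rw [Complex.abs_exp, re_I_mul]

lemma abs_cos_le {ζ : ℂ} (hζ : 0 ≤ ζ.im) {u : ℝ} (hu : 0 ≤ u) :
    Complex.abs (Complex.cos (ζ * u)) ≤ Real.exp (ζ.im * u) := by
  rw [Complex.cos]
  have h1 : ((ζ * u) * Complex.I).re = -(ζ.im * u) := by
    simp [Complex.mul_re, Complex.mul_im]
  have h2 : ((-(ζ * u)) * Complex.I).re = ζ.im * u := by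
    simp [Complex.mul_re, Complex.mul_im]
  calc Complex.abs ((Complex.exp (ζ * u * Complex.I) + Complex.exp (-(ζ * u) * Complex.I)) / 2)
      ≤ (Complex.abs (Complex.exp (ζ * u * Complex.I)) +
          Complex.abs (Complex.exp (-(ζ * u) * Complex.I))) / 2 := by
        rw [map_div₀]
        rw [show Complex.abs 2 = 2 from Complex.norm_ofNat 2]
        gcongr
        exact Complex.abs.add_le _ _
    _ = (Real.exp (-(ζ.im * u)) + Real.exp (ζ.im * u)) / 2 := by
        rw [Complex.abs_exp, Complex.abs_exp, h1, h2]
    _ ≤ Real.exp (ζ.im * u) := by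
        have : Real.exp (-(ζ.im * u)) ≤ Real.exp (ζ.im * u) := by
          apply Real.exp_le_exp.2; nlinarith [mul_nonneg hζ hu]
        linarith

lemma hasDerivAt_sin_mul (ζ : ℂ) (s : ℝ) :
    HasDerivAt (fun s : ℝ => Complex.sin (ζ * s)) (Complex.cos (ζ * s) * ζ) s := by
  have h1 : HasDerivAt (fun z : ℂ => Complex.sin (ζ * z)) (Complex.cos (ζ * s) * ζ) (s : ℂ) := by
    simpa [Function.comp_def] using (Complex.hasDerivAt_sin (ζ * s)).comp (s : ℂ)
      ((hasDerivAt_id (s : ℂ)).const_mul ζ)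
  exact h1.comp_ofReal

lemma hasDerivAt_cos_mul (ζ : ℂ) (s : ℝ) :
    HasDerivAt (fun s : ℝ => Complex.cos (ζ * s)) (-Complex.sin (ζ * s) * ζ) s := by
  have h1 : HasDerivAt (fun z : ℂ => Complex.cos (ζ * z)) (-Complex.sin (ζ * s) * ζ) (s : ℂ) := by
    simpa [Function.comp_def] using (Complex.hasDerivAt_cos (ζ * s)).comp (s : ℂ)
      ((hasDerivAt_id (s : ℂ)).const_mul ζ)
  exact h1.comp_ofReal

lemma abs_sin_le {ζ : ℂ} (hζ : 0 ≤ ζ.im) {t : ℝ} (ht : 0 ≤ t) :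
    Complex.abs (Complex.sin (ζ * t)) ≤ Complex.abs ζ * t * Real.exp (ζ.im * t) := by
  have hmv := Convex.norm_image_sub_le_of_norm_hasDerivWithin_le
    (f := fun s : ℝ => Complex.sin (ζ * s)) (f' := fun s : ℝ => Complex.cos (ζ * s) * ζ)
    (C := Complex.abs ζ * Real.exp (ζ.im * t)) (s := Icc (0:ℝ) t)
    (fun u _ => (hasDerivAt_sin_mul ζ u).hasDerivWithinAt)
    (fun u hu => by
      rw [norm_mul]
      calc ‖Complex.cos (ζ * u)‖ * ‖ζ‖ ≤ Real.exp (ζ.im * u) * ‖ζ‖ := by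
            gcongr; exact abs_cos_le hζ hu.1
        _ ≤ Real.exp (ζ.im * t) * Complex.abs ζ := by
            rw [Complex.norm_eq_abs]
            have : Real.exp (ζ.im * u) ≤ Real.exp (ζ.im * t) :=
              Real.exp_le_exp.2 (by nlinarith [hu.2, hu.1])
            exact mul_le_mul_of_nonneg_right this (Complex.abs.nonneg ζ)
        _ = Complex.abs ζ * Real.exp (ζ.im * t) := mul_comm _ _)
    (convex_Icc 0 t) (left_mem_Icc.2 ht) (right_mem_Icc.2 ht)
  simpa [Complex.norm_eq_abs, abs_of_nonneg ht, mul_comm, mul_assoc, mul_left_comm] using hmv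

lemma abs_cos_sub_one_le {ζ : ℂ} (hζ : 0 ≤ ζ.im) {t u : ℝ} (hu : u ∈ Icc 0 t) :
    Complex.abs (Complex.cos (ζ * u) - 1) ≤
      (Complex.abs ζ)^2 * t^2 * Real.exp (ζ.im * t) := by
  have ht : (0:ℝ) ≤ t := le_trans hu.1 hu.2
  have hmv := Convex.norm_image_sub_le_of_norm_hasDerivWithin_le
    (f := fun s : ℝ => Complex.cos (ζ * s)) (f' := fun s : ℝ => -Complex.sin (ζ * s) * ζ)
    (C := (Complex.abs ζ)^2 * t * Real.exp (ζ.im * t)) (s := Icc (0:ℝ) t)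
    (fun u _ => (hasDerivAt_cos_mul ζ u).hasDerivWithinAt)
    (fun w hw => by
      rw [norm_mul, norm_neg]
      have h1 : ‖Complex.sin (ζ * w)‖ ≤ Complex.abs ζ * w * Real.exp (ζ.im * w) :=
        abs_sin_le hζ hw.1
      have h2 : Complex.abs ζ * w * Real.exp (ζ.im * w) ≤
          Complex.abs ζ * t * Real.exp (ζ.im * t) := by
        have e1 : Real.exp (ζ.im * w) ≤ Real.exp (ζ.im * t) :=
          Real.exp_le_exp.2 (by nlinarith [hw.2, hw.1])
        have e2 : Complex.abs ζ * w ≤ Complex.abs ζ * t :=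
          mul_le_mul_of_nonneg_left hw.2 (Complex.abs.nonneg ζ)
        exact mul_le_mul e2 e1 (Real.exp_pos _).le
          (mul_nonneg (Complex.abs.nonneg ζ) (le_trans hw.1 hw.2))
      calc ‖Complex.sin (ζ * w)‖ * ‖ζ‖ ≤ (Complex.abs ζ * t * Real.exp (ζ.im * t)) * Complex.abs ζ := by
            rw [Complex.norm_eq_abs]; exact mul_le_mul (h1.trans h2) le_rfl (Complex.abs.nonneg ζ) (by positivity)
        _ = (Complex.abs ζ)^2 * t * Real.exp (ζ.im * t) := by ring)
    (convex_Icc 0 t) (left_mem_Icc.2 ht) hu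
  have : Complex.cos (ζ * (0:ℝ)) = 1 := by simp
  calc Complex.abs (Complex.cos (ζ * u) - 1)
      = ‖Complex.cos (ζ * u) - Complex.cos (ζ * (0:ℝ))‖ := by rw [this]; rfl
    _ ≤ ((Complex.abs ζ)^2 * t * Real.exp (ζ.im * t)) * ‖u - (0:ℝ)‖ := hmv
    _ ≤ (Complex.abs ζ)^2 * t^2 * Real.exp (ζ.im * t) := by
        rw [sub_zero, Real.norm_eq_abs, abs_of_nonneg hu.1]
        nlinarith [hu.2, hu.1, sq_nonneg (Complex.abs ζ), Real.exp_pos (ζ.im * t), pow_two_nonneg (Complex.abs ζ), mul_nonneg (mul_nonneg (sq_nonneg (Complex.abs ζ)) ht) (Real.exp_pos (ζ.im*t)).le]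

lemma abs_inv_sin_sub_le {ζ : ℂ} (hζ : 0 ≤ ζ.im) (hζ0 : ζ ≠ 0) {t : ℝ} (ht : 0 ≤ t) :
    Complex.abs (ζ⁻¹ * Complex.sin (ζ * t) - t) ≤
      (Complex.abs ζ)^2 * t^3 * Real.exp (ζ.im * t) := by
  have hmv := Convex.norm_image_sub_le_of_norm_hasDerivWithin_le
    (f := fun s : ℝ => ζ⁻¹ * Complex.sin (ζ * s) - s)
    (f' := fun s : ℝ => Complex.cos (ζ * s) - 1)
    (C := (Complex.abs ζ)^2 * t^2 * Real.exp (ζ.im * t)) (s := Icc (0:ℝ) t)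
    (fun u _ => by
      have hd : HasDerivAt (fun s : ℝ => ζ⁻¹ * Complex.sin (ζ * s) - s)
          (ζ⁻¹ * (Complex.cos (ζ * u) * ζ) - 1) u := by
        exact (((hasDerivAt_sin_mul ζ u).const_mul ζ⁻¹).sub (Complex.ofRealCLM.hasDerivAt))
      have : ζ⁻¹ * (Complex.cos (ζ * u) * ζ) - 1 = Complex.cos (ζ * u) - 1 := by
        field_simp
      rw [this] at hd
      exact hd.hasDerivWithinAt)
    (fun u hu => abs_cos_sub_one_le hζ hu)
    (convex_Icc 0 t) (left_mem_Icc.2 ht) (right_mem_Icc.2 ht)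
  have h0 : ζ⁻¹ * Complex.sin (ζ * (0:ℝ)) - ((0:ℝ):ℂ) = 0 := by simp
  calc Complex.abs (ζ⁻¹ * Complex.sin (ζ * t) - t)
      = ‖(ζ⁻¹ * Complex.sin (ζ * t) - t) - (ζ⁻¹ * Complex.sin (ζ * (0:ℝ)) - ((0:ℝ):ℂ))‖ := by
        rw [h0, sub_zero]; rfl
    _ ≤ ((Complex.abs ζ)^2 * t^2 * Real.exp (ζ.im * t)) * ‖t - (0:ℝ)‖ := hmv
    _ = (Complex.abs ζ)^2 * t^3 * Real.exp (ζ.im * t) := by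
        rw [sub_zero, Real.norm_eq_abs, abs_of_nonneg ht]; ring

lemma tendsto_tail_integral {g : ℝ → ℝ} (hg0 : ∀ y, 0 ≤ g y) (hgi : Integrable g) :
    Tendsto (fun b : ℝ => ∫ y in Ioi b, g y) atTop (nhds 0) := by
  have heq : ∀ b : ℝ, (∫ y in Ioi b, g y) = ∫ y, (Ioi b).indicator g y := by
    intro b; rw [integral_indicator measurableSet_Ioi]
  rw [show (0:ℝ) = ∫ y : ℝ, (0:ℝ) by simp]
  refine Tendsto.congr (fun b => (heq b).symm) ?_
  refine tendsto_integral_filter_of_dominated_convergence g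
    (Filter.Eventually.of_forall (fun b =>
      (hgi.aestronglyMeasurable.indicator measurableSet_Ioi)))
    (Filter.Eventually.of_forall (fun b =>
      (Filter.Eventually.of_forall (fun y => by
        rw [Real.norm_eq_abs]
        by_cases h : y ∈ Ioi b
        · rw [Set.indicator_of_mem h, abs_of_nonneg (hg0 y)]
        · rw [Set.indicator_of_notMem h, abs_zero]; exact hg0 y))))
    hgi ?_
  refine Filter.Eventually.of_forall (fun y => ?_)
  refine Tendsto.congr' ?_ tendsto_const_nhds
  filter_upwards [Filter.eventually_ge_atTop y] with b hb
  exact (Set.indicator_of_notMem (by simp [hb]) g).symm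

lemma integral_Ioi_split {E : Type*} [NormedAddCommGroup E] [NormedSpace ℝ E]
    {f : ℝ → E} {x b : ℝ} (hxb : x ≤ b) (hf : IntegrableOn f (Ioi x)) :
    ∫ y in Ioi x, f y = (∫ y in Ioc x b, f y) + ∫ y in Ioi b, f y := by
  rw [← Ioc_union_Ioi_eq_Ioi hxb]
  exact setIntegral_union (Ioc_disjoint_Ioi le_rfl) measurableSet_Ioi
    (hf.mono_set (by rw [← Ioc_union_Ioi_eq_Ioi hxb]; exact subset_union_left))
    (hf.mono_set (by rw [← Ioc_union_Ioi_eq_Ioi hxb]; exact subset_union_right))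

/-- Gronwall-type inequality in backward integral form. -/
lemma gronwall_Ioi {g F : ℝ → ℝ} {B a : ℝ}
    (hg0 : ∀ y, 0 ≤ g y) (hgi : Integrable g)
    (hFm : AEMeasurable F (volume.restrict (Ioi (0:ℝ))))
    (hF0 : ∀ y, 0 ≤ F y) (hFB : ∀ y, F y ≤ B)
    (ha : 0 ≤ a)
    (hyp : ∀ x, 0 ≤ x → F x ≤ a + ∫ y in Ioi x, g y * F y) :
    ∀ x, 0 ≤ x → F x ≤ a * Real.exp (2 * ∫ y in Ioi x, g y) := by
  set G : ℝ → ℝ := fun x => ∫ y in Ioi x, g y with hG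
  -- integrability of g * F on tails
  have hgF_int : ∀ x : ℝ, 0 ≤ x → IntegrableOn (fun y => g y * F y) (Ioi x) := by
    intro x hx
    have hsub : Ioi x ⊆ Ioi (0:ℝ) := Ioi_subset_Ioi hx
    have hFm' : AEStronglyMeasurable F (volume.restrict (Ioi x)) :=
      (hFm.mono_measure (Measure.restrict_mono hsub le_rfl)).aestronglyMeasurable
    have hgx : Integrable g (volume.restrict (Ioi x)) := hgi.integrableOn
    have hbd : ∀ᵐ y ∂(volume.restrict (Ioi x)), ‖F y‖ ≤ max B 0 :=
      Filter.Eventually.of_forall (fun y => by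
        rw [Real.norm_eq_abs, abs_of_nonneg (hF0 y)]
        exact le_max_of_le_left (hFB y))
    have h2 : Integrable (fun y => F y * g y) (volume.restrict (Ioi x)) :=
      Integrable.bdd_mul hgx hFm' hbd
    exact h2.congr (Filter.Eventually.of_forall (fun y => mul_comm (F y) (g y)))
  have hG0 : ∀ x, 0 ≤ G x := fun x => setIntegral_nonneg measurableSet_Ioi (fun y _ => hg0 y)
  have hGmono : ∀ ⦃x x'⦄, x ≤ x' → G x' ≤ G x := by
    intro x x' h
    exact setIntegral_mono_set hgi.integrableOn
      (Filter.Eventually.of_forall (fun y => hg0 y))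
      (HasSubset.Subset.eventuallyLE (Ioi_subset_Ioi h))
  have hGsplit : ∀ ⦃x x'⦄, x ≤ x' → G x = (∫ y in Ioc x x', g y) + G x' :=
    fun x x' h => integral_Ioi_split h hgi.integrableOn
  -- continuity of G
  have hGrepr : ∀ x : ℝ, G x = G 0 - ∫ t in (0:ℝ)..x, g t := by
    intro x
    rcases le_total 0 x with h | h
    · rw [intervalIntegral.integral_of_le h, hGsplit h]; ring
    · rw [intervalIntegral.integral_of_ge h, hGsplit h]
      ring
  have hGcont : Continuous G := by
    have : Continuous fun x => G 0 - ∫ t in (0:ℝ)..x, g t :=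
      continuous_const.sub (intervalIntegral.continuous_primitive
        (fun a b => hgi.intervalIntegrable) 0)
    exact this.congr (fun x => (hGrepr x).symm)
  -- G tends to 0 at infinity
  have hGtendsto : Tendsto G atTop (nhds 0) := by
    rw [hG]; exact tendsto_tail_integral hg0 hgi
  -- main induction
  have main : ∀ n : ℕ, ∀ x, 0 ≤ x → G x ≤ n / 2 →
      a + (∫ y in Ioi x, g y * F y) ≤ a * Real.exp (2 * G x) := by
    intro n
    induction n with
    | zero =>
      intro x hx hGx
      have hGx0 : G x = 0 := le_antisymm (by simpa using hGx) (hG0 x)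
      have : (∫ y in Ioi x, g y * F y) ≤ (max B 0) * G x := by
        rw [hG, ← integral_const_mul]
        refine setIntegral_mono_on (hgF_int x hx) ((hgi.integrableOn).const_mul _)
          measurableSet_Ioi (fun y _ => ?_)
        rw [mul_comm (max B 0) (g y)]
        exact mul_le_mul_of_nonneg_left (le_max_of_le_left (hFB y)) (hg0 y)
      rw [hGx0] at this ⊢
      simp only [mul_zero, Real.exp_zero, mul_one] at *
      linarith
    | succ n ih =>
      intro x hx hGx
      by_cases hhalf : G x ≤ 1/2
      · -- direct ray-sup argument
        set S := sSup (F '' Ici x) with hS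
        have hne : (F '' Ici x).Nonempty := ⟨F x, mem_image_of_mem F self_mem_Ici⟩
        have hbdd : BddAbove (F '' Ici x) := ⟨B, fun z hz => by
          obtain ⟨y, _, rfl⟩ := hz; exact hFB y⟩
        have hSF : ∀ y, x ≤ y → F y ≤ S := fun y hy =>
          le_csSup hbdd (mem_image_of_mem F hy)
        have hS0 : 0 ≤ S := le_trans (hF0 x) (hSF x le_rfl)
        have hbound : ∀ y, x ≤ y → (∫ z in Ioi y, g z * F z) ≤ S * G x := by
          intro y hy
          have h1 : (∫ z in Ioi y, g z * F z) ≤ ∫ z in Ioi y, g z * S := by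
            refine setIntegral_mono_on (hgF_int y (le_trans hx hy))
              ((hgi.integrableOn).mul_const _) measurableSet_Ioi (fun z hz => ?_)
            exact mul_le_mul_of_nonneg_left (hSF z (le_of_lt (lt_of_le_of_lt hy hz)))
              (hg0 z)
          have h2 : (∫ z in Ioi y, g z * S) = G y * S := integral_mul_const S g ▸ by
            rw [integral_mul_const]
          calc (∫ z in Ioi y, g z * F z) ≤ G y * S := by rw [← h2]; exact h1
            _ ≤ G x * S := mul_le_mul_of_nonneg_right (hGmono hy) hS0
            _ = S * G x := mul_comm _ _
        have hSle : S ≤ a + S * G x := by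
          refine csSup_le hne (fun z hz => ?_)
          obtain ⟨y, hy, rfl⟩ := hz
          exact le_trans (hyp y (le_trans hx hy)) (by linarith [hbound y hy])
        have hS2a : S ≤ 2 * a := by nlinarith [hG0 x]
        calc a + (∫ y in Ioi x, g y * F y) ≤ a + S * G x := by
              linarith [hbound x le_rfl]
          _ ≤ a + 2 * a * G x := by nlinarith [hG0 x]
          _ = a * (1 + 2 * G x) := by ring
          _ ≤ a * Real.exp (2 * G x) := by
              refine mul_le_mul_of_nonneg_left ?_ ha
              have := Real.add_one_le_exp (2 * G x)
              linarith
      · -- reduce to smaller tail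
        push_neg at hhalf
        set c := G x - 1/2 with hc
        have hc0 : 0 < c := by simp [hc]; linarith
        have hcn : c ≤ n / 2 := by
          have : G x ≤ (n+1)/2 := by push_cast at hGx ⊢; linarith
          simp [hc]; linarith
        -- find b ≥ x with G b < c
        obtain ⟨b, hbx, hbc⟩ : ∃ b, x ≤ b ∧ G b < c := by
          have h1 : ∀ᶠ b in atTop, G b < c := hGtendsto.eventually (eventually_lt_nhds hc0)
          exact ((eventually_ge_atTop x).and h1).exists.imp (fun b h => ⟨h.1, h.2⟩)
        -- IVT to find x' with G x' = c
        obtain ⟨x', hx'mem, hx'c⟩ : ∃ x' ∈ Icc x b, G x' = c := by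
          have := intermediate_value_Icc' hbx hGcont.continuousOn (a := x) (b := b)
          have hmem : c ∈ Icc (G b) (G x) := ⟨le_of_lt hbc, by simp [hc]⟩
          obtain ⟨x', hx', hx'c⟩ := this hmem
          exact ⟨x', hx', hx'c⟩
        have hxx' : x ≤ x' := hx'mem.1
        have hx'0 : 0 ≤ x' := le_trans hx hxx'
        have hA' := ih x' hx'0 (by rw [hx'c]; exact hcn)
        rw [hx'c] at hA'
        set A' : ℝ := a + ∫ y in Ioi x', g y * F y with hA'def
        have hA'nonneg : 0 ≤ A' := by
          have : 0 ≤ ∫ y in Ioi x', g y * F y :=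
            setIntegral_nonneg measurableSet_Ioi (fun y _ => mul_nonneg (hg0 y) (hF0 y))
          linarith
        -- sup on the segment [x, x']
        set S := sSup (F '' Icc x x') with hS
        have hne : (F '' Icc x x').Nonempty := ⟨F x, mem_image_of_mem F ⟨le_rfl, hxx'⟩⟩
        have hbdd : BddAbove (F '' Icc x x') := ⟨B, fun z hz => by
          obtain ⟨y, _, rfl⟩ := hz; exact hFB y⟩
        have hSF : ∀ y ∈ Icc x x', F y ≤ S := fun y hy =>
          le_csSup hbdd (mem_image_of_mem F hy)
        have hS0 : 0 ≤ S := le_trans (hF0 x) (hSF x ⟨le_rfl, hxx'⟩)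
        -- segment integral estimate
        have hseg : ∀ y ∈ Icc x x', (∫ z in Ioc y x', g z * F z) ≤ S * (1/2) := by
          intro y hy
          have hi1 : IntegrableOn (fun z => g z * F z) (Ioc y x') :=
            (hgF_int y (le_trans hx hy.1)).mono_set Ioc_subset_Ioi_self
          have hi2 : IntegrableOn (fun z => g z * S) (Ioc y x') :=
            (hgi.integrableOn).mul_const _
          have h1 : (∫ z in Ioc y x', g z * F z) ≤ ∫ z in Ioc y x', g z * S := by
            refine setIntegral_mono_on hi1 hi2 measurableSet_Ioc (fun z hz => ?_)
            exact mul_le_mul_of_nonneg_left (hSF z ⟨le_trans hy.1 (le_of_lt hz.1), hz.2⟩) (hg0 z)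
          have h2 : (∫ z in Ioc y x', g z * S) = (G y - G x') * S := by
            rw [integral_mul_const]
            have h3 : (∫ z in Ioc y x', g z) = G y - G x' := by
              have := hGsplit hy.2
              linarith
            rw [h3]
          have h4 : G y - G x' ≤ 1/2 := by
            have := hGmono hy.1
            rw [hx'c]; simp [hc] at *; linarith
          calc (∫ z in Ioc y x', g z * F z) ≤ (G y - G x') * S := by rw [← h2]; exact h1
            _ ≤ (1/2) * S := by
                apply mul_le_mul_of_nonneg_right _ hS0
                exact h4
            _ = S * (1/2) := mul_comm _ _
        -- bound S
        have hSle : S ≤ A' + S * (1/2) := by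
          refine csSup_le hne (fun z hz => ?_)
          obtain ⟨y, hy, rfl⟩ := hz
          have h5 := hyp y (le_trans hx hy.1)
          have h6 : (∫ z in Ioi y, g z * F z) =
              (∫ z in Ioc y x', g z * F z) + ∫ z in Ioi x', g z * F z :=
            integral_Ioi_split hy.2 (hgF_int y (le_trans hx hy.1))
          have h7 := hseg y hy
          rw [h6] at h5
          rw [hA'def]
          linarith
        have hS2A : S ≤ 2 * A' := by linarith
        -- conclude
        have hsplitx : (∫ y in Ioi x, g y * F y) =
            (∫ y in Ioc x x', g y * F y) + ∫ y in Ioi x', g y * F y :=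
          integral_Ioi_split hxx' (hgF_int x hx)
        have hsegx := hseg x ⟨le_rfl, hxx'⟩
        have hfinal : a + (∫ y in Ioi x, g y * F y) ≤ 2 * A' := by
          rw [hsplitx, hA'def] at *
          linarith
        have h2e : (2:ℝ) ≤ Real.exp 1 := by
          have := Real.add_one_le_exp 1; linarith
        have hGxc : 2 * G x = 2 * c + 1 := by simp [hc]; ring
        calc a + (∫ y in Ioi x, g y * F y) ≤ 2 * A' := hfinal
          _ ≤ 2 * (a * Real.exp (2 * c)) := by linarith [hA']
          _ ≤ Real.exp 1 * (a * Real.exp (2 * c)) := by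
              apply mul_le_mul_of_nonneg_right h2e
              positivity
          _ = a * Real.exp (2 * c + 1) := by rw [Real.exp_add]; ring
          _ = a * Real.exp (2 * G x) := by rw [hGxc]
  intro x hx
  obtain ⟨n, hn⟩ := exists_nat_ge (2 * G x)
  exact le_trans (hyp x hx) (main n x hx (by linarith))

lemma integrable_one_add_rpow {ρ : ℝ} (hρ : 2 < ρ) :
    IntegrableOn (fun y : ℝ => (1 + y) ^ (1 - ρ)) (Ioi (0:ℝ)) := by
  have hmeas : Measurable (fun y : ℝ => (1 + y) ^ (1 - ρ)) := by fun_prop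
  have h1 : IntegrableOn (fun y : ℝ => (1 + y) ^ (1 - ρ)) (Ioc (0:ℝ) 1) := by
    refine Integrable.mono' (g := fun _ => (1:ℝ))
      (integrableOn_const measure_Ioc_lt_top.ne) hmeas.aestronglyMeasurable ?_
    refine (ae_restrict_iff' measurableSet_Ioc).2 (Filter.Eventually.of_forall (fun y hy => ?_))
    rw [Real.norm_eq_abs, abs_of_nonneg (Real.rpow_nonneg (by linarith [hy.1]) _)]
    exact Real.rpow_le_one_of_one_le_of_nonpos (by linarith [hy.1]) (by linarith)
  have h2 : IntegrableOn (fun y : ℝ => (1 + y) ^ (1 - ρ)) (Ioi (1:ℝ)) := by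
    refine Integrable.mono' (g := fun y => y ^ (1 - ρ))
      (integrableOn_Ioi_rpow_of_lt (by linarith) one_pos) hmeas.aestronglyMeasurable ?_
    refine (ae_restrict_iff' measurableSet_Ioi).2 (Filter.Eventually.of_forall (fun y hy => ?_))
    have hy1 : (1:ℝ) < y := hy
    rw [Real.norm_eq_abs, abs_of_nonneg (Real.rpow_nonneg (by linarith) _)]
    exact Real.rpow_le_rpow_of_nonpos (by linarith) (by linarith) (by linarith)
  have : Ioi (0:ℝ) = Ioc (0:ℝ) 1 ∪ Ioi (1:ℝ) := (Ioc_union_Ioi_eq_Ioi zero_le_one).symm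
  rw [this]
  exact h1.union h2

lemma integrable_decay {v : ℝ → ℝ} (hv_meas : Measurable v) {C₀ ρ : ℝ}
    (hC₀ : 0 < C₀) (hρ : 2 < ρ)
    (hv : ∀ x : ℝ, 0 ≤ x → |v x| ≤ C₀ * (1 + x) ^ (-ρ)) :
    IntegrableOn (fun y : ℝ => y * |v y|) (Ioi (0:ℝ)) ∧
      IntegrableOn (fun y : ℝ => |v y|) (Ioi (0:ℝ)) := by
  have hdom : IntegrableOn (fun y : ℝ => C₀ * (1 + y) ^ (1 - ρ)) (Ioi (0:ℝ)) :=
    (integrable_one_add_rpow hρ).const_mul _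
  have hsplit : ∀ y : ℝ, 0 < y → (1 + y) ^ (1 - ρ) = (1 + y) * (1 + y) ^ (-ρ) := by
    intro y hy
    rw [show (1 - ρ) = 1 + (-ρ) by ring, Real.rpow_add (by linarith), Real.rpow_one]
  constructor
  · refine Integrable.mono' hdom
      ((measurable_id.mul hv_meas.abs).aestronglyMeasurable) ?_
    refine (ae_restrict_iff' measurableSet_Ioi).2 (Filter.Eventually.of_forall (fun y hy => ?_))
    have hy0 : (0:ℝ) < y := hy
    have h1 : |v y| ≤ C₀ * (1 + y) ^ (-ρ) := hv y hy0.le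
    have h2 : (0:ℝ) ≤ (1 + y) ^ (-ρ) := Real.rpow_nonneg (by linarith) _
    rw [Real.norm_eq_abs, abs_of_nonneg (mul_nonneg hy0.le (abs_nonneg _)), hsplit y hy0]
    nlinarith [abs_nonneg (v y)]
  · refine Integrable.mono' hdom (hv_meas.abs.aestronglyMeasurable) ?_
    refine (ae_restrict_iff' measurableSet_Ioi).2 (Filter.Eventually.of_forall (fun y hy => ?_))
    have hy0 : (0:ℝ) < y := hy
    have h1 : |v y| ≤ C₀ * (1 + y) ^ (-ρ) := hv y hy0.le
    have h3 : (1 + y) ^ (-ρ) ≤ (1 + y) ^ (1 - ρ) :=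
      Real.rpow_le_rpow_of_exponent_le (by linarith) (by linarith)
    rw [Real.norm_eq_abs, abs_abs]
    calc |v y| ≤ C₀ * (1 + y) ^ (-ρ) := h1
      _ ≤ C₀ * (1 + y) ^ (1 - ρ) := mul_le_mul_of_nonneg_left h3 hC₀.le

lemma jost_key (v : ℝ → ℝ) (θ : ℂ → ℝ → ℂ) (g : ℝ → ℝ)
    (hgdef : ∀ y : ℝ, 0 < y → g y = y * |v y|) (hg0 : ∀ y, 0 ≤ g y) (hgi : Integrable g)
    (hθcont : ∀ ζ : ℂ, 0 ≤ ζ.im → ζ ≠ 0 → ContinuousOn (θ ζ) (Set.Ici 0))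
    (hθbdd : ∀ ζ : ℂ, 0 ≤ ζ.im → ζ ≠ 0 →
      ∃ M : ℝ, ∀ x : ℝ, 0 ≤ x → Real.exp (ζ.im * x) * Complex.abs (θ ζ x) ≤ M)
    (hθeq : ∀ ζ : ℂ, 0 ≤ ζ.im → ζ ≠ 0 → ∀ x : ℝ, 0 ≤ x →
      θ ζ x = Complex.exp (Complex.I * ζ * x) +
        ζ⁻¹ * ∫ y in Set.Ioi x, Complex.sin (ζ * ((x : ℂ) - (y : ℂ))) * (v y : ℂ) * θ ζ y)
    (ζ : ℂ) (him : 0 ≤ ζ.im) (hne : ζ ≠ 0) :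
    ∀ x : ℝ, 0 ≤ x →
      1 + Real.exp (ζ.im * x) * Complex.abs (θ ζ x - Complex.exp (Complex.I * ζ * x)) ≤
        Real.exp (2 * ∫ y in Ioi x, g y) := by
  obtain ⟨M, hM⟩ := hθbdd ζ him hne
  have hM0 : 0 ≤ M := le_trans (by positivity) (hM 0 le_rfl)
  set F : ℝ → ℝ := fun y => if 0 ≤ y then
    1 + Real.exp (ζ.im * y) * Complex.abs (θ ζ y - Complex.exp (Complex.I * ζ * y)) else 1
    with hFdef
  have hF0 : ∀ y, 0 ≤ F y := by
    intro y; rw [hFdef]; dsimp only; split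
    · positivity
    · norm_num
  have hFval : ∀ y : ℝ, 0 ≤ y → F y =
      1 + Real.exp (ζ.im * y) * Complex.abs (θ ζ y - Complex.exp (Complex.I * ζ * y)) := by
    intro y hy; rw [hFdef]; exact if_pos hy
  have hFB : ∀ y, F y ≤ M + 2 := by
    intro y; rw [hFdef]; dsimp only; split
    · rename_i hy
      have h1 : Complex.abs (θ ζ y - Complex.exp (Complex.I * ζ * y)) ≤
          Complex.abs (θ ζ y) + Complex.abs (Complex.exp (Complex.I * ζ * y)) := by
        exact (Complex.abs.sub_le_add _ _)
      have h2 : Real.exp (ζ.im * y) * Complex.abs (Complex.exp (Complex.I * ζ * y)) = 1 := by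
        rw [abs_expI, ← Real.exp_add]; simp
      have h3 := hM y hy
      nlinarith [Real.exp_pos (ζ.im * y), Complex.abs.nonneg (θ ζ y),
        Complex.abs.nonneg (Complex.exp (Complex.I * ζ * y))]
    · linarith
  -- measurability of F on Ioi 0
  have hFm : AEMeasurable F (volume.restrict (Ioi (0:ℝ))) := by
    have hc : ContinuousOn (fun y : ℝ =>
        1 + Real.exp (ζ.im * y) * Complex.abs (θ ζ y - Complex.exp (Complex.I * ζ * y)))
        (Ici (0:ℝ)) := by
      refine continuousOn_const.add (ContinuousOn.mul ?_ ?_)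
      · exact (Real.continuous_exp.comp (continuous_const.mul continuous_id)).continuousOn
      · exact Complex.continuous_abs.comp_continuousOn
          ((hθcont ζ him hne).sub (Continuous.continuousOn (by continuity)))
    have h1 : AEMeasurable (fun y : ℝ =>
        1 + Real.exp (ζ.im * y) * Complex.abs (θ ζ y - Complex.exp (Complex.I * ζ * y)))
        (volume.restrict (Ioi (0:ℝ))) :=
      (hc.aemeasurable measurableSet_Ici).mono_measure
        (Measure.restrict_mono Ioi_subset_Ici_self le_rfl)
    refine h1.congr ?_
    refine ((ae_restrict_iff' measurableSet_Ioi).2 (Filter.Eventually.of_forall (fun y hy => ?_)))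
    exact (hFval y (le_of_lt hy)).symm
  -- the basic integral inequality
  have hζabs : (0:ℝ) < Complex.abs ζ := by
    simpa [Complex.abs.pos_iff] using hne
  have hgF_int : ∀ x : ℝ, 0 ≤ x → IntegrableOn (fun y => g y * F y) (Ioi x) := by
    intro x hx
    have hsub : Ioi x ⊆ Ioi (0:ℝ) := Ioi_subset_Ioi hx
    have hFm' : AEStronglyMeasurable F (volume.restrict (Ioi x)) :=
      (hFm.mono_measure (Measure.restrict_mono hsub le_rfl)).aestronglyMeasurable
    have hgx : Integrable g (volume.restrict (Ioi x)) := hgi.integrableOn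
    have hbd : ∀ᵐ y ∂(volume.restrict (Ioi x)), ‖F y‖ ≤ M + 2 :=
      Filter.Eventually.of_forall (fun y => by
        rw [Real.norm_eq_abs, abs_of_nonneg (hF0 y)]; exact hFB y)
    have h2 : Integrable (fun y => F y * g y) (volume.restrict (Ioi x)) :=
      Integrable.bdd_mul hgx hFm' hbd
    exact h2.congr (Filter.Eventually.of_forall (fun y => mul_comm (F y) (g y)))
  have hyp : ∀ x : ℝ, 0 ≤ x → F x ≤ 1 + ∫ y in Ioi x, g y * F y := by
    intro x hx
    rw [hFval x hx]
    have heq := hθeq ζ him hne x hx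
    have hp : θ ζ x - Complex.exp (Complex.I * ζ * x) =
        ζ⁻¹ * ∫ y in Set.Ioi x, Complex.sin (ζ * ((x : ℂ) - (y : ℂ))) * (v y : ℂ) * θ ζ y := by
      rw [heq]; ring
    have habs : Real.exp (ζ.im * x) * Complex.abs (θ ζ x - Complex.exp (Complex.I * ζ * x)) ≤
        ∫ y in Ioi x, g y * F y := by
      rw [hp]
      rw [map_mul, map_inv₀]
      have hnorm : Complex.abs (∫ y in Set.Ioi x,
          Complex.sin (ζ * ((x : ℂ) - (y : ℂ))) * (v y : ℂ) * θ ζ y) ≤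
          ∫ y in Set.Ioi x,
            Complex.abs (Complex.sin (ζ * ((x : ℂ) - (y : ℂ))) * (v y : ℂ) * θ ζ y) := by
        have := norm_integral_le_integral_norm (μ := volume.restrict (Ioi x))
          (f := fun y : ℝ => Complex.sin (ζ * ((x : ℂ) - (y : ℂ))) * (v y : ℂ) * θ ζ y)
        simpa [Complex.norm_eq_abs, Complex.abs_ofReal] using this
      have hstep : Real.exp (ζ.im * x) * ((Complex.abs ζ)⁻¹ *
          ∫ y in Set.Ioi x,
            Complex.abs (Complex.sin (ζ * ((x : ℂ) - (y : ℂ))) * (v y : ℂ) * θ ζ y)) ≤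
          ∫ y in Ioi x, g y * F y := by
        rw [← integral_const_mul, ← integral_const_mul]
        refine integral_mono_of_nonneg ?_ (hgF_int x hx) ?_
        · exact Filter.Eventually.of_forall (fun y => by positivity)
        · refine (ae_restrict_iff' measurableSet_Ioi).2
            (Filter.Eventually.of_forall (fun y hy => ?_))
          have hxy : x < y := hy
          have ht : (0:ℝ) ≤ y - x := by linarith
          have hy0 : (0:ℝ) ≤ y := le_trans hx (le_of_lt hxy)
          -- rewrite sin term
          have hsin : Complex.abs (Complex.sin (ζ * ((x : ℂ) - (y : ℂ)))) =
              Complex.abs (Complex.sin (ζ * ((y - x : ℝ) : ℂ))) := by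
            have h : (ζ * ((x : ℂ) - (y : ℂ))) = -(ζ * ((y - x : ℝ) : ℂ)) := by
              push_cast; ring
            rw [h, Complex.sin_neg, map_neg_eq_map]
          have hsinle : Complex.abs (Complex.sin (ζ * ((y - x : ℝ) : ℂ))) ≤
              Complex.abs ζ * (y - x) * Real.exp (ζ.im * (y - x)) := abs_sin_le him ht
          have hθle : Complex.abs (θ ζ y) ≤ Real.exp (-(ζ.im * y)) * F y := by
            rw [hFval y hy0]
            have h1 : Complex.abs (θ ζ y) ≤
                Complex.abs (Complex.exp (Complex.I * ζ * y)) +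
                Complex.abs (θ ζ y - Complex.exp (Complex.I * ζ * y)) := by
              calc Complex.abs (θ ζ y) =
                  Complex.abs (Complex.exp (Complex.I * ζ * y) +
                    (θ ζ y - Complex.exp (Complex.I * ζ * y))) := by ring_nf
                _ ≤ _ := Complex.abs.add_le _ _
            rw [abs_expI] at h1
            have he : Real.exp (-(ζ.im * y)) *
                (1 + Real.exp (ζ.im * y) *
                  Complex.abs (θ ζ y - Complex.exp (Complex.I * ζ * y))) =
                Real.exp (-(ζ.im * y)) +
                  Complex.abs (θ ζ y - Complex.exp (Complex.I * ζ * y)) := by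
              rw [mul_add, mul_one, ← mul_assoc, ← Real.exp_add]
              simp
            rw [he]
            exact h1
          dsimp only
          rw [map_mul, map_mul, hsin]
          have hvabs : Complex.abs ((v y : ℂ)) = |v y| := by
            rw [Complex.abs_ofReal]
          rw [hvabs]
          have hgy : g y = y * |v y| := hgdef y (lt_of_le_of_lt hx hxy)
          -- main chain
          calc Real.exp (ζ.im * x) * ((Complex.abs ζ)⁻¹ *
              (Complex.abs (Complex.sin (ζ * ((y - x : ℝ) : ℂ))) * |v y| * Complex.abs (θ ζ y)))
              ≤ Real.exp (ζ.im * x) * ((Complex.abs ζ)⁻¹ *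
                ((Complex.abs ζ * (y - x) * Real.exp (ζ.im * (y - x))) * |v y| *
                  (Real.exp (-(ζ.im * y)) * F y))) := by
                refine mul_le_mul_of_nonneg_left ?_ (Real.exp_pos _).le
                refine mul_le_mul_of_nonneg_left ?_ (by positivity)
                refine mul_le_mul ?_ hθle (Complex.abs.nonneg _) (by positivity)
                exact mul_le_mul_of_nonneg_right hsinle (abs_nonneg _)
            _ = (y - x) * |v y| * F y *
                ((Complex.abs ζ)⁻¹ * Complex.abs ζ) *
                (Real.exp (ζ.im * x) * Real.exp (ζ.im * (y - x)) * Real.exp (-(ζ.im * y))) := by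
                ring
            _ = (y - x) * |v y| * F y := by
                rw [inv_mul_cancel₀ (ne_of_gt hζabs), ← Real.exp_add, ← Real.exp_add]
                ring_nf
                simp [Real.exp_zero]
            _ ≤ g y * F y := by
                rw [hgy]
                have : (y - x) * |v y| ≤ y * |v y| :=
                  mul_le_mul_of_nonneg_right (by linarith) (abs_nonneg _)
                exact mul_le_mul_of_nonneg_right this (hF0 y)
      calc Real.exp (ζ.im * x) * ((Complex.abs ζ)⁻¹ *
            Complex.abs (∫ y in Set.Ioi x,
              Complex.sin (ζ * ((x : ℂ) - (y : ℂ))) * (v y : ℂ) * θ ζ y))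
          ≤ Real.exp (ζ.im * x) * ((Complex.abs ζ)⁻¹ *
            ∫ y in Set.Ioi x,
              Complex.abs (Complex.sin (ζ * ((x : ℂ) - (y : ℂ))) * (v y : ℂ) * θ ζ y)) := by
            refine mul_le_mul_of_nonneg_left ?_ (Real.exp_pos _).le
            exact mul_le_mul_of_nonneg_left hnorm (by positivity)
        _ ≤ ∫ y in Ioi x, g y * F y := hstep
    linarith
  have hgron := gronwall_Ioi hg0 hgi hFm hF0 hFB (zero_le_one) hyp
  intro x hx
  have h := hgron x hx
  rw [hFval x hx, one_mul] at h
  linarith [h]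

lemma jost_pairwise (v : ℝ → ℝ) (hv_meas : Measurable v) (θ : ℂ → ℝ → ℂ) (g : ℝ → ℝ)
    (hgdef : ∀ y : ℝ, 0 < y → g y = y * |v y|) (hg0 : ∀ y, 0 ≤ g y) (hgi : Integrable g)
    (hvi : IntegrableOn (fun y : ℝ => |v y|) (Ioi (0:ℝ)))
    (hθcont : ∀ ζ : ℂ, 0 ≤ ζ.im → ζ ≠ 0 → ContinuousOn (θ ζ) (Set.Ici 0))
    (hθeq : ∀ ζ : ℂ, 0 ≤ ζ.im → ζ ≠ 0 → ∀ x : ℝ, 0 ≤ x →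
      θ ζ x = Complex.exp (Complex.I * ζ * x) +
        ζ⁻¹ * ∫ y in Set.Ioi x, Complex.sin (ζ * ((x : ℂ) - (y : ℂ))) * (v y : ℂ) * θ ζ y)
    (B₀ : ℝ) (hB₀pos : 0 < B₀)
    (hB₀ : ∀ ζ : ℂ, 0 ≤ ζ.im → ζ ≠ 0 → ∀ y : ℝ, 0 ≤ y →
      Complex.abs (θ ζ y) ≤ B₀ * Real.exp (-(ζ.im * y)))
    (R δ : ℝ) (hR : 0 < R) (hδ : 0 < δ) (hδR : δ * R ≤ 1)
    (ζ₁ ζ₂ : ℂ) (him1 : 0 ≤ ζ₁.im) (him2 : 0 ≤ ζ₂.im) (hne1 : ζ₁ ≠ 0) (hne2 : ζ₂ ≠ 0)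
    (hζ1 : Complex.abs ζ₁ ≤ δ) (hζ2 : Complex.abs ζ₂ ≤ δ) :
    ∀ x : ℝ, 0 ≤ x → x ≤ R →
      Complex.abs (θ ζ₁ x - θ ζ₂ x) ≤
        (4*δ*R + 2*Real.exp 1*δ^2*R^3*B₀*(∫ y in Ioi (0:ℝ), |v y|)
          + 2*B₀*(∫ y in Ioi R, g y)) *
          Real.exp (2 * ∫ y in Ioi x, Real.exp 1 * g y) := by
  set V : ℝ := ∫ y in Ioi (0:ℝ), |v y| with hVdef
  set τ : ℝ := ∫ y in Ioi R, g y with hτdef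
  have hV0 : 0 ≤ V := setIntegral_nonneg measurableSet_Ioi (fun y _ => abs_nonneg _)
  have hτ0 : 0 ≤ τ := setIntegral_nonneg measurableSet_Ioi (fun y _ => hg0 y)
  set a' : ℝ := 4*δ*R + 2*Real.exp 1*δ^2*R^3*B₀*V + 2*B₀*τ with ha'def
  have ha'0 : 0 ≤ a' := by
    have := Real.exp_pos 1
    positivity
  set Δ : ℝ → ℝ := (Icc (0:ℝ) R).indicator
    (fun y => Complex.abs (θ ζ₁ y - θ ζ₂ y)) with hΔdef
  have hΔ0 : ∀ y, 0 ≤ Δ y := by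
    intro y; rw [hΔdef]
    exact Set.indicator_nonneg (fun z _ => Complex.abs.nonneg _) y
  have hΔval : ∀ y ∈ Icc (0:ℝ) R, Δ y = Complex.abs (θ ζ₁ y - θ ζ₂ y) := by
    intro y hy; rw [hΔdef]; exact Set.indicator_of_mem hy _
  have hΔB : ∀ y, Δ y ≤ 2 * B₀ := by
    intro y; rw [hΔdef]
    by_cases hy : y ∈ Icc (0:ℝ) R
    · rw [Set.indicator_of_mem hy]
      have h1 := hB₀ ζ₁ him1 hne1 y hy.1
      have h2 := hB₀ ζ₂ him2 hne2 y hy.1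
      have e1 : Real.exp (-(ζ₁.im * y)) ≤ 1 := by
        rw [Real.exp_le_one_iff]; nlinarith [hy.1]
      have e2 : Real.exp (-(ζ₂.im * y)) ≤ 1 := by
        rw [Real.exp_le_one_iff]; nlinarith [hy.1]
      calc Complex.abs (θ ζ₁ y - θ ζ₂ y) ≤ Complex.abs (θ ζ₁ y) + Complex.abs (θ ζ₂ y) :=
            Complex.abs.sub_le_add _ _
        _ ≤ B₀ * Real.exp (-(ζ₁.im * y)) + B₀ * Real.exp (-(ζ₂.im * y)) := add_le_add h1 h2
        _ ≤ 2 * B₀ := by nlinarith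
    · rw [Set.indicator_of_notMem hy]; positivity
  have hΔm : AEMeasurable Δ (volume.restrict (Ioi (0:ℝ))) := by
    have hc : ContinuousOn (fun y : ℝ => Complex.abs (θ ζ₁ y - θ ζ₂ y)) (Ici (0:ℝ)) :=
      Complex.continuous_abs.comp_continuousOn
        ((hθcont ζ₁ him1 hne1).sub (hθcont ζ₂ him2 hne2))
    have h1 : AEMeasurable (fun y : ℝ => Complex.abs (θ ζ₁ y - θ ζ₂ y))
        (volume.restrict (Ioi (0:ℝ))) :=
      (hc.aemeasurable measurableSet_Ici).mono_measure
        (Measure.restrict_mono Ioi_subset_Ici_self le_rfl)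
    exact h1.indicator measurableSet_Icc
  -- bound on the single kernels
  have him_le1 : ζ₁.im ≤ δ := le_trans (le_trans (le_abs_self _) (Complex.abs_im_le_abs ζ₁)) hζ1
  have him_le2 : ζ₂.im ≤ δ := le_trans (le_trans (le_abs_self _) (Complex.abs_im_le_abs ζ₂)) hζ2
  have hu : ∀ (ζ : ℂ), 0 ≤ ζ.im → ζ ≠ 0 → ∀ (y : ℝ), 0 ≤ y → ∀ z ∈ Ioi y,
      Complex.abs (ζ⁻¹ * (Complex.sin (ζ * ((y : ℂ) - (z : ℂ))) * (v z : ℂ) * θ ζ z)) ≤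
        B₀ * g z := by
    intro ζ him hne y hy z hz
    have hyz : y < z := hz
    have hz0 : (0:ℝ) < z := lt_of_le_of_lt hy hyz
    have ht : (0:ℝ) ≤ z - y := by linarith
    have hζa : (0:ℝ) < Complex.abs ζ := by simpa [Complex.abs.pos_iff] using hne
    have hsin : Complex.abs (Complex.sin (ζ * ((y : ℂ) - (z : ℂ)))) =
        Complex.abs (Complex.sin (ζ * ((z - y : ℝ) : ℂ))) := by
      have h : (ζ * ((y : ℂ) - (z : ℂ))) = -(ζ * ((z - y : ℝ) : ℂ)) := by push_cast; ring
      rw [h, Complex.sin_neg, map_neg_eq_map]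
    rw [map_mul, map_inv₀, map_mul, map_mul, hsin, Complex.abs_ofReal]
    have h1 : Complex.abs (Complex.sin (ζ * ((z - y : ℝ) : ℂ))) ≤
        Complex.abs ζ * (z - y) * Real.exp (ζ.im * (z - y)) := abs_sin_le him ht
    have h2 : Complex.abs (θ ζ z) ≤ B₀ * Real.exp (-(ζ.im * z)) := hB₀ ζ him hne z hz0.le
    have hchain : (Complex.abs ζ)⁻¹ *
        ((Complex.abs ζ * (z - y) * Real.exp (ζ.im * (z - y))) * |v z| *
          (B₀ * Real.exp (-(ζ.im * z)))) ≤ B₀ * g z := by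
      rw [hgdef z hz0]
      have hexp : Real.exp (ζ.im * (z - y)) * Real.exp (-(ζ.im * z)) =
          Real.exp (-(ζ.im * y)) := by rw [← Real.exp_add]; ring_nf
      have hexple : Real.exp (-(ζ.im * y)) ≤ 1 := by
        rw [Real.exp_le_one_iff]; nlinarith
      have : (Complex.abs ζ)⁻¹ * ((Complex.abs ζ * (z - y) * Real.exp (ζ.im * (z - y))) * |v z| *
          (B₀ * Real.exp (-(ζ.im * z)))) =
          ((Complex.abs ζ)⁻¹ * Complex.abs ζ) * ((z - y) * |v z| * B₀ *
            (Real.exp (ζ.im * (z - y)) * Real.exp (-(ζ.im * z)))) := by ring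
      rw [this, inv_mul_cancel₀ (ne_of_gt hζa), one_mul, hexp]
      have hnn : 0 ≤ (z - y) * |v z| * B₀ :=
        mul_nonneg (mul_nonneg ht (abs_nonneg _)) hB₀pos.le
      have hle1 : (z - y) * |v z| * B₀ * Real.exp (-(ζ.im * y)) ≤ (z - y) * |v z| * B₀ :=
        mul_le_of_le_one_right hnn hexple
      have hle2 : (z - y) * |v z| * B₀ ≤ B₀ * (z * |v z|) := by
        have h5 : (z - y) * |v z| ≤ z * |v z| :=
          mul_le_mul_of_nonneg_right (by linarith) (abs_nonneg _)
        calc (z - y) * |v z| * B₀ ≤ z * |v z| * B₀ :=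
              mul_le_mul_of_nonneg_right h5 hB₀pos.le
          _ = B₀ * (z * |v z|) := by ring
      linarith
    refine le_trans ?_ hchain
    refine mul_le_mul_of_nonneg_left ?_ (by positivity)
    refine mul_le_mul ?_ h2 (Complex.abs.nonneg _) (by positivity)
    exact mul_le_mul_of_nonneg_right h1 (abs_nonneg _)
  -- a.e. strong measurability of the kernels
  have humeas : ∀ (ζ : ℂ), 0 ≤ ζ.im → ζ ≠ 0 → ∀ (y : ℝ), 0 ≤ y →
      AEStronglyMeasurable
        (fun z : ℝ => ζ⁻¹ * (Complex.sin (ζ * ((y : ℂ) - (z : ℂ))) * (v z : ℂ) * θ ζ z))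
        (volume.restrict (Ioi y)) := by
    intro ζ him hne y hy
    have hθm : AEStronglyMeasurable (θ ζ) (volume.restrict (Ioi y)) :=
      ((hθcont ζ him hne).aestronglyMeasurable measurableSet_Ici).mono_measure
        (Measure.restrict_mono (fun z hz => le_trans hy (le_of_lt hz)) le_rfl)
    have hsinm : Continuous (fun z : ℝ => Complex.sin (ζ * ((y : ℂ) - (z : ℂ)))) := by
      continuity
    have hvm : AEStronglyMeasurable (fun z : ℝ => (v z : ℂ)) (volume.restrict (Ioi y)) :=
      (Complex.continuous_ofReal.measurable.comp hv_meas).aestronglyMeasurable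
    exact aestronglyMeasurable_const.mul ((hsinm.aestronglyMeasurable.mul hvm).mul hθm)
  have huint : ∀ (ζ : ℂ), 0 ≤ ζ.im → ζ ≠ 0 → ∀ (y : ℝ), 0 ≤ y →
      IntegrableOn
        (fun z : ℝ => ζ⁻¹ * (Complex.sin (ζ * ((y : ℂ) - (z : ℂ))) * (v z : ℂ) * θ ζ z))
        (Ioi y) := by
    intro ζ him hne y hy
    refine Integrable.mono' ((hgi.integrableOn).const_mul B₀) (humeas ζ him hne y hy) ?_
    refine (ae_restrict_iff' measurableSet_Ioi).2 (Filter.Eventually.of_forall (fun z hz => ?_))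
    exact hu ζ him hne y hy z hz
  -- integrability of g' * Δ
  have hint_gΔ : ∀ y : ℝ, 0 ≤ y →
      IntegrableOn (fun z => (Real.exp 1 * g z) * Δ z) (Ioi y) := by
    intro y hy
    have hΔm' : AEStronglyMeasurable Δ (volume.restrict (Ioi y)) :=
      (hΔm.mono_measure (Measure.restrict_mono (Ioi_subset_Ioi hy) le_rfl)).aestronglyMeasurable
    have hgx : Integrable (fun z => Real.exp 1 * g z) (volume.restrict (Ioi y)) :=
      (hgi.const_mul _).integrableOn
    have hbd : ∀ᵐ z ∂(volume.restrict (Ioi y)), ‖Δ z‖ ≤ 2 * B₀ :=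
      Filter.Eventually.of_forall (fun z => by
        rw [Real.norm_eq_abs, abs_of_nonneg (hΔ0 z)]; exact hΔB z)
    have h2 : Integrable (fun z => Δ z * (Real.exp 1 * g z)) (volume.restrict (Ioi y)) :=
      Integrable.bdd_mul hgx hΔm' hbd
    exact h2.congr (Filter.Eventually.of_forall (fun z => mul_comm _ _))
  -- Gronwall hypothesis
  have hyp : ∀ y : ℝ, 0 ≤ y → Δ y ≤ a' + ∫ z in Ioi y, (Real.exp 1 * g z) * Δ z := by
    intro y hy
    have hintnn : 0 ≤ ∫ z in Ioi y, (Real.exp 1 * g z) * Δ z :=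
      setIntegral_nonneg measurableSet_Ioi (fun z _ =>
        mul_nonneg (mul_nonneg (Real.exp_pos 1).le (hg0 z)) (hΔ0 z))
    by_cases hyR : y ≤ R
    · -- main case
      have hy1 := huint ζ₁ him1 hne1 y hy
      have hy2 := huint ζ₂ him2 hne2 y hy
      have h1 : θ ζ₁ y = Complex.exp (Complex.I * ζ₁ * y) +
          ∫ z in Ioi y, ζ₁⁻¹ * (Complex.sin (ζ₁ * ((y : ℂ) - (z : ℂ))) * (v z : ℂ) * θ ζ₁ z) := by
        rw [hθeq ζ₁ him1 hne1 y hy, integral_const_mul]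
      have h2 : θ ζ₂ y = Complex.exp (Complex.I * ζ₂ * y) +
          ∫ z in Ioi y, ζ₂⁻¹ * (Complex.sin (ζ₂ * ((y : ℂ) - (z : ℂ))) * (v z : ℂ) * θ ζ₂ z) := by
        rw [hθeq ζ₂ him2 hne2 y hy, integral_const_mul]
      set u1 : ℝ → ℂ := fun z => ζ₁⁻¹ * (Complex.sin (ζ₁ * ((y : ℂ) - (z : ℂ))) * (v z : ℂ) * θ ζ₁ z) with hu1def
      set u2 : ℝ → ℂ := fun z => ζ₂⁻¹ * (Complex.sin (ζ₂ * ((y : ℂ) - (z : ℂ))) * (v z : ℂ) * θ ζ₂ z) with hu2def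
      have hdiff : θ ζ₁ y - θ ζ₂ y =
          (Complex.exp (Complex.I * ζ₁ * y) - Complex.exp (Complex.I * ζ₂ * y)) +
            ∫ z in Ioi y, (u1 z - u2 z) := by
        rw [h1, h2, integral_sub hy1 hy2]; ring
      -- exponential difference
      have hexpabs : ∀ (ζ : ℂ), Complex.abs ζ ≤ δ →
          Complex.abs (Complex.exp (Complex.I * ζ * y) - 1) ≤ 2 * (δ * R) := by
        intro ζ hζd
        have habs : Complex.abs (Complex.I * ζ * y) ≤ δ * R := by
          rw [map_mul, map_mul, Complex.abs_I, one_mul, Complex.abs_ofReal,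
            abs_of_nonneg hy]
          exact mul_le_mul hζd hyR (by linarith) (by linarith)
        calc Complex.abs (Complex.exp (Complex.I * ζ * y) - 1) ≤
              2 * Complex.abs (Complex.I * ζ * y) :=
              Complex.abs_exp_sub_one_le (le_trans habs hδR)
          _ ≤ 2 * (δ * R) := by linarith
      have hE : Complex.abs (Complex.exp (Complex.I * ζ₁ * y) -
          Complex.exp (Complex.I * ζ₂ * y)) ≤ 4 * δ * R := by
        calc Complex.abs (Complex.exp (Complex.I * ζ₁ * y) - Complex.exp (Complex.I * ζ₂ * y))
            = Complex.abs ((Complex.exp (Complex.I * ζ₁ * y) - 1) -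
                (Complex.exp (Complex.I * ζ₂ * y) - 1)) :=
              (congrArg Complex.abs (sub_sub_sub_cancel_right _ _ 1)).symm
          _ ≤ Complex.abs (Complex.exp (Complex.I * ζ₁ * y) - 1) +
              Complex.abs (Complex.exp (Complex.I * ζ₂ * y) - 1) := Complex.abs.sub_le_add _ _
          _ ≤ 2 * (δ * R) + 2 * (δ * R) := add_le_add (hexpabs ζ₁ hζ1) (hexpabs ζ₂ hζ2)
          _ = 4 * δ * R := by ring
      -- split integral
      have hsub : IntegrableOn (fun z => u1 z - u2 z) (Ioi y) := hy1.sub hy2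
      have hsplit : (∫ z in Ioi y, (u1 z - u2 z)) =
          (∫ z in Ioc y R, (u1 z - u2 z)) + ∫ z in Ioi R, (u1 z - u2 z) :=
        integral_Ioi_split hyR hsub
      -- tail bound
      have htail : ‖∫ z in Ioi R, (u1 z - u2 z)‖ ≤ 2 * B₀ * τ := by
        have hmono : ∀ z ∈ Ioi R, ‖u1 z - u2 z‖ ≤ 2 * B₀ * g z := by
          intro z hz
          have hzy : z ∈ Ioi y := lt_of_le_of_lt hyR hz
          have hb1 := hu ζ₁ him1 hne1 y hy z hzy
          have hb2 := hu ζ₂ him2 hne2 y hy z hzy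
          calc ‖u1 z - u2 z‖ ≤ ‖u1 z‖ + ‖u2 z‖ := norm_sub_le _ _
            _ ≤ B₀ * g z + B₀ * g z := add_le_add hb1 hb2
            _ = 2 * B₀ * g z := by ring
        calc ‖∫ z in Ioi R, (u1 z - u2 z)‖ ≤ ∫ z in Ioi R, ‖u1 z - u2 z‖ :=
              norm_integral_le_integral_norm _
          _ ≤ ∫ z in Ioi R, 2 * B₀ * g z := by
              refine integral_mono_of_nonneg
                (Filter.Eventually.of_forall (fun z => norm_nonneg _))
                ((hgi.integrableOn).const_mul _) ?_
              exact (ae_restrict_iff' measurableSet_Ioi).2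
                (Filter.Eventually.of_forall hmono)
          _ = 2 * B₀ * τ := by rw [hτdef, integral_const_mul]
      -- middle bound
      have hmid : ‖∫ z in Ioc y R, (u1 z - u2 z)‖ ≤
          2*Real.exp 1*δ^2*R^3*B₀*V + ∫ z in Ioi y, (Real.exp 1 * g z) * Δ z := by
        have hptwise : ∀ z ∈ Ioc y R, ‖u1 z - u2 z‖ ≤
            2*Real.exp 1*δ^2*R^3*B₀ * |v z| + (Real.exp 1 * g z) * Δ z := by
          intro z hz
          have hyz : y < z := hz.1
          have hzR : z ≤ R := hz.2
          have hz0 : (0:ℝ) < z := lt_of_le_of_lt hy hyz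
          have ht0 : (0:ℝ) ≤ z - y := by linarith
          have htR : z - y ≤ R := by linarith
          set t : ℝ := z - y with htdef
          have hyzC : ((y : ℂ) - (z : ℂ)) = -((t : ℝ) : ℂ) := by
            rw [htdef]; push_cast; ring
          -- decompose
          have hdecomp : u1 z - u2 z =
              (ζ₁⁻¹ * Complex.sin (ζ₁ * ((y:ℂ) - (z:ℂ))) -
                ζ₂⁻¹ * Complex.sin (ζ₂ * ((y:ℂ) - (z:ℂ)))) * ((v z : ℂ) * θ ζ₁ z) +
              (ζ₂⁻¹ * Complex.sin (ζ₂ * ((y:ℂ) - (z:ℂ)))) * ((v z : ℂ) * (θ ζ₁ z - θ ζ₂ z)) := by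
            rw [hu1def, hu2def]; ring
          have hAj : ∀ ζ : ℂ, ζ⁻¹ * Complex.sin (ζ * ((y:ℂ) - (z:ℂ))) =
              -(ζ⁻¹ * Complex.sin (ζ * ((t:ℝ):ℂ))) := by
            intro ζ; rw [hyzC, mul_neg, Complex.sin_neg]; ring
          -- kernel difference bound
          have hAdiff : Complex.abs
              (ζ₁⁻¹ * Complex.sin (ζ₁ * ((y:ℂ) - (z:ℂ))) -
                ζ₂⁻¹ * Complex.sin (ζ₂ * ((y:ℂ) - (z:ℂ)))) ≤ 2*Real.exp 1*δ^2*R^3 := by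
            rw [hAj ζ₁, hAj ζ₂]
            have heq : -(ζ₁⁻¹ * Complex.sin (ζ₁ * ((t:ℝ):ℂ))) -
                -(ζ₂⁻¹ * Complex.sin (ζ₂ * ((t:ℝ):ℂ))) =
                -((ζ₁⁻¹ * Complex.sin (ζ₁ * ((t:ℝ):ℂ)) - ((t:ℝ):ℂ)) -
                  (ζ₂⁻¹ * Complex.sin (ζ₂ * ((t:ℝ):ℂ)) - ((t:ℝ):ℂ))) := by ring
            rw [heq, map_neg_eq_map]
            have hbj : ∀ ζ : ℂ, 0 ≤ ζ.im → ζ ≠ 0 → Complex.abs ζ ≤ δ → ζ.im ≤ δ →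
                Complex.abs (ζ⁻¹ * Complex.sin (ζ * ((t:ℝ):ℂ)) - ((t:ℝ):ℂ)) ≤
                  Real.exp 1 * δ^2 * R^3 := by
              intro ζ him hne hζd himd
              have hb := abs_inv_sin_sub_le him hne ht0
              have hexp : Real.exp (ζ.im * t) ≤ Real.exp 1 :=
                Real.exp_le_exp.2 (by nlinarith)
              have ht3 : t^3 ≤ R^3 := by
                exact pow_le_pow_left₀ ht0 htR 3
              have hζ2 : (Complex.abs ζ)^2 ≤ δ^2 := by
                exact pow_le_pow_left₀ (Complex.abs.nonneg ζ) hζd 2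
              calc Complex.abs (ζ⁻¹ * Complex.sin (ζ * ((t:ℝ):ℂ)) - ((t:ℝ):ℂ)) ≤
                    (Complex.abs ζ)^2 * t^3 * Real.exp (ζ.im * t) := hb
                _ ≤ δ^2 * R^3 * Real.exp 1 := by
                    refine mul_le_mul (mul_le_mul hζ2 ht3 (by positivity) (by positivity))
                      hexp (Real.exp_pos _).le (by positivity)
                _ = Real.exp 1 * δ^2 * R^3 := by ring
            calc Complex.abs ((ζ₁⁻¹ * Complex.sin (ζ₁ * ((t:ℝ):ℂ)) - ((t:ℝ):ℂ)) -
                  (ζ₂⁻¹ * Complex.sin (ζ₂ * ((t:ℝ):ℂ)) - ((t:ℝ):ℂ))) ≤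
                  Complex.abs (ζ₁⁻¹ * Complex.sin (ζ₁ * ((t:ℝ):ℂ)) - ((t:ℝ):ℂ)) +
                  Complex.abs (ζ₂⁻¹ * Complex.sin (ζ₂ * ((t:ℝ):ℂ)) - ((t:ℝ):ℂ)) :=
                  Complex.abs.sub_le_add _ _
              _ ≤ Real.exp 1 * δ^2 * R^3 + Real.exp 1 * δ^2 * R^3 :=
                  add_le_add (hbj ζ₁ him1 hne1 hζ1 him_le1) (hbj ζ₂ him2 hne2 hζ2 him_le2)
              _ = 2*Real.exp 1*δ^2*R^3 := by ring
          -- single kernel bound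
          have hA2 : Complex.abs ζ₂⁻¹ * Complex.abs (Complex.sin (ζ₂ * ((y:ℂ) - (z:ℂ)))) ≤
              Real.exp 1 * z := by
            rw [map_inv₀, hyzC, mul_neg, Complex.sin_neg, map_neg_eq_map]
            have hζa : (0:ℝ) < Complex.abs ζ₂ := by simpa [Complex.abs.pos_iff] using hne2
            have hb := abs_sin_le him2 ht0
            have hexp : Real.exp (ζ₂.im * t) ≤ Real.exp 1 :=
              Real.exp_le_exp.2 (by nlinarith)
            calc (Complex.abs ζ₂)⁻¹ * Complex.abs (Complex.sin (ζ₂ * ((t:ℝ):ℂ))) ≤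
                  (Complex.abs ζ₂)⁻¹ * (Complex.abs ζ₂ * t * Real.exp (ζ₂.im * t)) := by
                  exact mul_le_mul_of_nonneg_left hb (by positivity)
              _ = t * Real.exp (ζ₂.im * t) := by
                  rw [show (Complex.abs ζ₂)⁻¹ * (Complex.abs ζ₂ * t * Real.exp (ζ₂.im * t)) =
                    ((Complex.abs ζ₂)⁻¹ * Complex.abs ζ₂) * (t * Real.exp (ζ₂.im * t)) from by
                      ring, inv_mul_cancel₀ (ne_of_gt hζa), one_mul]
              _ ≤ z * Real.exp 1 := by
                  refine mul_le_mul (by linarith) hexp (Real.exp_pos _).le hz0.le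
              _ = Real.exp 1 * z := mul_comm _ _
          have hθ1 : Complex.abs (θ ζ₁ z) ≤ B₀ := by
            have := hB₀ ζ₁ him1 hne1 z hz0.le
            have hexple : Real.exp (-(ζ₁.im * z)) ≤ 1 := by
              rw [Real.exp_le_one_iff]; nlinarith
            nlinarith [Complex.abs.nonneg (θ ζ₁ z)]
          have hΔz : Complex.abs (θ ζ₁ z - θ ζ₂ z) = Δ z :=
            (hΔval z ⟨hz0.le, hzR⟩).symm
          calc ‖u1 z - u2 z‖ ≤
                Complex.abs ((ζ₁⁻¹ * Complex.sin (ζ₁ * ((y:ℂ) - (z:ℂ))) -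
                  ζ₂⁻¹ * Complex.sin (ζ₂ * ((y:ℂ) - (z:ℂ)))) * ((v z : ℂ) * θ ζ₁ z)) +
                Complex.abs ((ζ₂⁻¹ * Complex.sin (ζ₂ * ((y:ℂ) - (z:ℂ)))) *
                  ((v z : ℂ) * (θ ζ₁ z - θ ζ₂ z))) := by
                rw [Complex.norm_eq_abs, hdecomp]
                exact Complex.abs.add_le _ _
            _ ≤ (2*Real.exp 1*δ^2*R^3) * (|v z| * B₀) +
                (Real.exp 1 * z) * (|v z| * Δ z) := by
              simp only [map_mul, Complex.abs_ofReal]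
              refine add_le_add ?_ ?_
              · refine mul_le_mul hAdiff ?_
                  (mul_nonneg (abs_nonneg _) (Complex.abs.nonneg _)) ?_
                · exact mul_le_mul_of_nonneg_left hθ1 (abs_nonneg _)
                · have := Real.exp_pos 1
                  positivity
              · rw [hΔz]
                refine mul_le_mul hA2 le_rfl
                  (mul_nonneg (abs_nonneg _) (hΔ0 z)) ?_
                exact mul_nonneg (Real.exp_pos 1).le hz0.le
            _ = 2*Real.exp 1*δ^2*R^3*B₀ * |v z| + (Real.exp 1 * (z * |v z|)) * Δ z := by ring
            _ = 2*Real.exp 1*δ^2*R^3*B₀ * |v z| + (Real.exp 1 * g z) * Δ z := by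
              rw [hgdef z hz0]
        -- integrate the pointwise bound
        have hvOn : IntegrableOn (fun z : ℝ => |v z|) (Ioc y R) :=
          hvi.mono_set (fun z hz => lt_of_le_of_lt hy hz.1)
        have hgΔOn : IntegrableOn (fun z => (Real.exp 1 * g z) * Δ z) (Ioc y R) :=
          (hint_gΔ y hy).mono_set Ioc_subset_Ioi_self
        calc ‖∫ z in Ioc y R, (u1 z - u2 z)‖ ≤ ∫ z in Ioc y R, ‖u1 z - u2 z‖ :=
              norm_integral_le_integral_norm _
          _ ≤ ∫ z in Ioc y R, (2*Real.exp 1*δ^2*R^3*B₀ * |v z| + (Real.exp 1 * g z) * Δ z) := by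
              refine integral_mono_of_nonneg
                (Filter.Eventually.of_forall (fun z => norm_nonneg _))
                ((hvOn.const_mul _).add hgΔOn) ?_
              exact (ae_restrict_iff' measurableSet_Ioc).2
                (Filter.Eventually.of_forall hptwise)
          _ = (∫ z in Ioc y R, 2*Real.exp 1*δ^2*R^3*B₀ * |v z|) +
              ∫ z in Ioc y R, (Real.exp 1 * g z) * Δ z :=
              integral_add (hvOn.const_mul _) hgΔOn
          _ ≤ 2*Real.exp 1*δ^2*R^3*B₀*V + ∫ z in Ioi y, (Real.exp 1 * g z) * Δ z := by
              refine add_le_add ?_ ?_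
              · rw [integral_const_mul]
                rw [hVdef]
                refine mul_le_mul_of_nonneg_left ?_ (by positivity)
                refine setIntegral_mono_set hvi
                  (Filter.Eventually.of_forall (fun z => abs_nonneg _)) ?_
                exact HasSubset.Subset.eventuallyLE (fun z hz => lt_of_le_of_lt hy hz.1)
              · refine setIntegral_mono_set (hint_gΔ y hy) ?_
                  (HasSubset.Subset.eventuallyLE Ioc_subset_Ioi_self)
                exact Filter.Eventually.of_forall (fun z =>
                  mul_nonneg (mul_nonneg (Real.exp_pos 1).le (hg0 z)) (hΔ0 z))
      -- combine
      have habs : Complex.abs (θ ζ₁ y - θ ζ₂ y) ≤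
          4*δ*R + (2*Real.exp 1*δ^2*R^3*B₀*V + ∫ z in Ioi y, (Real.exp 1 * g z) * Δ z)
            + 2*B₀*τ := by
        rw [hdiff, hsplit]
        calc Complex.abs ((Complex.exp (Complex.I * ζ₁ * y) - Complex.exp (Complex.I * ζ₂ * y)) +
              ((∫ z in Ioc y R, (u1 z - u2 z)) + ∫ z in Ioi R, (u1 z - u2 z))) ≤
              Complex.abs (Complex.exp (Complex.I * ζ₁ * y) - Complex.exp (Complex.I * ζ₂ * y)) +
              (‖∫ z in Ioc y R, (u1 z - u2 z)‖ + ‖∫ z in Ioi R, (u1 z - u2 z)‖) := by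
              refine le_trans (Complex.abs.add_le _ _) ?_
              exact add_le_add le_rfl (Complex.abs.add_le _ _)
          _ ≤ 4*δ*R + (2*Real.exp 1*δ^2*R^3*B₀*V +
                ∫ z in Ioi y, (Real.exp 1 * g z) * Δ z) + 2*B₀*τ := by
              have := add_le_add hE (add_le_add hmid htail)
              linarith
      have hΔy : Δ y = Complex.abs (θ ζ₁ y - θ ζ₂ y) := hΔval y ⟨hy, hyR⟩
      rw [hΔy, ha'def]
      linarith
    · -- y > R : Δ y = 0
      have : Δ y = 0 := by
        rw [hΔdef]
        exact Set.indicator_of_notMem (fun hmem => hyR hmem.2) _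
      rw [this]
      linarith
  -- apply Gronwall
  intro x hx0 hxR
  have hg0' : ∀ z, 0 ≤ Real.exp 1 * g z := fun z =>
    mul_nonneg (Real.exp_pos 1).le (hg0 z)
  have hgron := gronwall_Ioi hg0' (hgi.const_mul _) hΔm hΔ0 hΔB ha'0 hyp x hx0
  have hΔx : Δ x = Complex.abs (θ ζ₁ x - θ ζ₂ x) := hΔval x ⟨hx0, hxR⟩
  rw [hΔx] at hgron
  exact hgron

/-- Low-energy estimates for `p(x,ζ) = θ(x,ζ) − e^{iζx}` and continuous
extension of `θ(x,·)` to `ζ = 0`. -/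
theorem jost_solution_low_energy_estimate
    (v : ℝ → ℝ) (hv_meas : Measurable v) (C₀ ρ : ℝ)
    (hC₀ : 0 < C₀) (hρ : 2 < ρ)
    (hv : ∀ x : ℝ, 0 ≤ x → |v x| ≤ C₀ * (1 + x) ^ (-ρ))
    (θ : ℂ → ℝ → ℂ)
    (hθcont : ∀ ζ : ℂ, 0 ≤ ζ.im → ζ ≠ 0 → ContinuousOn (θ ζ) (Set.Ici 0))
    (hθbdd : ∀ ζ : ℂ, 0 ≤ ζ.im → ζ ≠ 0 →
      ∃ M : ℝ, ∀ x : ℝ, 0 ≤ x → Real.exp (ζ.im * x) * ‖θ ζ x‖ ≤ M)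
    (hθeq : ∀ ζ : ℂ, 0 ≤ ζ.im → ζ ≠ 0 → ∀ x : ℝ, 0 ≤ x →
      θ ζ x = Complex.exp (Complex.I * ζ * x) +
        ζ⁻¹ * ∫ y in Set.Ioi x, Complex.sin (ζ * ((x : ℂ) - (y : ℂ))) * (v y : ℂ) * θ ζ y) :
    (∃ C : ℝ, 0 < C ∧
      ∀ ζ : ℂ, 0 ≤ ζ.im → ζ ≠ 0 → ∀ x : ℝ, 0 ≤ x →
        ‖θ ζ x - Complex.exp (Complex.I * ζ * x)‖ ≤
          Real.exp (-(ζ.im * x)) *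
            (Real.exp (C * ∫ y in Set.Ioi x, y * |v y|) - 1)) ∧
    (∃ C' : ℝ, 0 < C' ∧
      ∀ ζ : ℂ, 0 ≤ ζ.im → ζ ≠ 0 → ∀ x : ℝ, 0 ≤ x →
        ‖θ ζ x - Complex.exp (Complex.I * ζ * x)‖ ≤
          C' * ∫ y in Set.Ioi x, y * |v y|) ∧
    (∀ x : ℝ, 0 ≤ x → ∃ L : ℂ,
      Tendsto (fun ζ : ℂ => θ ζ x)
        (nhdsWithin 0 {ζ : ℂ | 0 ≤ ζ.im ∧ ζ ≠ 0}) (nhds L)) := by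
  classical
  set g : ℝ → ℝ := fun y => if 0 < y then y * |v y| else 0 with hgdef0
  have hgdef : ∀ y : ℝ, 0 < y → g y = y * |v y| := fun y hy => if_pos hy
  have hg0 : ∀ y, 0 ≤ g y := by
    intro y; rw [hgdef0]; dsimp only; split
    · rename_i hy; exact mul_nonneg hy.le (abs_nonneg _)
    · exact le_rfl
  obtain ⟨hYint, hvint⟩ := integrable_decay hv_meas hC₀ hρ hv
  have hgind : g = (Ioi (0:ℝ)).indicator (fun y => y * |v y|) := by
    funext y; rw [hgdef0]; simp [Set.indicator, mem_Ioi]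
  have hgi : Integrable g := by
    rw [hgind]; exact (integrable_indicator_iff measurableSet_Ioi).2 hYint
  have hGcongr : ∀ x : ℝ, 0 ≤ x → (∫ y in Ioi x, g y) = ∫ y in Ioi x, y * |v y| := by
    intro x hx
    exact setIntegral_congr_fun measurableSet_Ioi
      (fun y hy => hgdef y (lt_of_le_of_lt hx hy))
  have hkey := jost_key v θ g hgdef hg0 hgi hθcont hθbdd hθeq
  have hT0 : 0 ≤ ∫ y in Ioi (0:ℝ), g y :=
    setIntegral_nonneg measurableSet_Ioi fun y _ => hg0 y
  have hG0 : ∀ x : ℝ, 0 ≤ ∫ y in Ioi x, g y :=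
    fun x => setIntegral_nonneg measurableSet_Ioi fun y _ => hg0 y
  have hGle : ∀ x : ℝ, 0 ≤ x → (∫ y in Ioi x, g y) ≤ ∫ y in Ioi (0:ℝ), g y := by
    intro x hx
    exact setIntegral_mono_set hgi.integrableOn (Filter.Eventually.of_forall hg0)
      (HasSubset.Subset.eventuallyLE (Ioi_subset_Ioi hx))
  have part1 : ∀ ζ : ℂ, 0 ≤ ζ.im → ζ ≠ 0 → ∀ x : ℝ, 0 ≤ x →
      Complex.abs (θ ζ x - Complex.exp (Complex.I * ζ * x)) ≤
        Real.exp (-(ζ.im * x)) * (Real.exp (2 * ∫ y in Ioi x, g y) - 1) := by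
    intro ζ him hne x hx
    have h := hkey ζ him hne x hx
    have hexp : (0:ℝ) < Real.exp (ζ.im * x) := Real.exp_pos _
    have h2 : Real.exp (ζ.im * x) * Complex.abs (θ ζ x - Complex.exp (Complex.I * ζ * x)) ≤
        Real.exp (2 * ∫ y in Ioi x, g y) - 1 := by linarith
    have h3 : Real.exp (-(ζ.im * x)) * Real.exp (ζ.im * x) = 1 := by
      rw [← Real.exp_add]; simp
    calc Complex.abs (θ ζ x - Complex.exp (Complex.I * ζ * x)) =
        Real.exp (-(ζ.im * x)) * (Real.exp (ζ.im * x) *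
          Complex.abs (θ ζ x - Complex.exp (Complex.I * ζ * x))) := by
          rw [← mul_assoc, h3, one_mul]
      _ ≤ Real.exp (-(ζ.im * x)) * (Real.exp (2 * ∫ y in Ioi x, g y) - 1) :=
          mul_le_mul_of_nonneg_left h2 (Real.exp_pos _).le
  refine ⟨⟨2, two_pos, fun ζ him hne x hx => ?_⟩,
    ⟨2 * Real.exp (2 * ∫ y in Ioi (0:ℝ), g y), by positivity, fun ζ him hne x hx => ?_⟩, ?_⟩
  · rw [← hGcongr x hx]
    exact part1 ζ him hne x hx
  · -- part 2
    have h := part1 ζ him hne x hx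
    have hs0 := hG0 x
    have hsT := hGle x hx
    have hexp1 : Real.exp (-(ζ.im * x)) ≤ 1 := by
      rw [Real.exp_le_one_iff]
      nlinarith
    have h1 : Real.exp (2 * ∫ y in Ioi x, g y) * (1 - 2 * ∫ y in Ioi x, g y) ≤ 1 := by
      have h2 := Real.add_one_le_exp (-(2 * ∫ y in Ioi x, g y))
      have h3 : Real.exp (2 * ∫ y in Ioi x, g y) *
          Real.exp (-(2 * ∫ y in Ioi x, g y)) = 1 := by rw [← Real.exp_add]; simp
      nlinarith [Real.exp_pos (2 * ∫ y in Ioi x, g y)]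
    have h4 : Real.exp (2 * ∫ y in Ioi x, g y) - 1 ≤
        2 * (∫ y in Ioi x, g y) * Real.exp (2 * ∫ y in Ioi x, g y) := by nlinarith
    have h5 : Real.exp (2 * ∫ y in Ioi x, g y) ≤ Real.exp (2 * ∫ y in Ioi (0:ℝ), g y) :=
      Real.exp_le_exp.2 (by linarith)
    rw [← hGcongr x hx]
    have h6 : Complex.abs (θ ζ x - Complex.exp (Complex.I * ζ * x)) ≤
        Real.exp (2 * ∫ y in Ioi x, g y) - 1 := by
      have hp : (0:ℝ) ≤ Real.exp (2 * ∫ y in Ioi x, g y) - 1 := by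
        have := Real.one_le_exp (by nlinarith : (0:ℝ) ≤ 2 * ∫ y in Ioi x, g y)
        linarith
      nlinarith [h, hexp1, Real.exp_pos (-(ζ.im * x))]
    calc Complex.abs (θ ζ x - Complex.exp (Complex.I * ζ * x)) ≤
        Real.exp (2 * ∫ y in Ioi x, g y) - 1 := h6
      _ ≤ 2 * (∫ y in Ioi x, g y) * Real.exp (2 * ∫ y in Ioi x, g y) := h4
      _ ≤ 2 * Real.exp (2 * ∫ y in Ioi (0:ℝ), g y) * ∫ y in Ioi x, g y := by nlinarith
  · -- part 3
    intro x hx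
    have hB₀pos : (0:ℝ) < Real.exp (2 * ∫ y in Ioi (0:ℝ), g y) := Real.exp_pos _
    have hB₀ : ∀ ζ : ℂ, 0 ≤ ζ.im → ζ ≠ 0 → ∀ y : ℝ, 0 ≤ y →
        Complex.abs (θ ζ y) ≤ Real.exp (2 * ∫ y in Ioi (0:ℝ), g y) *
          Real.exp (-(ζ.im * y)) := by
      intro ζ him hne y hy
      have h := part1 ζ him hne y hy
      have htri : Complex.abs (θ ζ y) ≤
          Complex.abs (Complex.exp (Complex.I * ζ * y)) +
            Complex.abs (θ ζ y - Complex.exp (Complex.I * ζ * y)) := by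
        calc Complex.abs (θ ζ y) = Complex.abs (Complex.exp (Complex.I * ζ * y) +
            (θ ζ y - Complex.exp (Complex.I * ζ * y))) := by ring_nf
          _ ≤ _ := Complex.abs.add_le _ _
      rw [abs_expI] at htri
      have h5 : Real.exp (2 * ∫ y in Ioi y, g y) ≤
          Real.exp (2 * ∫ y in Ioi (0:ℝ), g y) :=
        Real.exp_le_exp.2 (by linarith [hGle y hy])
      have hep := Real.exp_pos (-(ζ.im * y))
      nlinarith [hG0 y, Real.exp_pos (2 * ∫ y' in Ioi y, g y')]
    -- the filter is nontrivial
    have hne0 : (0:ℂ) ∈ closure {ζ : ℂ | 0 ≤ ζ.im ∧ ζ ≠ 0} := by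
      rw [Metric.mem_closure_iff]
      intro ε hε
      refine ⟨((ε/2 : ℝ) : ℂ) * Complex.I, ⟨?_, ?_⟩, ?_⟩
      · simp [Complex.mul_im]; positivity
      · intro h
        have : (((ε/2 : ℝ) : ℂ) * Complex.I).im = 0 := by rw [h]; simp
        simp [Complex.mul_im] at this
        linarith
      · rw [Complex.dist_eq]
        simp only [Complex.norm_eq_abs, zero_sub, map_neg_eq_map, map_mul, Complex.abs_I, mul_one,
          Complex.abs_ofReal]
        rw [abs_of_nonneg (by positivity : (0:ℝ) ≤ ε/2)]
        linarith
    haveI hlneBot : (nhdsWithin (0:ℂ) {ζ : ℂ | 0 ≤ ζ.im ∧ ζ ≠ 0}).NeBot :=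
      mem_closure_iff_nhdsWithin_neBot.mp hne0
    have hV0 : 0 ≤ ∫ y in Ioi (0:ℝ), |v y| :=
      setIntegral_nonneg measurableSet_Ioi fun y _ => abs_nonneg _
    have hK0 : (0:ℝ) < Real.exp (2 * (Real.exp 1 * ∫ y in Ioi (0:ℝ), g y)) := Real.exp_pos _
    have hcauchy : Cauchy (Filter.map (fun ζ : ℂ => θ ζ x)
        (nhdsWithin (0:ℂ) {ζ : ℂ | 0 ≤ ζ.im ∧ ζ ≠ 0})) := by
      rw [Metric.cauchy_iff]
      refine ⟨Filter.map_neBot, fun ε hε => ?_⟩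
      set B₀ : ℝ := Real.exp (2 * ∫ y in Ioi (0:ℝ), g y) with hB₀def
      set K : ℝ := Real.exp (2 * (Real.exp 1 * ∫ y in Ioi (0:ℝ), g y)) with hKdef
      set V : ℝ := ∫ y in Ioi (0:ℝ), |v y| with hVdef
      have hη : (0:ℝ) < ε / (8*B₀*K + 1) := by positivity
      have htends : Tendsto (fun b : ℝ => ∫ y in Ioi b, g y) atTop (nhds 0) :=
        tendsto_tail_integral hg0 hgi
      obtain ⟨R, hR2, hR1⟩ :=
        ((eventually_ge_atTop (max x 1)).and
          (htends.eventually (eventually_lt_nhds hη))).exists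
      have hRx : x ≤ R := le_trans (le_max_left _ _) hR2
      have hR0 : (0:ℝ) < R := lt_of_lt_of_le (by norm_num) (le_trans (le_max_right _ _) hR2)
      set δ : ℝ := min (1/R) (min ((ε/(8*K))/(4*R))
        ((ε/(8*K))/(2*Real.exp 1*R^2*B₀*V + 1))) with hδdef
      have hδ0 : 0 < δ := by
        refine lt_min (by positivity) (lt_min (by positivity) (by positivity))
      have hδ1 : δ ≤ 1/R := min_le_left _ _
      have hδ2 : δ ≤ (ε/(8*K))/(4*R) := le_trans (min_le_right _ _) (min_le_left _ _)
      have hδ3 : δ ≤ (ε/(8*K))/(2*Real.exp 1*R^2*B₀*V + 1) :=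
        le_trans (min_le_right _ _) (min_le_right _ _)
      have hδR : δ * R ≤ 1 := by
        rw [← le_div_iff₀ hR0] at *
        exact hδ1
      refine ⟨(fun ζ : ℂ => θ ζ x) '' (Metric.ball 0 δ ∩ {ζ : ℂ | 0 ≤ ζ.im ∧ ζ ≠ 0}),
        image_mem_map (Filter.inter_mem
          (mem_nhdsWithin_of_mem_nhds (Metric.ball_mem_nhds _ hδ0)) self_mem_nhdsWithin), ?_⟩
      rintro a ⟨ζ₁, ⟨hζ₁b, hζ₁S⟩, rfl⟩ b ⟨ζ₂, ⟨hζ₂b, hζ₂S⟩, rfl⟩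
      have hζ1δ : Complex.abs ζ₁ ≤ δ := by
        have h := Metric.mem_ball.mp hζ₁b
        rw [Complex.dist_eq, sub_zero] at h
        exact h.le
      have hζ2δ : Complex.abs ζ₂ ≤ δ := by
        have h := Metric.mem_ball.mp hζ₂b
        rw [Complex.dist_eq, sub_zero] at h
        exact h.le
      have hpair := jost_pairwise v hv_meas θ g hgdef hg0 hgi hvint hθcont hθeq
        B₀ hB₀pos hB₀ R δ hR0 hδ0 hδR ζ₁ ζ₂ hζ₁S.1 hζ₂S.1 hζ₁S.2 hζ₂S.2 hζ1δ hζ2δ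
        x hx hRx
      rw [Complex.dist_eq]
      -- bound the exponential factor
      have hexp2 : Real.exp (2 * ∫ y in Ioi x, Real.exp 1 * g y) ≤ K := by
        rw [integral_const_mul, hKdef]
        refine Real.exp_le_exp.2 ?_
        have h1 := hGle x hx
        nlinarith [Real.exp_pos 1, hG0 x]
      -- bound the prefactor
      have hKne : K ≠ 0 := ne_of_gt hK0
      have hb1 : 4*δ*R ≤ ε/(8*K) := by
        have h' := (le_div_iff₀ (show (0:ℝ) < 4*R by positivity)).1 hδ2
        nlinarith [h']
      have hb2 : 2*Real.exp 1*δ^2*R^3*B₀*V ≤ ε/(8*K) := by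
        have he1 := Real.exp_pos 1
        have hd2 : δ^2*R^3 ≤ δ*R^2 := by
          nlinarith [mul_le_mul_of_nonneg_right hδR
            (show (0:ℝ) ≤ δ*R^2 by positivity)]
        have h1 : 2*Real.exp 1*δ^2*R^3*B₀*V ≤ δ*(2*Real.exp 1*R^2*B₀*V) := by
          nlinarith [mul_le_mul_of_nonneg_right hd2
            (show (0:ℝ) ≤ 2*Real.exp 1*B₀*V by positivity)]
        have h2 : δ*(2*Real.exp 1*R^2*B₀*V + 1) ≤ ε/(8*K) := by
          have h' := (le_div_iff₀
            (show (0:ℝ) < 2*Real.exp 1*R^2*B₀*V + 1 by positivity)).1 hδ3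
          nlinarith [h']
        nlinarith [hδ0.le]
      have hb3 : 2*B₀*(∫ y in Ioi R, g y) ≤ 2*B₀*(ε / (8*B₀*K + 1)) :=
        mul_le_mul_of_nonneg_left hR1.le (by positivity)
      have hA0 : 0 ≤ 4*δ*R + 2*Real.exp 1*δ^2*R^3*B₀*V + 2*B₀*(∫ y in Ioi R, g y) := by
        have := Real.exp_pos 1
        have := setIntegral_nonneg (μ := volume) (s := Ioi R)
          measurableSet_Ioi (fun y _ => hg0 y)
        positivity
      have hfinal : (4*δ*R + 2*Real.exp 1*δ^2*R^3*B₀*V + 2*B₀*(∫ y in Ioi R, g y)) * K < ε := by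
        have h1 : (4*δ*R + 2*Real.exp 1*δ^2*R^3*B₀*V + 2*B₀*(∫ y in Ioi R, g y)) ≤
            2*(ε/(8*K)) + 2*B₀*(ε / (8*B₀*K + 1)) := by linarith
        have h2 : (ε/(8*K))*K = ε/8 := by field_simp
        have h3 : 2*B₀*(ε / (8*B₀*K + 1))*K < ε/4 := by
          have heq : 2*B₀*(ε / (8*B₀*K + 1))*K = (2*B₀*K*ε)/(8*B₀*K + 1) := by
            field_simp
          rw [heq, div_lt_iff₀ (by positivity)]
          nlinarith [mul_pos hB₀pos hK0]
        have h4 : (2*(ε/(8*K)) + 2*B₀*(ε / (8*B₀*K + 1))) * K < ε/4 + ε/4 := by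
          have : 2*(ε/(8*K))*K = ε/4 := by field_simp; ring
          nlinarith
        nlinarith [mul_le_mul_of_nonneg_right h1 hK0.le]
      calc Complex.abs (θ ζ₁ x - θ ζ₂ x) ≤
          (4*δ*R + 2*Real.exp 1*δ^2*R^3*B₀*V + 2*B₀*(∫ y in Ioi R, g y)) *
            Real.exp (2 * ∫ y in Ioi x, Real.exp 1 * g y) := hpair
        _ ≤ (4*δ*R + 2*Real.exp 1*δ^2*R^3*B₀*V + 2*B₀*(∫ y in Ioi R, g y)) * K :=
            mul_le_mul_of_nonneg_left hexp2 hA0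
        _ < ε := hfinal
    obtain ⟨L, hL⟩ := CompleteSpace.complete hcauchy
    exact ⟨L, hL⟩
end

section
/- For all x ≥ 0 and k > 0, the kernel r₁ satisfies r₁(x,k) := √(2/π) ∫ₓ^∞ (sin(k(y−x))/k) v(y) sin(ky − η(k)) dy = √(2/π) ∫ₓ^∞ V_v(y) sin(k(2y−x) − η(k)) dy = (1/2)√(2/π) ∫ₓ^∞ V_v((x+y)/2) sin(ky − η(k)) dy. -/
open MeasureTheory Set Filter


lemma aux_int (x ρ : ℝ) (hx : 0 ≤ x) (hρ : 2 < ρ) :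
    IntegrableOn (fun y : ℝ => (1 + y) ^ (1 - ρ)) (Ioi x) := by
  have h : IntegrableOn (fun y : ℝ => y ^ (1 - ρ)) (Ioi (1 + x)) :=
    integrableOn_Ioi_rpow_of_lt (by linarith) (by linarith)
  have h2 : Integrable ((Ioi (1 + x)).indicator (fun y : ℝ => y ^ (1 - ρ))) :=
    (integrable_indicator_iff measurableSet_Ioi).2 h
  have h3 := h2.comp_add_left 1
  have h4 : (fun y : ℝ => (Ioi (1 + x)).indicator (fun y : ℝ => y ^ (1 - ρ)) (1 + y)) =
      (Ioi x).indicator (fun y : ℝ => (1 + y) ^ (1 - ρ)) := by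
    ext y
    by_cases hy : x < y
    · rw [indicator_of_mem (by exact hy : y ∈ Ioi x),
        indicator_of_mem (by simp only [mem_Ioi]; linarith : (1:ℝ) + y ∈ Ioi (1 + x))]
    · rw [indicator_of_notMem (by simpa using hy),
        indicator_of_notMem (by simp only [mem_Ioi]; push_neg; linarith [not_lt.1 hy])]
  rw [h4] at h3
  exact (integrable_indicator_iff measurableSet_Ioi).1 h3

lemma aux_trig (k c x y : ℝ) (hk : k ≠ 0) :
    ∫ t in x..y, Real.sin (k * (2 * t - x) - c) =
      Real.sin (k * (y - x)) / k * Real.sin (k * y - c) := by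
  have h1 : ∀ t : ℝ, k * (2 * t - x) - c = 2 * k * t + (-(k * x) - c) := by intro t; ring
  simp_rw [h1]
  rw [intervalIntegral.integral_comp_mul_add Real.sin (mul_ne_zero two_ne_zero hk) (-(k * x) - c),
    integral_sin]
  have h2 : 2 * k * x + (-(k * x) - c) = k * x - c := by ring
  have h3 : 2 * k * y + (-(k * x) - c) = (k * y - c) + k * (y - x) := by ring
  rw [h2, h3, smul_eq_mul]
  have h4 : Real.cos (k * x - c) - Real.cos ((k * y - c) + k * (y - x)) =
      2 * Real.sin (k * (y - x)) * Real.sin (k * y - c) := by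
    rw [Real.cos_sub_cos]
    have e1 : (k * x - c + (k * y - c + k * (y - x))) / 2 = k * y - c := by ring
    rw [e1]
    have e2 : (k * x - c - (k * y - c + k * (y - x))) / 2 = -(k * (y - x)) := by ring
    rw [e2, Real.sin_neg]
    ring
  rw [h4]
  field_simp

lemma aux_fubini (v : ℝ → ℝ) (hv_meas : Measurable v) (C₀ ρ : ℝ)
    (hC₀ : 0 < C₀) (hρ : 2 < ρ)
    (hv : ∀ x : ℝ, 0 ≤ x → |v x| ≤ C₀ * (1 + x) ^ (-ρ))
    (Vv : ℝ → ℝ) (hVv : ∀ x : ℝ, Vv x = ∫ y in Set.Ioi x, v y)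
    (x : ℝ) (hx : 0 ≤ x) (k : ℝ) (hk : 0 < k) (c : ℝ) :
    (∫ y in Ioi x, Real.sin (k * (y - x)) / k * v y * Real.sin (k * y - c)) =
      ∫ y in Ioi x, Vv y * Real.sin (k * (2 * y - x) - c) := by
  set g : ℝ → ℝ := fun t => Real.sin (k * (2 * t - x) - c) with hg
  have hgcont : Continuous g := by fun_prop
  have hgbd : ∀ t : ℝ, |g t| ≤ 1 := fun t => abs_le.mpr ⟨Real.neg_one_le_sin _, Real.sin_le_one _⟩
  set f : ℝ → ℝ → ℝ := fun y t => if t ≤ y then g t * v y else 0 with hf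
  set μ : Measure ℝ := volume.restrict (Ioi x) with hμ
  -- measurability of the uncurried function
  have hFmeas : Measurable (Function.uncurry f) := by
    apply Measurable.ite (measurableSet_le measurable_snd measurable_fst)
    · exact ((hgcont.measurable).comp measurable_snd).mul (hv_meas.comp measurable_fst)
    · exact measurable_const
  -- inner integral in t equals the interval integral expression
  have hinner : ∀ y ∈ Ioi x, (∫ t, f y t ∂μ) =
      Real.sin (k * (y - x)) / k * v y * Real.sin (k * y - c) := by
    intro y hy
    have hy' : x ≤ y := le_of_lt hy
    have e1 : (fun t => f y t) = (Iic y).indicator (fun t => g t * v y) := by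
      ext t
      by_cases ht : t ≤ y
      · simp [hf, ht, indicator_of_mem (by exact ht : t ∈ Iic y)]
      · simp [hf, ht, indicator_of_notMem (by simpa using ht : t ∉ Iic y)]
    rw [e1, integral_indicator measurableSet_Iic, hμ,
      Measure.restrict_restrict measurableSet_Iic]
    have e2 : Iic y ∩ Ioi x = Ioc x y := by rw [inter_comm, Ioi_inter_Iic]
    rw [e2, integral_mul_const, ← intervalIntegral.integral_of_le hy', aux_trig k c x y (ne_of_gt hk)]
    ring
  -- integrability on the product
  have hprod : Integrable (Function.uncurry f) (μ.prod μ) := by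
    rw [integrable_prod_iff hFmeas.aestronglyMeasurable]
    constructor
    · filter_upwards with y
      have e1 : (fun t => f y t) = (Iic y).indicator (fun t => g t * v y) := by
        ext t
        by_cases ht : t ≤ y
        · simp [hf, ht, indicator_of_mem (by exact ht : t ∈ Iic y)]
        · simp [hf, ht, indicator_of_notMem (by simpa using ht : t ∉ Iic y)]
      have hInt : Integrable (fun t => f y t) μ := by
        rw [e1]
        rw [integrable_indicator_iff measurableSet_Iic]
        rw [IntegrableOn, hμ, Measure.restrict_restrict measurableSet_Iic]
        have e2 : Iic y ∩ Ioi x = Ioc x y := by rw [inter_comm, Ioi_inter_Iic]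
        rw [e2]
        exact (hgcont.mul continuous_const).integrableOn_Ioc
      exact hInt
    · -- the function y ↦ ∫ ‖f y t‖ dt is integrable
      apply Integrable.mono' ((aux_int x ρ hx hρ).const_mul C₀)
      · exact (hFmeas.norm.aestronglyMeasurable.integral_prod_right')
      · rw [hμ, ae_restrict_iff' measurableSet_Ioi]
        filter_upwards with y hy
        simp only [Function.uncurry_apply_pair]
        have hy0 : (0:ℝ) ≤ y := le_trans hx (le_of_lt hy)
        have hnonneg : 0 ≤ ∫ t, ‖f y t‖ ∂μ := integral_nonneg fun t => norm_nonneg _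
        rw [Real.norm_eq_abs, abs_of_nonneg hnonneg]
        have e1 : (fun t => ‖f y t‖) = (Iic y).indicator (fun t => ‖g t * v y‖) := by
          ext t
          by_cases ht : t ≤ y
          · simp [hf, ht, indicator_of_mem (by exact ht : t ∈ Iic y)]
          · simp [hf, ht, indicator_of_notMem (by simpa using ht : t ∉ Iic y)]
        rw [e1, integral_indicator measurableSet_Iic, hμ,
          Measure.restrict_restrict measurableSet_Iic]
        have e2 : Iic y ∩ Ioi x = Ioc x y := by rw [inter_comm, Ioi_inter_Iic]
        rw [e2]
        have step1 : (∫ t in Ioc x y, ‖g t * v y‖) ≤ ∫ t in Ioc x y, |v y| := by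
          apply setIntegral_mono_on
          · exact ((hgcont.mul continuous_const).norm).integrableOn_Ioc
          · exact integrableOn_const (by rw [Real.volume_Ioc]; exact ENNReal.ofReal_ne_top)
          · exact measurableSet_Ioc
          · intro t _
            rw [norm_mul, Real.norm_eq_abs, Real.norm_eq_abs]
            calc |g t| * |v y| ≤ 1 * |v y| :=
                  mul_le_mul_of_nonneg_right (hgbd t) (abs_nonneg _)
              _ = |v y| := one_mul _
        have step2 : (∫ t in Ioc x y, |v y|) = (y - x) * |v y| := by
          rw [setIntegral_const, measureReal_def, Real.volume_Ioc, smul_eq_mul,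
            ENNReal.toReal_ofReal (by linarith [(mem_Ioi.mp hy).le] : (0:ℝ) ≤ y - x)]
        have step3 : (y - x) * |v y| ≤ C₀ * (1 + y) ^ (1 - ρ) := by
          have h1 : |v y| ≤ C₀ * (1 + y) ^ (-ρ) := hv y hy0
          have hpos : (0:ℝ) < 1 + y := by linarith
          have h2 : (1 + y) ^ (1 - ρ) = (1 + y) * (1 + y) ^ (-ρ) := by
            rw [show (1:ℝ) - ρ = 1 + (-ρ) by ring,
              Real.rpow_one_add' (le_of_lt hpos) (by intro h; linarith)]
          calc (y - x) * |v y| ≤ (1 + y) * |v y| := by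
                apply mul_le_mul_of_nonneg_right (by linarith) (abs_nonneg _)
            _ ≤ (1 + y) * (C₀ * (1 + y) ^ (-ρ)) :=
                mul_le_mul_of_nonneg_left h1 (by linarith)
            _ = C₀ * (1 + y) ^ (1 - ρ) := by rw [h2]; ring
        calc (∫ t in Ioc x y, ‖g t * v y‖) ≤ ∫ t in Ioc x y, |v y| := step1
          _ = (y - x) * |v y| := step2
          _ ≤ C₀ * (1 + y) ^ (1 - ρ) := step3
  have hswap := integral_integral_swap hprod
  have houter : ∀ t ∈ Ioi x, (∫ y, f y t ∂μ) = Vv t * g t := by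
    intro t ht
    have e1 : (fun y => f y t) = (Ici t).indicator (fun y => g t * v y) := by
      ext y
      by_cases hty : t ≤ y
      · simp [hf, hty, indicator_of_mem (by exact hty : y ∈ Ici t)]
      · simp [hf, hty, indicator_of_notMem (by simpa using hty : y ∉ Ici t)]
    rw [e1, integral_indicator measurableSet_Ici, hμ,
      Measure.restrict_restrict measurableSet_Ici]
    have e2 : Ici t ∩ Ioi x = Ici t :=
      inter_eq_left.mpr (fun y hy => mem_Ioi.mpr (lt_of_lt_of_le ht hy))
    rw [e2, integral_const_mul, integral_Ici_eq_integral_Ioi, ← hVv t, mul_comm]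
  have lhs_eq : (∫ y in Ioi x, Real.sin (k * (y - x)) / k * v y * Real.sin (k * y - c)) =
      ∫ y, (∫ t, f y t ∂μ) ∂μ :=
    setIntegral_congr_fun measurableSet_Ioi (fun y hy => (hinner y hy).symm)
  rw [lhs_eq, hswap]
  exact setIntegral_congr_fun measurableSet_Ioi (fun t ht => houter t ht)

lemma aux_cov (Vv : ℝ → ℝ) (x k c : ℝ) :
    (∫ y in Ioi x, Vv y * Real.sin (k * (2 * y - x) - c)) =
      1 / 2 * ∫ y in Ioi x, Vv ((x + y) / 2) * Real.sin (k * y - c) := by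
  have himg : (fun u : ℝ => (x + u) / 2) '' Ioi x = Ioi x := by
    ext z
    constructor
    · rintro ⟨u, hu, rfl⟩
      simp only [mem_Ioi] at *
      linarith
    · intro hz
      refine ⟨2 * z - x, ?_, by ring⟩
      simp only [mem_Ioi] at *
      linarith
  have hderiv : ∀ u ∈ Ioi x, HasDerivWithinAt (fun u : ℝ => (x + u) / 2) ((1:ℝ)/2) (Ioi x) u := by
    intro u _
    exact (((hasDerivAt_id u).const_add x).div_const 2).hasDerivWithinAt
  have hinj : InjOn (fun u : ℝ => (x + u) / 2) (Ioi x) := by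
    intro a _ b _ h
    simp only at h
    linarith
  have h := integral_image_eq_integral_abs_deriv_smul measurableSet_Ioi hderiv hinj
    (fun y => Vv y * Real.sin (k * (2 * y - x) - c))
  rw [himg] at h
  rw [h, ← integral_const_mul]
  congr 1
  ext u
  have e : k * (2 * ((x + u) / 2) - x) - c = k * u - c := by ring
  rw [e]
  simp [abs_of_nonneg]

/-- The kernel `r₁` rewritten by integration by parts and a change of
variables, with `V_v(x) = ∫ₓ^∞ v(y) dy`. -/
theorem r1_integration_by_parts
    (v : ℝ → ℝ) (hv_meas : Measurable v) (C₀ ρ : ℝ)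
    (hC₀ : 0 < C₀) (hρ : 2 < ρ)
    (hv : ∀ x : ℝ, 0 ≤ x → |v x| ≤ C₀ * (1 + x) ^ (-ρ))
    (θ : ℝ → ℝ → ℂ)
    (hθcont : ∀ k : ℝ, k ≠ 0 → ContinuousOn (θ k) (Set.Ici 0))
    (hθbdd : ∀ k : ℝ, k ≠ 0 → ∃ M : ℝ, ∀ x : ℝ, 0 ≤ x → ‖θ k x‖ ≤ M)
    (hθeq : ∀ k : ℝ, k ≠ 0 → ∀ x : ℝ, 0 ≤ x →
      θ k x = Complex.exp (Complex.I * k * x) +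
        (k : ℂ)⁻¹ * ∫ y in Set.Ioi x,
          Complex.sin ((k : ℂ) * ((x : ℂ) - (y : ℂ))) * (v y : ℂ) * θ k y)
    (η : ℝ → ℝ)
    (hηcont : ContinuousOn η (Set.Ioi 0))
    (hηlim : Tendsto η atTop (nhds 0))
    (hηeq : ∀ k : ℝ, 0 < k →
      θ k 0 = ((‖θ k 0‖ : ℝ) : ℂ) * Complex.exp (Complex.I * η k))
    (Vv : ℝ → ℝ) (hVv : ∀ x : ℝ, Vv x = ∫ y in Set.Ioi x, v y) :
    ∀ x : ℝ, 0 ≤ x → ∀ k : ℝ, 0 < k →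
      (Real.sqrt (2 / Real.pi) *
          ∫ y in Set.Ioi x, Real.sin (k * (y - x)) / k * v y * Real.sin (k * y - η k)) =
        Real.sqrt (2 / Real.pi) *
          ∫ y in Set.Ioi x, Vv y * Real.sin (k * (2 * y - x) - η k) ∧
      (Real.sqrt (2 / Real.pi) *
          ∫ y in Set.Ioi x, Vv y * Real.sin (k * (2 * y - x) - η k)) =
        1 / 2 * Real.sqrt (2 / Real.pi) *
          ∫ y in Set.Ioi x, Vv ((x + y) / 2) * Real.sin (k * y - η k) := by
  intro x hx k hk
  constructor
  · rw [aux_fubini v hv_meas C₀ ρ hC₀ hρ hv Vv hVv x hx k hk (η k)]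
  · rw [aux_cov Vv x k (η k)]
    ring
end

section
/- For every n ≥ 3, all V₁,…,V_n ∈ 𝕍₁, and all x₀ ≥ 0, k > 0, the change-of-variables identity 2^n √(π/2) · W[V₁,…,V_n](x₀,k) = ∫_{x₀}^∞ dx₁ ∫_{x₀}^∞ dx₂ ∫_{x₁}^∞ dx₃ ∫_{x₂}^∞ dx₄ ⋯ ∫_{x_{n−2}}^∞ dx_n ( ∏_{j=1}^n V_j((x_j+x_{j−1})/2) ) sin(k x_n − η(k)) holds, where for j ≥ 3 the variable x_j ranges over (x_{j−2}, ∞). -/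
open MeasureTheory Set Filter

/-- Complex-exponential encoding of the nested oscillatory integral: `Wexp k ηk σ n V b`
is `∫_b^∞ dx₁ ⋯ ∫_{x_{n-1}}^∞ dx_n (∏_{j=1}^n V_{j-1}(x_j)) e^{σi(k(2Σ_{ℓ=0}^{n-1}(−1)^ℓ x_{n-ℓ}+(−1)^n b)−ηk)}`,
defined through the recursion coming from
`phase_{n+1}(b) = phase_n(x₁) + (−1)^n k (x₁ − b)`. -/
noncomputable def Wexp (k ηk σ : ℝ) : ℕ → (ℕ → ℝ → ℂ) → ℝ → ℂ
  | 0, _, b => Complex.exp ((σ : ℂ) * Complex.I * ((k * b - ηk : ℝ) : ℂ))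
  | m + 1, V, b =>
      ∫ x in Set.Ioi b,
        V 0 x *
          Complex.exp ((σ : ℂ) * (-1 : ℂ) ^ m * Complex.I * ((k * (x - b) : ℝ) : ℂ)) *
          Wexp k ηk σ m (fun j => V (j + 1)) x

/-- The kernel `W[V₀,…,V_{n-1}](b,k) = √(2/π) ∫_b^∞ dx₁ ⋯ ∫_{x_{n-1}}^∞ dx_n
(∏_{j=1}^n V_{j-1}(x_j)) sin(k(2Σ_{ℓ=0}^{n-1}(−1)^ℓ x_{n-ℓ} + (−1)^n b) − ηk)`,
expressed via `sin t = (2i)⁻¹(e^{it} − e^{−it})`. -/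
noncomputable def Wker (k ηk : ℝ) (n : ℕ) (V : ℕ → ℝ → ℂ) (b : ℝ) : ℂ :=
  (Real.sqrt (2 / Real.pi) : ℝ) * (2 * Complex.I)⁻¹ *
    (Wexp k ηk 1 n V b - Wexp k ηk (-1) n V b)

/-- The right-hand side of the change-of-variables identity:
`Rrec k ηk m V a b = ∫_a^∞ V₀((x+b)/2) Rrec k ηk (m-1) (shift V) b x dx`,
so that `Rrec k ηk n V x₀ x₀ = ∫_{x₀}^∞dx₁∫_{x₀}^∞dx₂∫_{x₁}^∞dx₃⋯∫_{x_{n-2}}^∞dx_n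
(∏_{j=1}^n V_{j-1}((x_j+x_{j-1})/2)) sin(k x_n − ηk)`. -/
noncomputable def Rrec (k ηk : ℝ) : ℕ → (ℕ → ℝ → ℂ) → ℝ → ℝ → ℂ
  | 0, _, _, b => ((Real.sin (k * b - ηk) : ℝ) : ℂ)
  | m + 1, V, a, b =>
      ∫ x in Set.Ioi a, V 0 ((x + b) / 2) * Rrec k ηk m (fun j => V (j + 1)) b x

namespace WCOV

/-- Generalized `Wexp` with separate lower limit `c` and phase base `β`. -/
noncomputable def Wexp2 (k ηk σ : ℝ) : ℕ → (ℕ → ℝ → ℂ) → ℝ → ℝ → ℂ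
  | 0, _, _, β => Complex.exp ((σ : ℂ) * Complex.I * ((k * β - ηk : ℝ) : ℂ))
  | m + 1, V, c, β =>
      ∫ x in Set.Ioi c,
        V 0 x *
          Complex.exp ((σ : ℂ) * (-1 : ℂ) ^ m * Complex.I * ((k * (x - β) : ℝ) : ℂ)) *
          Wexp2 k ηk σ m (fun j => V (j + 1)) x x

lemma norm_phase_pow (σ : ℝ) (m : ℕ) (r : ℝ) :
    ‖Complex.exp ((σ : ℂ) * (-1 : ℂ) ^ m * Complex.I * ((r : ℝ) : ℂ))‖ = 1 := by
  rw [show (σ : ℂ) * (-1 : ℂ) ^ m * Complex.I * ((r : ℝ) : ℂ)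
      = ((σ * (-1 : ℝ) ^ m * r : ℝ) : ℂ) * Complex.I by push_cast; ring]
  exact Complex.norm_exp_ofReal_mul_I _

lemma norm_phase0 (σ r : ℝ) :
    ‖Complex.exp ((σ : ℂ) * Complex.I * ((r : ℝ) : ℂ))‖ = 1 := by
  rw [show (σ : ℂ) * Complex.I * ((r : ℝ) : ℂ)
      = ((σ * r : ℝ) : ℂ) * Complex.I by push_cast; ring]
  exact Complex.norm_exp_ofReal_mul_I _

lemma Wexp2_base (k ηk σ : ℝ) (m : ℕ) (V : ℕ → ℝ → ℂ) (c β β' : ℝ) :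
    Wexp2 k ηk σ m V c β
      = Complex.exp ((σ : ℂ) * (-1 : ℂ) ^ m * Complex.I * ((k * (β - β') : ℝ) : ℂ)) *
        Wexp2 k ηk σ m V c β' := by
  cases m with
  | zero =>
    simp only [Wexp2, pow_zero]
    rw [← Complex.exp_add]
    congr 1
    push_cast
    ring
  | succ m =>
    simp only [Wexp2]
    rw [← integral_const_mul]
    refine setIntegral_congr_fun measurableSet_Ioi fun x _ => ?_
    have h : Complex.exp ((σ : ℂ) * (-1 : ℂ) ^ m * Complex.I * ((k * (x - β) : ℝ) : ℂ))
        = Complex.exp ((σ : ℂ) * (-1 : ℂ) ^ (m + 1) * Complex.I * ((k * (β - β') : ℝ) : ℂ)) *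
          Complex.exp ((σ : ℂ) * (-1 : ℂ) ^ m * Complex.I * ((k * (x - β') : ℝ) : ℂ)) := by
      rw [← Complex.exp_add]
      congr 1
      push_cast
      ring
    rw [h]
    ring

lemma Wexp_eq (k ηk σ : ℝ) : ∀ (m : ℕ) (V : ℕ → ℝ → ℂ) (b : ℝ),
    Wexp k ηk σ m V b = Wexp2 k ηk σ m V b b := by
  intro m
  induction m with
  | zero => intro V b; rfl
  | succ m ih =>
    intro V b
    show (∫ x in Set.Ioi b, _) = ∫ x in Set.Ioi b, _
    refine setIntegral_congr_fun measurableSet_Ioi fun x _ => ?_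
    rw [ih]

/-- Hypotheses on the potentials. -/
def OK (n : ℕ) (V : ℕ → ℝ → ℂ) : Prop :=
  ∀ j, j < n → Measurable (V j) ∧ IntegrableOn (V j) (Set.Ioi (0 : ℝ))

/-- Bound for the nested integrals. -/
noncomputable def Bnd (m : ℕ) (V : ℕ → ℝ → ℂ) : ℝ :=
  ∏ j ∈ Finset.range m, ∫ y in Set.Ioi (0 : ℝ), ‖V j y‖

lemma Bnd_nonneg (m : ℕ) (V : ℕ → ℝ → ℂ) : 0 ≤ Bnd m V :=
  Finset.prod_nonneg fun _ _ => integral_nonneg fun _ => norm_nonneg _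

lemma Bnd_succ (m : ℕ) (V : ℕ → ℝ → ℂ) :
    Bnd (m + 1) V = (∫ y in Set.Ioi (0 : ℝ), ‖V 0 y‖) * Bnd m (fun j => V (j + 1)) := by
  rw [Bnd, Bnd, Finset.prod_range_succ']
  ring

lemma integrand_integrable (k ηk σ : ℝ) (m : ℕ) (V : ℕ → ℝ → ℂ)
    (h0m : Measurable (V 0)) (h0i : IntegrableOn (V 0) (Set.Ioi (0 : ℝ)))
    (hbd : ∀ u β : ℝ, 0 ≤ u →
      ‖Wexp2 k ηk σ m (fun j => V (j + 1)) u β‖ ≤ Bnd m (fun j => V (j + 1)))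
    (hct : ContinuousOn (fun u => Wexp2 k ηk σ m (fun j => V (j + 1)) u u) (Set.Ici 0))
    (β c : ℝ) (hc : 0 ≤ c) :
    IntegrableOn (fun y =>
      V 0 y * Complex.exp ((σ : ℂ) * (-1 : ℂ) ^ m * Complex.I * ((k * (y - β) : ℝ) : ℂ)) *
        Wexp2 k ηk σ m (fun j => V (j + 1)) y y) (Set.Ioi c) := by
  have hsub : Set.Ioi c ⊆ Set.Ioi (0 : ℝ) := Set.Ioi_subset_Ioi hc
  have hsub' : Set.Ioi c ⊆ Set.Ici (0 : ℝ) := fun x hx => le_of_lt (lt_of_le_of_lt hc hx)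
  have hmeas : AEStronglyMeasurable (fun y =>
      V 0 y * Complex.exp ((σ : ℂ) * (-1 : ℂ) ^ m * Complex.I * ((k * (y - β) : ℝ) : ℂ)) *
        Wexp2 k ηk σ m (fun j => V (j + 1)) y y) (volume.restrict (Set.Ioi c)) := by
    refine (h0m.aestronglyMeasurable.mul ?_).mul
      (((hct.mono hsub').aestronglyMeasurable measurableSet_Ioi))
    refine Continuous.aestronglyMeasurable ?_
    fun_prop
  refine Integrable.mono' (((h0i.mono_set hsub).norm).mul_const
    (Bnd m (fun j => V (j + 1)))) hmeas ?_
  filter_upwards [self_mem_ae_restrict measurableSet_Ioi] with y hy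
  have hy0 : (0 : ℝ) ≤ y := le_of_lt (lt_of_le_of_lt hc hy)
  calc ‖V 0 y * Complex.exp ((σ : ℂ) * (-1 : ℂ) ^ m * Complex.I * ((k * (y - β) : ℝ) : ℂ)) *
        Wexp2 k ηk σ m (fun j => V (j + 1)) y y‖
      = ‖V 0 y‖ * ‖Wexp2 k ηk σ m (fun j => V (j + 1)) y y‖ := by
        rw [norm_mul, norm_mul, norm_phase_pow]; ring
    _ ≤ ‖V 0 y‖ * Bnd m (fun j => V (j + 1)) :=
        mul_le_mul_of_nonneg_left (hbd y y hy0) (norm_nonneg _)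

lemma key (k ηk : ℝ) : ∀ (m : ℕ) (σ : ℝ) (V : ℕ → ℝ → ℂ), OK m V →
    (∀ u β : ℝ, 0 ≤ u → ‖Wexp2 k ηk σ m V u β‖ ≤ Bnd m V) ∧
      ContinuousOn (fun u => Wexp2 k ηk σ m V u u) (Set.Ici 0) := by
  intro m
  induction m with
  | zero =>
    intro σ V _
    constructor
    · intro u β _
      show ‖Complex.exp ((σ : ℂ) * Complex.I * ((k * β - ηk : ℝ) : ℂ))‖ ≤ Bnd 0 V
      rw [norm_phase0]
      simp [Bnd]
    · apply Continuous.continuousOn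
      show Continuous fun u : ℝ => Complex.exp ((σ : ℂ) * Complex.I * ((k * u - ηk : ℝ) : ℂ))
      fun_prop
  | succ m ih =>
    intro σ V hV
    have hV' : OK m (fun j => V (j + 1)) := fun j hj => hV (j + 1) (by omega)
    obtain ⟨hbd, hct⟩ := ih σ (fun j => V (j + 1)) hV'
    have h0 := hV 0 (by omega)
    have hbig : ∀ β c : ℝ, 0 ≤ c → IntegrableOn (fun y =>
        V 0 y * Complex.exp ((σ : ℂ) * (-1 : ℂ) ^ m * Complex.I * ((k * (y - β) : ℝ) : ℂ)) *
          Wexp2 k ηk σ m (fun j => V (j + 1)) y y) (Set.Ioi c) :=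
      fun β c hc => integrand_integrable k ηk σ m V h0.1 h0.2 hbd hct β c hc
    constructor
    · intro u β hu
      show ‖∫ x in Set.Ioi u, V 0 x *
          Complex.exp ((σ : ℂ) * (-1 : ℂ) ^ m * Complex.I * ((k * (x - β) : ℝ) : ℂ)) *
          Wexp2 k ηk σ m (fun j => V (j + 1)) x x‖ ≤ Bnd (m + 1) V
      calc ‖∫ x in Set.Ioi u, V 0 x *
            Complex.exp ((σ : ℂ) * (-1 : ℂ) ^ m * Complex.I * ((k * (x - β) : ℝ) : ℂ)) *
            Wexp2 k ηk σ m (fun j => V (j + 1)) x x‖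
          ≤ ∫ x in Set.Ioi u, ‖V 0 x *
            Complex.exp ((σ : ℂ) * (-1 : ℂ) ^ m * Complex.I * ((k * (x - β) : ℝ) : ℂ)) *
            Wexp2 k ηk σ m (fun j => V (j + 1)) x x‖ := norm_integral_le_integral_norm _
        _ ≤ ∫ x in Set.Ioi u, ‖V 0 x‖ * Bnd m (fun j => V (j + 1)) := by
            refine integral_mono_of_nonneg ?_
              (((h0.2.mono_set (Set.Ioi_subset_Ioi hu)).norm).mul_const _) ?_
            · exact Eventually.of_forall fun x => norm_nonneg _
            · filter_upwards [self_mem_ae_restrict measurableSet_Ioi] with x hx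
              have hx0 : (0 : ℝ) ≤ x := le_of_lt (lt_of_le_of_lt hu hx)
              calc ‖V 0 x *
                  Complex.exp ((σ : ℂ) * (-1 : ℂ) ^ m * Complex.I * ((k * (x - β) : ℝ) : ℂ)) *
                  Wexp2 k ηk σ m (fun j => V (j + 1)) x x‖
                  = ‖V 0 x‖ * ‖Wexp2 k ηk σ m (fun j => V (j + 1)) x x‖ := by
                    rw [norm_mul, norm_mul, norm_phase_pow]; ring
                _ ≤ ‖V 0 x‖ * Bnd m (fun j => V (j + 1)) :=
                    mul_le_mul_of_nonneg_left (hbd x x hx0) (norm_nonneg _)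
        _ = (∫ x in Set.Ioi u, ‖V 0 x‖) * Bnd m (fun j => V (j + 1)) := by
            rw [integral_mul_const]
        _ ≤ (∫ x in Set.Ioi (0 : ℝ), ‖V 0 x‖) * Bnd m (fun j => V (j + 1)) := by
            refine mul_le_mul_of_nonneg_right ?_ (Bnd_nonneg _ _)
            refine setIntegral_mono_set h0.2.norm ?_ ?_
            · exact Eventually.of_forall fun x => norm_nonneg _
            · exact HasSubset.Subset.eventuallyLE (Set.Ioi_subset_Ioi hu)
        _ = Bnd (m + 1) V := (Bnd_succ m V).symm
    · set F : ℝ → ℂ := fun y =>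
        V 0 y * Complex.exp ((σ : ℂ) * (-1 : ℂ) ^ m * Complex.I * ((k * (y - 0) : ℝ) : ℂ)) *
          Wexp2 k ηk σ m (fun j => V (j + 1)) y y with hF
      have hFi : IntegrableOn F (Set.Ioi (0 : ℝ)) := hbig 0 0 le_rfl
      have hH : ∀ u : ℝ, Wexp2 k ηk σ (m + 1) V u 0 = ∫ y in Set.Ioi u, F y := fun u => rfl
      set F' : ℝ → ℂ := Set.indicator (Set.Ioi (0 : ℝ)) F with hF'
      have hF'i : Integrable F' := (integrable_indicator_iff measurableSet_Ioi).2 hFi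
      have hprim : Continuous fun u : ℝ => ∫ t in (0 : ℝ)..u, F' t :=
        hF'i.continuous_primitive 0
      have split : ∀ u : ℝ, 0 ≤ u →
          (∫ y in Set.Ioi u, F y) = (∫ y in Set.Ioi (0 : ℝ), F y) - ∫ t in (0 : ℝ)..u, F' t := by
        intro u hu
        have h1 : (∫ t in (0 : ℝ)..u, F' t) = ∫ t in Set.Ioc 0 u, F t := by
          rw [intervalIntegral.integral_of_le hu]
          refine setIntegral_congr_fun measurableSet_Ioc fun y hy => ?_
          exact Set.indicator_of_mem (Set.mem_Ioi.2 hy.1) F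
        have h2 : (∫ y in Set.Ioi (0 : ℝ), F y)
            = (∫ y in Set.Ioc 0 u, F y) + ∫ y in Set.Ioi u, F y := by
          rw [← setIntegral_union (Set.Ioc_disjoint_Ioi le_rfl) measurableSet_Ioi
            (hFi.mono_set Set.Ioc_subset_Ioi_self) (hFi.mono_set (Set.Ioi_subset_Ioi hu)),
            Set.Ioc_union_Ioi_eq_Ioi hu]
        rw [h1, h2]; ring
      have hHc : ContinuousOn (fun u => Wexp2 k ηk σ (m + 1) V u 0) (Set.Ici 0) := by
        refine ContinuousOn.congr
          (f := fun u : ℝ => (∫ y in Set.Ioi (0 : ℝ), F y) - ∫ t in (0 : ℝ)..u, F' t)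
          ((continuous_const.sub hprim).continuousOn) ?_
        intro u hu
        show Wexp2 k ηk σ (m + 1) V u 0
          = (∫ y in Set.Ioi (0 : ℝ), F y) - ∫ t in (0 : ℝ)..u, F' t
        rw [hH u, split u hu]
      refine ContinuousOn.congr (f := fun u : ℝ =>
        Complex.exp ((σ : ℂ) * (-1 : ℂ) ^ (m + 1) * Complex.I * ((k * (u - 0) : ℝ) : ℂ)) *
          Wexp2 k ηk σ (m + 1) V u 0) ?_ ?_
      · refine ContinuousOn.mul ?_ hHc
        apply Continuous.continuousOn
        fun_prop
      · intro u _
        exact Wexp2_base k ηk σ (m + 1) V u u 0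

lemma integral_Ioi_half (f : ℝ → ℂ) (a b : ℝ) :
    (∫ x in Set.Ioi a, f x) = 2 * ∫ u in Set.Ioi ((a + b) / 2), f (2 * u - b) := by
  have h2 : (∫ x in Set.Ioi (a + b), f (x - b)) = ∫ x in Set.Ioi a, f x := by
    rw [← integral_indicator measurableSet_Ioi, ← integral_indicator measurableSet_Ioi]
    have heq : (Set.indicator (Set.Ioi (a + b)) (fun x => f (x - b)))
        = fun x => Set.indicator (Set.Ioi a) f (x - b) := by
      funext x
      by_cases hx : x ∈ Set.Ioi (a + b)
      · rw [Set.indicator_of_mem hx, Set.indicator_of_mem]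
        exact Set.mem_Ioi.2 (by simpa [lt_sub_iff_add_lt] using Set.mem_Ioi.1 hx)
      · rw [Set.indicator_of_notMem hx, Set.indicator_of_notMem]
        intro hmem
        exact hx (Set.mem_Ioi.2 (by simpa [lt_sub_iff_add_lt] using Set.mem_Ioi.1 hmem))
    rw [heq]
    exact integral_sub_right_eq_self (Set.indicator (Set.Ioi a) f) b
  have h1 := MeasureTheory.integral_comp_mul_left_Ioi (fun y => f (y - b)) ((a + b) / 2)
    (two_pos (α := ℝ))
  rw [show (2 : ℝ) * ((a + b) / 2) = a + b by ring, h2] at h1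
  calc (∫ x in Set.Ioi a, f x) = 2 * ((2 : ℝ)⁻¹ • ∫ x in Set.Ioi a, f x) := by
        rw [Complex.real_smul]; push_cast; ring
    _ = 2 * ∫ u in Set.Ioi ((a + b) / 2), f (2 * u - b) := by rw [← h1]

lemma Rrec_eq (k ηk : ℝ) : ∀ (m : ℕ) (V : ℕ → ℝ → ℂ) (a b : ℝ), 0 ≤ a → 0 ≤ b → OK m V →
    Rrec k ηk m V a b = (2 * Complex.I)⁻¹ *
      ((2 : ℂ) ^ m * Wexp2 k ηk 1 m V ((a + b) / 2) b -
        (2 : ℂ) ^ m * Wexp2 k ηk (-1) m V ((a + b) / 2) b) := by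
  intro m
  induction m with
  | zero =>
    intro V a b _ _ _
    show ((Real.sin (k * b - ηk) : ℝ) : ℂ) = _
    simp only [Wexp2, pow_zero, one_mul]
    rw [Complex.ofReal_sin, Complex.sin]
    push_cast
    have hI := Complex.I_ne_zero
    field_simp
    ring_nf
    rw [Complex.I_sq]
    ring
  | succ m ih =>
    intro V a b ha hb hV
    have hV' : OK m (fun j => V (j + 1)) := fun j hj => hV (j + 1) (by omega)
    have h0 := hV 0 (by omega)
    have hc : (0 : ℝ) ≤ (a + b) / 2 := by linarith
    obtain ⟨hbd1, hct1⟩ := key k ηk m 1 (fun j => V (j + 1)) hV'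
    obtain ⟨hbd2, hct2⟩ := key k ηk m (-1) (fun j => V (j + 1)) hV'
    have hint1 := integrand_integrable k ηk 1 m V h0.1 h0.2 hbd1 hct1 b ((a + b) / 2) hc
    have hint2 := integrand_integrable k ηk (-1) m V h0.1 h0.2 hbd2 hct2 b ((a + b) / 2) hc
    show (∫ x in Set.Ioi a, V 0 ((x + b) / 2) * Rrec k ηk m (fun j => V (j + 1)) b x) = _
    rw [integral_Ioi_half (fun x => V 0 ((x + b) / 2) * Rrec k ηk m (fun j => V (j + 1)) b x) a b]
    have hpt : EqOn
        (fun u => V 0 ((2 * u - b + b) / 2) * Rrec k ηk m (fun j => V (j + 1)) b (2 * u - b))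
        (fun u => (2 * Complex.I)⁻¹ * ((2 : ℂ) ^ m *
            (V 0 u * Complex.exp ((1 : ℝ) * (-1 : ℂ) ^ m * Complex.I * ((k * (u - b) : ℝ) : ℂ)) *
              Wexp2 k ηk 1 m (fun j => V (j + 1)) u u) -
          (2 : ℂ) ^ m *
            (V 0 u * Complex.exp (((-1 : ℝ) : ℂ) * (-1 : ℂ) ^ m * Complex.I *
                ((k * (u - b) : ℝ) : ℂ)) *
              Wexp2 k ηk (-1) m (fun j => V (j + 1)) u u)))
        (Set.Ioi ((a + b) / 2)) := by
      intro u hu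
      have hu' : a < 2 * u - b := by
        have := Set.mem_Ioi.1 hu; linarith
      have h2u : (2 * u - b + b) / 2 = u := by ring
      have hx0 : (0 : ℝ) ≤ 2 * u - b := by linarith
      have hmid : (b + (2 * u - b)) / 2 = u := by ring
      have hihx := ih (fun j => V (j + 1)) b (2 * u - b) hb hx0 hV'
      rw [hmid] at hihx
      have hb1 : Wexp2 k ηk 1 m (fun j => V (j + 1)) u (2 * u - b)
          = Complex.exp (((1 : ℝ) : ℂ) * (-1 : ℂ) ^ m * Complex.I * ((k * (u - b) : ℝ) : ℂ)) *
            Wexp2 k ηk 1 m (fun j => V (j + 1)) u u := by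
        have := Wexp2_base k ηk 1 m (fun j => V (j + 1)) u (2 * u - b) u
        rwa [show k * (2 * u - b - u) = k * (u - b) by ring] at this
      have hb2 : Wexp2 k ηk (-1) m (fun j => V (j + 1)) u (2 * u - b)
          = Complex.exp ((((-1 : ℝ)) : ℂ) * (-1 : ℂ) ^ m * Complex.I * ((k * (u - b) : ℝ) : ℂ)) *
            Wexp2 k ηk (-1) m (fun j => V (j + 1)) u u := by
        have := Wexp2_base k ηk (-1) m (fun j => V (j + 1)) u (2 * u - b) u
        rwa [show k * (2 * u - b - u) = k * (u - b) by ring] at this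
      simp only [h2u]
      rw [hihx, hb1, hb2]
      push_cast
      ring
    rw [setIntegral_congr_fun measurableSet_Ioi hpt]
    have heq1 : (∫ u in Set.Ioi ((a + b) / 2),
        V 0 u * Complex.exp (((1 : ℝ) : ℂ) * (-1 : ℂ) ^ m * Complex.I * ((k * (u - b) : ℝ) : ℂ)) *
          Wexp2 k ηk 1 m (fun j => V (j + 1)) u u)
        = Wexp2 k ηk 1 (m + 1) V ((a + b) / 2) b := rfl
    have heq2 : (∫ u in Set.Ioi ((a + b) / 2),
        V 0 u * Complex.exp ((((-1 : ℝ)) : ℂ) * (-1 : ℂ) ^ m * Complex.I *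
            ((k * (u - b) : ℝ) : ℂ)) *
          Wexp2 k ηk (-1) m (fun j => V (j + 1)) u u)
        = Wexp2 k ηk (-1) (m + 1) V ((a + b) / 2) b := rfl
    rw [integral_const_mul]
    rw [integral_sub ((hint1.const_mul _)) ((hint2.const_mul _))]
    rw [integral_const_mul, integral_const_mul]
    rw [heq1, heq2]
    ring

lemma decay_integrable {W : ℝ → ℂ} (hm : Measurable W) {C ε : ℝ} (hε : 0 < ε)
    (hC : ∀ x : ℝ, 0 ≤ x → ‖W x‖ ≤ C * (1 + x) ^ (-(1 + ε))) :
    IntegrableOn W (Set.Ioi (0 : ℝ)) := by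
  have hlt : -(1 + ε) < -1 := by linarith
  have hA : IntegrableOn (fun x : ℝ => (1 + x) ^ (-(1 + ε))) (Set.Ioc 0 1) := by
    have hc : ContinuousOn (fun x : ℝ => (1 + x) ^ (-(1 + ε))) (Set.Icc 0 1) := by
      refine ContinuousOn.rpow_const (by fun_prop) fun x hx => Or.inl ?_
      have := hx.1
      positivity
    exact (hc.integrableOn_compact isCompact_Icc).mono_set Set.Ioc_subset_Icc_self
  have hB : IntegrableOn (fun x : ℝ => (1 + x) ^ (-(1 + ε))) (Set.Ioi 1) := by
    have hIoi1 : IntegrableOn (fun t : ℝ => t ^ (-(1 + ε))) (Set.Ioi 1) :=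
      integrableOn_Ioi_rpow_of_lt hlt one_pos
    refine Integrable.mono' hIoi1 ?_ ?_
    · refine ContinuousOn.aestronglyMeasurable ?_ measurableSet_Ioi
      refine ContinuousOn.rpow_const (by fun_prop) fun x hx => Or.inl ?_
      have : (1 : ℝ) < x := hx
      positivity
    · filter_upwards [self_mem_ae_restrict measurableSet_Ioi] with x hx
      have hx1 : (1 : ℝ) < x := hx
      rw [Real.norm_eq_abs, abs_of_nonneg (Real.rpow_nonneg (by linarith) _)]
      exact Real.rpow_le_rpow_of_nonpos (by linarith) (by linarith) (by linarith)
  have hAB : IntegrableOn (fun x : ℝ => (1 + x) ^ (-(1 + ε))) (Set.Ioi 0) := by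
    have := hA.union hB
    rwa [Set.Ioc_union_Ioi_eq_Ioi zero_le_one] at this
  refine Integrable.mono' (hAB.const_mul C) hm.aestronglyMeasurable ?_
  filter_upwards [self_mem_ae_restrict measurableSet_Ioi] with x hx
  have := hC x (le_of_lt hx)
  exact this

end WCOV

/-- Change of variables identity
`2^n √(π/2) W[V₁,…,V_n](x₀,k) = ∫_{x₀}^∞dx₁∫_{x₀}^∞dx₂∫_{x₁}^∞dx₃⋯∫_{x_{n-2}}^∞dx_n
(∏_{j=1}^n V_j((x_j+x_{j-1})/2)) sin(k x_n − η(k))` for `n ≥ 3`. -/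
theorem W_change_of_variables
    (v : ℝ → ℝ) (hv_meas : Measurable v) (C₀ ρ : ℝ)
    (hC₀ : 0 < C₀) (hρ : 2 < ρ)
    (hv : ∀ x : ℝ, 0 ≤ x → |v x| ≤ C₀ * (1 + x) ^ (-ρ))
    (θ : ℝ → ℝ → ℂ)
    (hθcont : ∀ k : ℝ, k ≠ 0 → ContinuousOn (θ k) (Set.Ici 0))
    (hθbdd : ∀ k : ℝ, k ≠ 0 → ∃ M : ℝ, ∀ x : ℝ, 0 ≤ x → ‖θ k x‖ ≤ M)
    (hθeq : ∀ k : ℝ, k ≠ 0 → ∀ x : ℝ, 0 ≤ x →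
      θ k x = Complex.exp (Complex.I * k * x) +
        (k : ℂ)⁻¹ * ∫ y in Set.Ioi x,
          Complex.sin ((k : ℂ) * ((x : ℂ) - (y : ℂ))) * (v y : ℂ) * θ k y)
    (η : ℝ → ℝ)
    (hηcont : ContinuousOn η (Set.Ioi 0))
    (hηlim : Tendsto η atTop (nhds 0))
    (hηeq : ∀ k : ℝ, 0 < k →
      θ k 0 = ((‖θ k 0‖ : ℝ) : ℂ) * Complex.exp (Complex.I * η k))
    (n : ℕ) (hn : 3 ≤ n) (V : ℕ → ℝ → ℂ)
    (hVmeas : ∀ j : ℕ, 1 ≤ j → j ≤ n → Measurable (V j))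
    (hVbdd : ∀ j : ℕ, 1 ≤ j → j ≤ n → ∃ ε : ℝ, 0 < ε ∧ ∃ C : ℝ,
      ∀ x : ℝ, 0 ≤ x → ‖V j x‖ ≤ C * (1 + x) ^ (-(1 + ε))) :
    ∀ x₀ : ℝ, 0 ≤ x₀ → ∀ k : ℝ, 0 < k →
      (2 : ℂ) ^ n * (Real.sqrt (Real.pi / 2) : ℝ) *
          Wker k (η k) n (fun i => V (i + 1)) x₀ =
        Rrec k (η k) n (fun i => V (i + 1)) x₀ x₀ := by
  intro x₀ hx₀ k hk
  have hOK : WCOV.OK n (fun i => V (i + 1)) := by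
    intro j hj
    have h1 : (1 : ℕ) ≤ j + 1 := by omega
    have h2 : j + 1 ≤ n := by omega
    refine ⟨hVmeas _ h1 h2, ?_⟩
    obtain ⟨ε, hε, C, hC⟩ := hVbdd _ h1 h2
    exact WCOV.decay_integrable (hVmeas _ h1 h2) hε hC
  have hR := WCOV.Rrec_eq k (η k) n (fun i => V (i + 1)) x₀ x₀ hx₀ hx₀ hOK
  rw [show (x₀ + x₀) / 2 = x₀ by ring] at hR
  rw [hR, Wker, WCOV.Wexp_eq, WCOV.Wexp_eq]
  have hs : ((Real.sqrt (Real.pi / 2) : ℝ) : ℂ) * ((Real.sqrt (2 / Real.pi) : ℝ) : ℂ) = 1 := by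
    rw [← Complex.ofReal_mul, ← Real.sqrt_mul (by positivity)]
    rw [show Real.pi / 2 * (2 / Real.pi) = 1 by field_simp]
    simp
  linear_combination ((2 : ℂ) ^ n * (2 * Complex.I)⁻¹ *
    (WCOV.Wexp2 k (η k) 1 n (fun i => V (i + 1)) x₀ x₀ -
      WCOV.Wexp2 k (η k) (-1) n (fun i => V (i + 1)) x₀ x₀)) * hs
end

section
/- Let n ≥ 1, ε > 0, and V₁,…,V_n ∈ L^∞_{1+ε}(ℝ₊). Then there exists C > 0 such that |U[V₁,…,V_n](x,y)| ≤ C (1+x)^{−(1+ε)/2−(n−1)ε} (1+y)^{−(1+ε)/2} Y(y−x) for all x, y ≥ 0, where Y is the Heaviside function; consequently U[V₁,…,V_n] ∈ L²((0,∞)×(0,∞)). -/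
open MeasureTheory Set

/-- The Heaviside function on `ℝ`. -/
noncomputable def Heaviside (t : ℝ) : ℝ := if 0 ≤ t then 1 else 0

/-- Recursive encoding of the nested integral kernel `U`: with the pair of
running parameters `(a, b) = (x_{j-2}, x_{j-1})`,
`Urec m V a b y = ∫_a^∞ V₀((x+b)/2) Urec (m-1) (shift V) b x y dx` and
`Urec 0 V a b y = V₀((y+b)/2) Y(y−a)`, so that `2^n U[V₁,…,V_n](x₀,x_n)
= Urec (n-1) V x₀ x₀ x_n` reproduces
`∫_{x₀}^∞dx₁∫_{x₀}^∞dx₂∫_{x₁}^∞dx₃⋯∫_{x_{n-3}}^∞dx_{n-1}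
(∏_{j=1}^n V_j((x_j+x_{j-1})/2)) Y(x_n−x_{n-2})`. -/
noncomputable def Urec : ℕ → (ℕ → ℝ → ℂ) → ℝ → ℝ → ℝ → ℂ
  | 0, V, a, b, y => V 0 ((y + b) / 2) * (Heaviside (y - a) : ℝ)
  | m + 1, V, a, b, y =>
      ∫ x in Set.Ioi a, V 0 ((x + b) / 2) * Urec m (fun j => V (j + 1)) b x y

lemma heaviside_nonneg (t : ℝ) : 0 ≤ Heaviside t := by
  unfold Heaviside; split <;> norm_num

lemma heaviside_le_one (t : ℝ) : Heaviside t ≤ 1 := by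
  unfold Heaviside; split <;> norm_num

lemma heaviside_of_nonneg {t : ℝ} (h : 0 ≤ t) : Heaviside t = 1 := if_pos h

lemma heaviside_of_neg {t : ℝ} (h : t < 0) : Heaviside t = 0 := if_neg (not_le.mpr h)

lemma measurable_heaviside : Measurable Heaviside :=
  Measurable.ite measurableSet_Ici measurable_const measurable_const

/-- Integrability of `(1+x)^p` on `(a,∞)` for `p < -1`. -/
lemma integrableOn_one_add_rpow {p : ℝ} (hp : p < -1) {a : ℝ} (ha : 0 ≤ a) :
    IntegrableOn (fun x : ℝ => (1 + x) ^ p) (Ioi a) := by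
  have h0 : (0:ℝ) < 1 + a := by linarith
  have hbase := integrableOn_Ioi_rpow_of_lt hp h0
  have hmp := measurePreserving_add_right (volume : Measure ℝ) 1
  have hemb : MeasurableEmbedding (fun x : ℝ => x + 1) :=
    (MeasurableEquiv.addRight (1:ℝ)).measurableEmbedding
  have hpre : (fun x : ℝ => x + 1) ⁻¹' (Ioi (1 + a)) = Ioi a := by
    ext x; simp [mem_Ioi]
  have hres := hmp.restrict_preimage_emb hemb (Ioi (1 + a))
  rw [hpre] at hres
  have := (hres.integrable_comp_emb hemb (g := fun t : ℝ => t ^ p)).mpr hbase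
  refine this.congr (Filter.Eventually.of_forall fun x => ?_)
  simp [Function.comp, add_comm]

/-- Value of the integral of `(1+x)^p` on `(a,∞)` for `p < -1`. -/
lemma integral_one_add_rpow {p : ℝ} (hp : p < -1) {a : ℝ} (ha : 0 ≤ a) :
    ∫ x in Ioi a, (1 + x) ^ p = -(1 + a) ^ (p + 1) / (p + 1) := by
  have h0 : (0:ℝ) < 1 + a := by linarith
  have hmp := measurePreserving_add_right (volume : Measure ℝ) 1
  have hemb : MeasurableEmbedding (fun x : ℝ => x + 1) :=
    (MeasurableEquiv.addRight (1:ℝ)).measurableEmbedding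
  have hpre : (fun x : ℝ => x + 1) ⁻¹' (Ioi (1 + a)) = Ioi a := by
    ext x; simp [mem_Ioi]
  have := hmp.setIntegral_preimage_emb hemb (fun t : ℝ => t ^ p) (Ioi (1 + a))
  rw [hpre] at this
  rw [show (fun x : ℝ => (1 + x) ^ p) = fun x : ℝ => (x + 1) ^ p from
    funext fun x => by rw [add_comm]]
  rw [this, integral_Ioi_rpow_of_lt hp h0]

/-- AM–GM type estimate `(1+(x+b)/2)^{-(1+ε)} ≤ (1+x)^{-(1+ε)/2} (1+b)^{-(1+ε)/2}`. -/
lemma rpow_amgm {ε : ℝ} (hε : 0 < ε) {x b : ℝ} (hx : 0 ≤ x) (hb : 0 ≤ b) :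
    (1 + (x + b) / 2) ^ (-(1 + ε)) ≤ (1 + x) ^ (-((1 + ε) / 2)) * (1 + b) ^ (-((1 + ε) / 2)) := by
  have hu : (0:ℝ) < 1 + x := by linarith
  have hv : (0:ℝ) < 1 + b := by linarith
  have hm : (0:ℝ) < 1 + (x + b) / 2 := by linarith
  have key : (1 + x) * (1 + b) ≤ (1 + (x + b) / 2) ^ (2:ℝ) := by
    rw [Real.rpow_two]; nlinarith [sq_nonneg (x - b)]
  rw [← Real.mul_rpow hu.le hv.le]
  have : (1 + (x + b) / 2) ^ (-(1 + ε)) = ((1 + (x + b) / 2) ^ (2:ℝ)) ^ (-((1 + ε) / 2)) := by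
    rw [← Real.rpow_mul hm.le]; ring_nf
  rw [this]
  exact Real.rpow_le_rpow_of_nonpos (by positivity) key (by linarith)

/-- The kernel vanishes when `y < min a b`. -/
lemma urec_vanish (m : ℕ) : ∀ (W : ℕ → ℝ → ℂ) (a b y : ℝ), 0 ≤ a → 0 ≤ b →
    y < min a b → Urec m W a b y = 0 := by
  induction m with
  | zero =>
    intro W a b y ha hb hy
    have : y - a < 0 := by have := min_le_left a b; linarith [lt_of_lt_of_le hy this]
    simp [Urec, heaviside_of_neg this]
  | succ m ih =>
    intro W a b y ha hb hy
    have hya : y < a := lt_of_lt_of_le hy (min_le_left a b)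
    have hyb : y < b := lt_of_lt_of_le hy (min_le_right a b)
    simp only [Urec]
    rw [setIntegral_congr_fun measurableSet_Ioi
      (g := fun _ : ℝ => (0:ℂ)) ?_, integral_zero]
    intro x hx
    have hxa : a < x := hx
    show W 0 ((x + b) / 2) * Urec m (fun j => W (j + 1)) b x y = 0
    rw [ih (fun j => W (j + 1)) b x y hb (le_of_lt (lt_of_le_of_lt ha hxa))
      (lt_min hyb (hya.trans hxa)), mul_zero]

/-- Joint measurability of the kernel in all three arguments. -/
lemma urec_meas (m : ℕ) : ∀ (W : ℕ → ℝ → ℂ), (∀ j, j ≤ m → Measurable (W j)) →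
    Measurable (fun p : ℝ × ℝ × ℝ => Urec m W p.1 p.2.1 p.2.2) := by
  induction m with
  | zero =>
    intro W hW
    simp only [Urec]
    apply Measurable.mul
    · exact (hW 0 le_rfl).comp (by fun_prop)
    · exact Complex.measurable_ofReal.comp (measurable_heaviside.comp (by fun_prop))
  | succ m ih =>
    intro W hW
    have hinner := ih (fun j => W (j + 1)) (fun j hj => hW (j + 1) (by omega))
    have hmeas : Measurable (fun q : (ℝ × ℝ × ℝ) × ℝ =>
        if q.1.1 < q.2 then W 0 ((q.2 + q.1.2.1) / 2) *
          Urec m (fun j => W (j + 1)) q.1.2.1 q.2 q.1.2.2 else 0) := by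
      apply Measurable.ite
      · exact measurableSet_lt (by fun_prop) (by fun_prop)
      · apply Measurable.mul
        · exact (hW 0 (Nat.zero_le _)).comp (by fun_prop)
        · exact hinner.comp
            (f := fun q : (ℝ × ℝ × ℝ) × ℝ => (q.1.2.1, q.2, q.1.2.2)) (by fun_prop)
      · exact measurable_const
    have hsm := hmeas.stronglyMeasurable.integral_prod_right' (ν := volume)
    have heq : (fun p : ℝ × ℝ × ℝ => Urec (m + 1) W p.1 p.2.1 p.2.2) =
        fun p : ℝ × ℝ × ℝ => ∫ x : ℝ, (if p.1 < x then W 0 ((x + p.2.1) / 2) *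
          Urec m (fun j => W (j + 1)) p.2.1 x p.2.2 else 0) := by
      funext p
      simp only [Urec]
      rw [← integral_indicator measurableSet_Ioi]
      simp only [Set.indicator_apply, mem_Ioi]
    rw [heq]
    exact hsm.measurable

/-- The key pointwise bound, proved by induction on the recursion depth. -/
lemma urec_bound (ε : ℝ) (hε : 0 < ε) (m : ℕ) : ∀ (W : ℕ → ℝ → ℂ),
    (∀ j, j ≤ m → ∃ C : ℝ, 0 < C ∧ ∀ x, 0 ≤ x →
      ‖W j x‖ ≤ C * (1 + x) ^ (-(1 + ε))) →
    ∃ C : ℝ, 0 < C ∧ ∀ a b y : ℝ, 0 ≤ a → 0 ≤ b →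
      ‖Urec m W a b y‖ ≤ C * (1 + b) ^ (-((1 + ε) / 2)) *
        (1 + min a b) ^ (-((m : ℝ) * ε)) * (1 + y) ^ (-((1 + ε) / 2)) *
        Heaviside (y - min a b) := by
  induction m with
  | zero =>
    intro W hW
    obtain ⟨C0, hC0pos, hC0⟩ := hW 0 le_rfl
    refine ⟨C0, hC0pos, fun a b y ha hb => ?_⟩
    rcases lt_or_ge y (min a b) with hy | hy
    · rw [urec_vanish 0 W a b y ha hb hy, heaviside_of_neg (by linarith), norm_zero, mul_zero]
    · have hy0 : 0 ≤ y := le_trans (le_min ha hb) hy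
      rw [heaviside_of_nonneg (by linarith), mul_one]
      simp only [Nat.cast_zero, zero_mul, neg_zero, Real.rpow_zero, mul_one]
      show ‖W 0 ((y + b) / 2) * ((Heaviside (y - a) : ℝ) : ℂ)‖ ≤ _
      rcases lt_or_ge y a with hya | hya
      · rw [heaviside_of_neg (by linarith)]
        simp only [Complex.ofReal_zero, mul_zero, norm_zero]
        have h1 : (0:ℝ) ≤ (1 + b) ^ (-((1 + ε) / 2)) := Real.rpow_nonneg (by linarith) _
        have h2 : (0:ℝ) ≤ (1 + y) ^ (-((1 + ε) / 2)) := Real.rpow_nonneg (by linarith) _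
        positivity
      · rw [heaviside_of_nonneg (by linarith)]
        rw [norm_mul]
        simp only [Complex.ofReal_one, norm_one, mul_one]
        calc ‖W 0 ((y + b) / 2)‖
            ≤ C0 * (1 + (y + b) / 2) ^ (-(1 + ε)) := hC0 _ (by positivity)
          _ ≤ C0 * ((1 + y) ^ (-((1 + ε) / 2)) * (1 + b) ^ (-((1 + ε) / 2))) :=
              mul_le_mul_of_nonneg_left (rpow_amgm hε hy0 hb) hC0pos.le
          _ = C0 * (1 + b) ^ (-((1 + ε) / 2)) * (1 + y) ^ (-((1 + ε) / 2)) := by ring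
  | succ m ih =>
    intro W hW
    obtain ⟨C0, hC0pos, hC0⟩ := hW 0 (Nat.zero_le _)
    obtain ⟨C, hCpos, hC⟩ := ih (fun j => W (j + 1)) (fun j hj => hW (j + 1) (by omega))
    refine ⟨C0 * C / ε, by positivity, fun a b y ha hb => ?_⟩
    rcases lt_or_ge y (min a b) with hy | hy
    · rw [urec_vanish _ W a b y ha hb hy, heaviside_of_neg (by linarith), norm_zero, mul_zero]
    · have hy0 : 0 ≤ y := le_trans (le_min ha hb) hy
      have hminab : (0:ℝ) ≤ min a b := le_min ha hb
      have hmin : (0:ℝ) < 1 + min a b := by linarith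
      have h1y : (0:ℝ) < 1 + y := by linarith
      have h1b : (0:ℝ) < 1 + b := by linarith
      rw [heaviside_of_nonneg (by linarith), mul_one]
      set α : ℝ := -((1 + ε) / 2) with hα
      set D : ℝ := C0 * C * (1 + b) ^ α * (1 + min a b) ^ (-((m : ℝ) * ε)) * (1 + y) ^ α
        with hD
      have hDnn : 0 ≤ D := by
        apply mul_nonneg (mul_nonneg (mul_nonneg (mul_nonneg hC0pos.le hCpos.le) _) _) _
        · exact Real.rpow_nonneg h1b.le _
        · exact Real.rpow_nonneg hmin.le _
        · exact Real.rpow_nonneg h1y.le _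
      have key : ∀ x ∈ Ioi a, ‖W 0 ((x + b) / 2) *
          Urec m (fun j => W (j + 1)) b x y‖ ≤ D * (1 + x) ^ (-(1 + ε)) := by
        intro x hx
        have hax : a < x := hx
        have hx0 : 0 ≤ x := le_trans ha hax.le
        have h1x : (0:ℝ) < 1 + x := by linarith
        have hminbx : min a b ≤ min b x := le_min (min_le_right a b)
          (le_trans (min_le_left a b) hax.le)
        have hW0 : ‖W 0 ((x + b) / 2)‖ ≤
            C0 * ((1 + x) ^ α * (1 + b) ^ α) := by
          calc ‖W 0 ((x + b) / 2)‖
              ≤ C0 * (1 + (x + b) / 2) ^ (-(1 + ε)) := hC0 _ (by positivity)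
            _ ≤ _ := mul_le_mul_of_nonneg_left (rpow_amgm hε hx0 hb) hC0pos.le
        have hU : ‖Urec m (fun j => W (j + 1)) b x y‖ ≤
            C * (1 + x) ^ α * (1 + min a b) ^ (-((m : ℝ) * ε)) * (1 + y) ^ α := by
          calc ‖Urec m (fun j => W (j + 1)) b x y‖
              ≤ C * (1 + x) ^ α * (1 + min b x) ^ (-((m : ℝ) * ε)) * (1 + y) ^ α *
                Heaviside (y - min b x) := hC b x y hb hx0
            _ ≤ C * (1 + x) ^ α * (1 + min b x) ^ (-((m : ℝ) * ε)) * (1 + y) ^ α * 1 := by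
                apply mul_le_mul_of_nonneg_left (heaviside_le_one _)
                apply mul_nonneg (mul_nonneg (mul_nonneg hCpos.le _) _) _
                · exact Real.rpow_nonneg h1x.le _
                · exact Real.rpow_nonneg (by positivity) _
                · exact Real.rpow_nonneg h1y.le _
            _ ≤ C * (1 + x) ^ α * (1 + min a b) ^ (-((m : ℝ) * ε)) * (1 + y) ^ α := by
                rw [mul_one]
                have hmono : (1 + min b x) ^ (-((m : ℝ) * ε)) ≤
                    (1 + min a b) ^ (-((m : ℝ) * ε)) :=
                  Real.rpow_le_rpow_of_nonpos hmin (by linarith)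
                    (by simp only [neg_nonpos]; positivity)
                gcongr
        calc ‖W 0 ((x + b) / 2) * Urec m (fun j => W (j + 1)) b x y‖
            = ‖W 0 ((x + b) / 2)‖ *
              ‖Urec m (fun j => W (j + 1)) b x y‖ := norm_mul _ _
          _ ≤ (C0 * ((1 + x) ^ α * (1 + b) ^ α)) *
              (C * (1 + x) ^ α * (1 + min a b) ^ (-((m : ℝ) * ε)) * (1 + y) ^ α) := by
              apply mul_le_mul hW0 hU (norm_nonneg _)
              positivity
          _ = D * ((1 + x) ^ α * (1 + x) ^ α) := by rw [hD]; ring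
          _ = D * (1 + x) ^ (-(1 + ε)) := by
              rw [← Real.rpow_add h1x]; congr 1; rw [hα]; ring
      show ‖∫ x in Ioi a, W 0 ((x + b) / 2) *
          Urec m (fun j => W (j + 1)) b x y‖ ≤ _
      have hIntD : IntegrableOn (fun x : ℝ => D * (1 + x) ^ (-(1 + ε))) (Ioi a) :=
        (integrableOn_one_add_rpow (by linarith) ha).const_mul D
      have step1 : ‖∫ x in Ioi a, W 0 ((x + b) / 2) *
            Urec m (fun j => W (j + 1)) b x y‖ ≤
          ∫ x in Ioi a, D * (1 + x) ^ (-(1 + ε)) := by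
        refine le_trans (norm_integral_le_integral_norm _) ?_
        refine integral_mono_of_nonneg (Filter.Eventually.of_forall fun x => norm_nonneg _)
          hIntD ?_
        refine (ae_restrict_mem measurableSet_Ioi).mono fun x hx => ?_
        have h := key x hx
        exact h
      have step2 : ∫ x in Ioi a, D * (1 + x) ^ (-(1 + ε)) = D * ((1 + a) ^ (-ε) / ε) := by
        rw [integral_const_mul, integral_one_add_rpow (by linarith) ha]
        rw [show -(1 + ε) + 1 = -ε by ring]
        rw [neg_div, div_neg, neg_neg]
      refine le_trans step1 ?_
      rw [step2]
      have hmono2 : (1 + a) ^ (-ε) ≤ (1 + min a b) ^ (-ε) :=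
        Real.rpow_le_rpow_of_nonpos hmin (by have := min_le_left a b; linarith) (by linarith)
      calc D * ((1 + a) ^ (-ε) / ε) ≤ D * ((1 + min a b) ^ (-ε) / ε) := by
            apply mul_le_mul_of_nonneg_left _ hDnn
            gcongr
        _ = C0 * C / ε * (1 + b) ^ α *
            (1 + min a b) ^ (-(((m : ℕ) + 1 : ℝ) * ε)) * (1 + y) ^ α := by
            rw [hD]
            rw [show (-((((m : ℕ) : ℝ) + 1) * ε)) = (-((m : ℝ) * ε)) + (-ε) by ring]
            rw [Real.rpow_add hmin]
            ring
        _ = C0 * C / ε * (1 + b) ^ α *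
            (1 + min a b) ^ (-(((m + 1 : ℕ) : ℝ) * ε)) * (1 + y) ^ α := by push_cast; ring_nf

/-- Pointwise bound for the kernel `U[V₁,…,V_n]` and the resulting
Hilbert-Schmidt (i.e. `L²`) property. -/
theorem U_kernel_estimate_and_L2
    (n : ℕ) (hn : 1 ≤ n) (ε : ℝ) (hε : 0 < ε) (V : ℕ → ℝ → ℂ)
    (hVmeas : ∀ j : ℕ, 1 ≤ j → j ≤ n → Measurable (V j))
    (hVbdd : ∀ j : ℕ, 1 ≤ j → j ≤ n → ∃ C : ℝ,
      ∀ x : ℝ, 0 ≤ x → ‖V j x‖ ≤ C * (1 + x) ^ (-(1 + ε))) :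
    (∃ C : ℝ, 0 < C ∧ ∀ x : ℝ, 0 ≤ x → ∀ y : ℝ, 0 ≤ y →
      ‖((2 : ℂ) ^ n)⁻¹ * Urec (n - 1) (fun i => V (i + 1)) x x y‖ ≤
        C * (1 + x) ^ (-((1 + ε) / 2) - ((n : ℝ) - 1) * ε) *
          (1 + y) ^ (-((1 + ε) / 2)) * Heaviside (y - x)) ∧
    MemLp (fun q : ℝ × ℝ =>
        ((2 : ℂ) ^ n)⁻¹ * Urec (n - 1) (fun i => V (i + 1)) q.1 q.1 q.2) 2
      (volume.restrict (Set.Ioi (0:ℝ) ×ˢ Set.Ioi (0:ℝ))) := by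
  set W : ℕ → ℝ → ℂ := fun i => V (i + 1) with hW
  have hWmeas : ∀ j, j ≤ n - 1 → Measurable (W j) :=
    fun j hj => hVmeas (j + 1) (by omega) (by omega)
  have hWbdd : ∀ j, j ≤ n - 1 → ∃ C : ℝ, 0 < C ∧ ∀ x, 0 ≤ x →
      ‖W j x‖ ≤ C * (1 + x) ^ (-(1 + ε)) := by
    intro j hj
    obtain ⟨C, hC⟩ := hVbdd (j + 1) (by omega) (by omega)
    refine ⟨max C 1, lt_of_lt_of_le one_pos (le_max_right _ _), fun x hx => ?_⟩
    refine le_trans (hC x hx) ?_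
    have : (0:ℝ) ≤ (1 + x) ^ (-(1 + ε)) := Real.rpow_nonneg (by linarith) _
    exact mul_le_mul_of_nonneg_right (le_max_left _ _) this
  obtain ⟨C, hCpos, hCb⟩ := urec_bound ε hε (n - 1) W hWbdd
  have hcast : (((n - 1 : ℕ) : ℝ)) = (n : ℝ) - 1 := by
    rw [Nat.cast_sub hn, Nat.cast_one]
  have hn1 : (1:ℝ) ≤ (n : ℝ) := by exact_mod_cast hn
  -- the pointwise bound
  have hpt : ∀ x : ℝ, 0 ≤ x → ∀ y : ℝ, 0 ≤ y →
      ‖((2 : ℂ) ^ n)⁻¹ * Urec (n - 1) W x x y‖ ≤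
        C * (1 + x) ^ (-((1 + ε) / 2) - ((n : ℝ) - 1) * ε) *
          (1 + y) ^ (-((1 + ε) / 2)) * Heaviside (y - x) := by
    intro x hx y hy
    have h1x : (0:ℝ) < 1 + x := by linarith
    have habs2 : ‖((2 : ℂ) ^ n)⁻¹‖ ≤ 1 := by
      rw [norm_inv, norm_pow, Complex.norm_two]
      have h2n : (1:ℝ) ≤ 2 ^ n := one_le_pow₀ (by norm_num)
      exact inv_le_one_of_one_le₀ h2n
    have hle : ‖((2 : ℂ) ^ n)⁻¹ * Urec (n - 1) W x x y‖ ≤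
        ‖Urec (n - 1) W x x y‖ := by
      rw [norm_mul]
      exact mul_le_of_le_one_left (norm_nonneg _) habs2
    refine le_trans hle ?_
    have h := hCb x x y hx hx
    rw [min_self] at h
    refine le_trans h (le_of_eq ?_)
    rw [show C * (1 + x) ^ (-((1 + ε) / 2)) * (1 + x) ^ (-(((n - 1 : ℕ) : ℝ) * ε)) *
        (1 + y) ^ (-((1 + ε) / 2)) * Heaviside (y - x) =
        C * ((1 + x) ^ (-((1 + ε) / 2)) * (1 + x) ^ (-(((n - 1 : ℕ) : ℝ) * ε))) *
        (1 + y) ^ (-((1 + ε) / 2)) * Heaviside (y - x) by ring]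
    rw [← Real.rpow_add h1x]
    congr 2
    rw [hcast]
    ring
  refine ⟨⟨C, hCpos, hpt⟩, ?_⟩
  -- measurability of the kernel
  have hfm : AEStronglyMeasurable
      (fun q : ℝ × ℝ => ((2 : ℂ) ^ n)⁻¹ * Urec (n - 1) W q.1 q.1 q.2)
      (volume.restrict (Set.Ioi (0:ℝ) ×ˢ Set.Ioi (0:ℝ))) := by
    refine Measurable.aestronglyMeasurable ?_
    exact measurable_const.mul ((urec_meas (n - 1) W hWmeas).comp
      (show Measurable fun q : ℝ × ℝ => (q.1, q.1, q.2) by fun_prop))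
  set γ : ℝ := -((1 + ε) / 2) - ((n : ℝ) - 1) * ε with hγ
  set β : ℝ := -((1 + ε) / 2) with hβ
  have h2γ : 2 * γ < -1 := by
    rw [hγ, hβ]; nlinarith [mul_nonneg (sub_nonneg.mpr hn1) hε.le]
  have h2β : 2 * β < -1 := by rw [hβ]; linarith
  set g : ℝ × ℝ → ℝ := fun q => C * (1 + q.1) ^ γ * (1 + q.2) ^ β with hg
  have hgmeas : Measurable g := by
    apply Measurable.mul
    apply Measurable.mul measurable_const
    · exact (measurable_const.add measurable_fst).pow measurable_const
    · exact (measurable_const.add measurable_snd).pow measurable_const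
  have hgL2 : MemLp g 2 (volume.restrict (Set.Ioi (0:ℝ) ×ˢ Set.Ioi (0:ℝ))) := by
    rw [memLp_two_iff_integrable_sq_norm hgmeas.aestronglyMeasurable]
    have heq : (fun q : ℝ × ℝ => ‖g q‖ ^ 2) =
        fun q : ℝ × ℝ => (C ^ 2 * ((1 + q.1) ^ γ) ^ 2) * ((1 + q.2) ^ β) ^ 2 := by
      funext q
      rw [Real.norm_eq_abs, sq_abs, hg]
      ring
    rw [heq, Measure.volume_eq_prod, ← Measure.prod_restrict]
    have hsq : ∀ (c : ℝ), 2 * c < -1 → IntegrableOn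
        (fun x : ℝ => ((1 + x) ^ c) ^ 2) (Ioi (0:ℝ)) := by
      intro c hc
      refine (integrableOn_one_add_rpow hc le_rfl).congr_fun (fun x hx => ?_) measurableSet_Ioi
      have h1x : (0:ℝ) ≤ 1 + x := by have : (0:ℝ) < x := hx; linarith
      show (1 + x) ^ (2 * c) = ((1 + x) ^ c) ^ 2
      rw [show (2 : ℝ) * c = c * 2 by ring, Real.rpow_mul h1x, Real.rpow_two]
    have h1 : IntegrableOn (fun x : ℝ => C ^ 2 * ((1 + x) ^ γ) ^ 2) (Ioi (0:ℝ)) :=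
      (hsq γ h2γ).const_mul _
    have h2 : IntegrableOn (fun x : ℝ => ((1 + x) ^ β) ^ 2) (Ioi (0:ℝ)) := hsq β h2β
    exact h1.mul_prod h2
  refine hgL2.mono' hfm ?_
  refine (ae_restrict_mem (measurableSet_Ioi.prod measurableSet_Ioi)).mono fun q hq => ?_
  obtain ⟨hq1, hq2⟩ := (Set.mem_prod.mp hq)
  have hx0 : (0:ℝ) ≤ q.1 := (le_of_lt hq1)
  have hy0 : (0:ℝ) ≤ q.2 := (le_of_lt hq2)
  have h := hpt q.1 hx0 q.2 hy0
  refine le_trans h ?_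
  have hnn : (0:ℝ) ≤ C * (1 + q.1) ^ γ * (1 + q.2) ^ β := by
    apply mul_nonneg (mul_nonneg hCpos.le _) _
    · exact Real.rpow_nonneg (by linarith) _
    · exact Real.rpow_nonneg (by linarith) _
  calc C * (1 + q.1) ^ γ * (1 + q.2) ^ β * Heaviside (q.2 - q.1)
      ≤ C * (1 + q.1) ^ γ * (1 + q.2) ^ β * 1 :=
        mul_le_mul_of_nonneg_left (heaviside_le_one _) hnn
    _ = g q := by rw [mul_one]
end
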